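/- arXiv:2303.17270 — 4 statements merged into one kernel-verified Lean document; each statement's English description precedes it below -/
import Mathlib

section
/- For all d ≥ 1, n ≥ 2 and k ≥ 1, the group RTM(ℤ^d,n,k) of reversible moving-head (ℤ^d,n,k)-Turing machines is not finitely generated. -/
/-- The shift action on configurations: `(shiftC v x) u = x (u - v)`. -/
def shiftC {d : ℕ} {A : Type*} (v : Fin d → ℤ) (x : (Fin d → ℤ) → A) : (Fin d → ℤ) → A :=
  fun u => x (u - v)

/-- The moving-head space `Σ^{ℤ^d} × Q × ℤ^d`. -/
abbrev Head (d n k : ℕ) : Type :=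
  ((Fin d → ℤ) → Fin n) × Fin k × (Fin d → ℤ)

/-- `T` is a moving-head `(ℤ^d,n,k)`-Turing machine. -/
def IsTM (d n k : ℕ) (T : Head d n k → Head d n k) : Prop :=
  ∃ (Fi Fo : Finset (Fin d → ℤ))
    (f : ((Fin d → ℤ) → Fin n) × Fin k → ((Fin d → ℤ) → Fin n) × Fin k × (Fin d → ℤ)),
    (∀ (x y : (Fin d → ℤ) → Fin n) (q : Fin k),
        (∀ u ∈ Fi, x u = y u) → f (x, q) = f (y, q)) ∧
    ∀ (x : (Fin d → ℤ) → Fin n) (q : Fin k) (v : Fin d → ℤ),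
      T (x, q, v) =
        ((fun u => if u - v ∈ Fo then (f (shiftC (-v) x, q)).1 (u - v) else x u),
         (f (shiftC (-v) x, q)).2.1,
         v + (f (shiftC (-v) x, q)).2.2)

/-- The group `RTM(ℤ^d,n,k)` realized as the set of permutations of the moving-head
space such that both the permutation and its inverse are Turing machines. -/
def RTMset (d n k : ℕ) : Set (Equiv.Perm (Head d n k)) :=
  {e | IsTM d n k ⇑e ∧ IsTM d n k ⇑e.symm}

open Filter Finset

namespace RTMNF

variable {d n k : ℕ}

/-- reduction mod N+1, coordinatewise -/
def castT (d N : ℕ) (w : Fin d → ℤ) : Fin d → ZMod (N+1) := fun i => (w i : ZMod (N+1))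

lemma castT_add (d N : ℕ) (a b : Fin d → ℤ) :
    castT d N (a + b) = castT d N a + castT d N b := by
  funext i; simp [castT]

lemma castT_zero (d N : ℕ) : castT d N 0 = 0 := by funext i; simp [castT]

/-- periodization of a torus configuration -/
def per (N : ℕ) (y : (Fin d → ZMod (N+1)) → Fin n) : (Fin d → ℤ) → Fin n :=
  fun w => y (castT d N w)

/-- the induced (witness-dependent) map on torus configurations -/
noncomputable def tmap (N : ℕ) (Fo : Finset (Fin d → ℤ))
    (f : ((Fin d → ℤ) → Fin n) × Fin k → ((Fin d → ℤ) → Fin n) × Fin k × (Fin d → ℤ)) :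
    ((Fin d → ZMod (N+1)) → Fin n) × Fin k → ((Fin d → ZMod (N+1)) → Fin n) × Fin k :=
  fun yq =>
    ((fun c => if h : ∃ o ∈ Fo, castT d N o = c + castT d N (f (per N yq.1, yq.2)).2.2
        then (f (per N yq.1, yq.2)).1 h.choose
        else yq.1 (c + castT d N (f (per N yq.1, yq.2)).2.2)),
     (f (per N yq.1, yq.2)).2.1)

noncomputable def Sdisp (N : ℕ) (T : Head d n k → Head d n k) : Fin d → ℤ :=
  ∑ z : (((Fin d → ZMod (N+1)) → Fin n) × Fin k), (T (per N z.1, z.2, 0)).2.2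

noncomputable def alphaN (N : ℕ) (T : Head d n k → Head d n k) : Fin d → ℚ :=
  (((n : ℚ) ^ (Fintype.card (Fin d → ZMod (N+1))) * k)⁻¹) • fun i => ((Sdisp N T i : ℚ))

lemma shiftC_zero (x : (Fin d → ℤ) → Fin n) : shiftC 0 x = x := by
  funext u; simp [shiftC]

/-- `T` applied at head position 0. -/
lemma apply_zero {T : Head d n k → Head d n k} {Fo : Finset (Fin d → ℤ)}
    {f : ((Fin d → ℤ) → Fin n) × Fin k → ((Fin d → ℤ) → Fin n) × Fin k × (Fin d → ℤ)}
    (hT : ∀ (x : (Fin d → ℤ) → Fin n) (q : Fin k) (v : Fin d → ℤ),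
      T (x, q, v) =
        ((fun u => if u - v ∈ Fo then (f (shiftC (-v) x, q)).1 (u - v) else x u),
         (f (shiftC (-v) x, q)).2.1,
         v + (f (shiftC (-v) x, q)).2.2))
    (x : (Fin d → ℤ) → Fin n) (q : Fin k) :
    T (x, q, 0) = ((fun u => if u ∈ Fo then (f (x, q)).1 u else x u),
      (f (x, q)).2.1, (f (x, q)).2.2) := by
  have := hT x q 0
  simpa [shiftC_zero] using this

/-- geometry: eventually the reduction mod N+1 is injective on a fixed finite set -/
lemma eventually_injOn (F : Finset (Fin d → ℤ)) :
    ∀ᶠ N in atTop, Set.InjOn (castT d N) F := by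
  classical
  obtain ⟨R, hboundR⟩ : ∃ R : ℕ, ∀ w ∈ F, ∀ i, (w i).natAbs ≤ R := by
    refine ⟨F.sup (fun w => Finset.univ.sup fun i => (w i).natAbs), fun w hw i => ?_⟩
    exact le_trans (Finset.le_sup (f := fun i => ((w i)).natAbs) (Finset.mem_univ i))
      (Finset.le_sup (f := fun w => Finset.univ.sup fun i => (w i).natAbs) hw)
  filter_upwards [eventually_ge_atTop (2*R + 1)] with N hN
  intro a ha b hb hab
  funext i
  have hdvd : ((N:ℤ)+1) ∣ (a i - b i) := by
    have : ((a i - b i : ℤ) : ZMod (N+1)) = 0 := by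
      have := congrFun hab i
      simp only [castT] at this
      push_cast
      simp [this]
    rwa [ZMod.intCast_zmod_eq_zero_iff_dvd, Int.natCast_add, Int.natCast_one] at this
  have hbound : ∀ w ∈ F, (w i).natAbs ≤ R := fun w hw => hboundR w hw i
  have ha' : |a i| ≤ (R:ℤ) := by
    rw [Int.abs_eq_natAbs]; exact_mod_cast hbound a ha
  have hb' : |b i| ≤ (R:ℤ) := by
    rw [Int.abs_eq_natAbs]; exact_mod_cast hbound b hb
  have htri : |a i - b i| ≤ |a i| + |b i| := abs_sub (a i) (b i)
  by_contra hne
  have hz : a i - b i ≠ 0 := sub_ne_zero.mpr hne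
  have h2 : ((N:ℤ)+1) ≤ |a i - b i| := Int.le_of_dvd (abs_pos.mpr hz) ((dvd_abs ((N:ℤ)+1) (a i - b i)).mpr hdvd)
  omega


section Core

variable [NeZero n]

/-- locality of a rule -/
def Loc (Fi : Finset (Fin d → ℤ))
    (f : ((Fin d → ℤ) → Fin n) × Fin k → ((Fin d → ℤ) → Fin n) × Fin k × (Fin d → ℤ)) : Prop :=
  ∀ (x y : (Fin d → ℤ) → Fin n) (q : Fin k), (∀ u ∈ Fi, x u = y u) → f (x, q) = f (y, q)

/-- the defining formula of a TM -/
def Rule (T : Head d n k → Head d n k) (Fo : Finset (Fin d → ℤ))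
    (f : ((Fin d → ℤ) → Fin n) × Fin k → ((Fin d → ℤ) → Fin n) × Fin k × (Fin d → ℤ)) : Prop :=
  ∀ (x : (Fin d → ℤ) → Fin n) (q : Fin k) (v : Fin d → ℤ),
      T (x, q, v) =
        ((fun u => if u - v ∈ Fo then (f (shiftC (-v) x, q)).1 (u - v) else x u),
         (f (shiftC (-v) x, q)).2.1,
         v + (f (shiftC (-v) x, q)).2.2)

lemma isTM_iff (T : Head d n k → Head d n k) :
    IsTM d n k T ↔ ∃ Fi Fo f, Loc (d := d) (n := n) (k := k) Fi f ∧ Rule T Fo f := Iff.rfl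

/-- extension of a pattern on `Fi` by zeros -/
noncomputable def pext (Fi : Finset (Fin d → ℤ)) (s : (a : Fi) → Fin n) :
    (Fin d → ℤ) → Fin n :=
  fun w => if h : w ∈ Fi then s ⟨w, h⟩ else 0

/-- the finite set of possible displacements of a rule -/
noncomputable def dispSet (Fi : Finset (Fin d → ℤ))
    (f : ((Fin d → ℤ) → Fin n) × Fin k → ((Fin d → ℤ) → Fin n) × Fin k × (Fin d → ℤ)) :
    Finset (Fin d → ℤ) :=
  Finset.image (fun s : ((a : Fi) → Fin n) × Fin k => (f (pext Fi s.1, s.2)).2.2) Finset.univ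

lemma disp_mem {Fi : Finset (Fin d → ℤ)} {f} (hf : Loc (d := d) (n := n) (k := k) Fi f)
    (x : (Fin d → ℤ) → Fin n) (q : Fin k) : (f (x, q)).2.2 ∈ dispSet Fi f := by
  classical
  have : f (x, q) = f (pext Fi (fun a => x a), q) := by
    apply hf
    intro u hu
    simp [pext, hu]
  rw [this]
  exact Finset.mem_image.mpr ⟨(fun a => x a, q), Finset.mem_univ _, rfl⟩

lemma castT_surj (d N : ℕ) (c : Fin d → ZMod (N+1)) : ∃ w, castT d N w = c := by
  refine ⟨fun i => ((c i).val : ℤ), ?_⟩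
  funext i
  simp [castT, ZMod.natCast_val, ZMod.intCast_cast, ZMod.cast_id]

/-- key: periodized output of `tmap` agrees with the true one-step tape near the head -/
lemma per_tmap_agree {N : ℕ} {Fo : Finset (Fin d → ℤ)} {f}
    (y : (Fin d → ZMod (N+1)) → Fin n) (q : Fin k) (A : Finset (Fin d → ℤ))
    (hinj : Set.InjOn (castT d N) ↑(Fo ∪ A.image (· + (f (per N y, q)).2.2)))
    (a : Fin d → ℤ) (ha : a ∈ A) :
    per N ((tmap N Fo f (y, q)).1) a =
      (if (a + (f (per N y, q)).2.2) ∈ Fo then (f (per N y, q)).1 (a + (f (per N y, q)).2.2)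
       else per N y (a + (f (per N y, q)).2.2)) := by
  classical
  set u := (f (per N y, q)).2.2 with hu
  have hca : castT d N a + castT d N u = castT d N (a + u) := (castT_add d N a u).symm
  by_cases hmem : a + u ∈ Fo
  · have hex : ∃ o ∈ Fo, castT d N o = castT d N a + castT d N u := ⟨a + u, hmem, hca.symm⟩
    have hchoose : hex.choose ∈ Fo ∧ castT d N hex.choose = castT d N a + castT d N u :=
      ⟨hex.choose_spec.1, hex.choose_spec.2⟩
    have heq : hex.choose = a + u := by
      apply hinj (Finset.mem_coe.mpr (Finset.mem_union_left _ hchoose.1))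
        (Finset.mem_coe.mpr (Finset.mem_union_right _
          (Finset.mem_image.mpr ⟨a, ha, rfl⟩)))
      rw [hchoose.2, hca]
    rw [if_pos hmem]
    show (tmap N Fo f (y, q)).1 (castT d N a) = _
    rw [tmap]
    simp only []
    rw [dif_pos hex, heq]
  · have hnex : ¬ ∃ o ∈ Fo, castT d N o = castT d N a + castT d N u := by
      rintro ⟨o, ho, hco⟩
      have : o = a + u := by
        apply hinj (Finset.mem_coe.mpr (Finset.mem_union_left _ ho))
          (Finset.mem_coe.mpr (Finset.mem_union_right _
            (Finset.mem_image.mpr ⟨a, ha, rfl⟩)))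
        rw [hco, hca]
      exact hmem (this ▸ ho)
    rw [if_neg hmem]
    show (tmap N Fo f (y, q)).1 (castT d N a) = _
    rw [tmap]
    simp only []
    rw [dif_neg hnex]
    show y (castT d N a + castT d N u) = per N y (a + u)
    rw [hca]; rfl

lemma tmap_fst_apply (N : ℕ) (Fo : Finset (Fin d → ℤ)) (f) (y : (Fin d → ZMod (N+1)) → Fin n)
    (q : Fin k) (c : Fin d → ZMod (N+1)) :
    (tmap N Fo f (y, q)).1 c =
      if h : ∃ o ∈ Fo, castT d N o = c + castT d N (f (per N y, q)).2.2
      then (f (per N y, q)).1 h.choose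
      else y (c + castT d N (f (per N y, q)).2.2) := rfl

lemma tmap_snd (N : ℕ) (Fo : Finset (Fin d → ℤ)) (f)
    (yq : ((Fin d → ZMod (N+1)) → Fin n) × Fin k) :
    (tmap N Fo f yq).2 = (f (per N yq.1, yq.2)).2.1 := rfl

/-- Eventually (in the torus size), the torus maps of a machine and of an inverse machine
compose to the identity. -/
lemma tmap_leftInv {T S : Head d n k → Head d n k}
    {Fi Fo : Finset (Fin d → ℤ)} {f}
    (hf : Loc (d := d) (n := n) (k := k) Fi f) (hT : Rule T Fo f)
    {Fi₂ Fo₂ : Finset (Fin d → ℤ)} {f₂}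
    (hf₂ : Loc (d := d) (n := n) (k := k) Fi₂ f₂) (hS : Rule S Fo₂ f₂)
    (hST : ∀ p, S (T p) = p) :
    ∀ᶠ N in atTop, ∀ z, tmap N Fo₂ f₂ (tmap N Fo f z) = z := by
  classical
  have hev : ∀ᶠ N in atTop, ∀ u ∈ dispSet Fi f,
      Set.InjOn (castT d N) ↑(Fo ∪ Fi₂.image (· + u)) := by
    rw [Filter.eventually_all_finset]
    intro u _
    exact eventually_injOn _
  filter_upwards [hev] with N hN z
  obtain ⟨y, q⟩ := z
  -- notation
  set x : (Fin d → ℤ) → Fin n := per N y with hxdef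
  set r := f (x, q) with hrdef
  set x₁ : (Fin d → ℤ) → Fin n := fun w => if w ∈ Fo then r.1 w else x w with hx₁def
  -- the true one-step application
  have hTx : T (x, q, 0) = (x₁, r.2.1, r.2.2) := by
    have h0 := hT x q 0
    simpa [shiftC_zero, hx₁def, ← hrdef] using h0
  have hSTx : S (x₁, r.2.1, r.2.2) = (x, q, 0) := by rw [← hTx]; exact hST _
  set W : (Fin d → ℤ) → Fin n := shiftC (-(r.2.2)) x₁ with hWdef
  have hE : ((fun w => if w - r.2.2 ∈ Fo₂ then (f₂ (W, r.2.1)).1 (w - r.2.2) else x₁ w),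
      (f₂ (W, r.2.1)).2.1, r.2.2 + (f₂ (W, r.2.1)).2.2) = ((x, q, 0) : Head d n k) := by
    rw [← hSTx]; exact (hS x₁ r.2.1 r.2.2).symm
  have htape : ∀ w, (if w - r.2.2 ∈ Fo₂ then (f₂ (W, r.2.1)).1 (w - r.2.2) else x₁ w) = x w :=
    fun w => congrFun (congrArg Prod.fst hE) w
  have hstate : (f₂ (W, r.2.1)).2.1 = q := congrArg (fun p => p.2.1) hE
  have hhead : r.2.2 + (f₂ (W, r.2.1)).2.2 = 0 := congrArg (fun p => p.2.2) hE
  have hdisp2 : (f₂ (W, r.2.1)).2.2 = -r.2.2 := by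
    have h := congrArg (fun t => -r.2.2 + t) hhead
    simpa [← add_assoc] using h
  -- stage 1 of the torus map
  set Z := tmap N Fo f (y, q) with hZdef
  have hZ2 : Z.2 = r.2.1 := rfl
  have hperZ : ∀ a ∈ Fi₂, per N Z.1 a = W a := by
    intro a ha
    have hmem : r.2.2 ∈ dispSet Fi f := disp_mem hf x q
    have := per_tmap_agree (N := N) (Fo := Fo) (f := f) y q Fi₂ (hN _ hmem) a ha
    rw [hWdef]
    show per N Z.1 a = x₁ (a - -(r.2.2))
    rw [sub_neg_eq_add, hx₁def]
    exact this
  have hF2 : f₂ (per N Z.1, Z.2) = f₂ (W, r.2.1) := hf₂ _ _ _ hperZ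
  have hu₂ : (f₂ (per N Z.1, Z.2)).2.2 = -r.2.2 := by rw [hF2, hdisp2]
  have hq₂ : (f₂ (per N Z.1, Z.2)).2.1 = q := by rw [hF2, hstate]
  -- conclude
  have h2nd : (tmap N Fo₂ f₂ Z).2 = q := by
    rw [tmap_snd]
    have : (per N Z.1, Z.2) = (per N Z.1, Z.2) := rfl
    exact hq₂
  have h1st : (tmap N Fo₂ f₂ Z).1 = y := by
    funext c
    obtain ⟨w₀, rfl⟩ := castT_surj d N c
    have hZpair : Z = (Z.1, Z.2) := rfl
    rw [hZpair, tmap_fst_apply]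
    by_cases hex : ∃ o ∈ Fo₂, castT d N o = castT d N w₀ + castT d N (f₂ (per N Z.1, Z.2)).2.2
    · rw [dif_pos hex]
      have hsp := hex.choose_spec
      set o₂ := hex.choose with ho₂def
      obtain ⟨ho₂mem, ho₂cast⟩ := hsp
      have hval : (f₂ (per N Z.1, Z.2)).1 o₂ = (f₂ (W, r.2.1)).1 o₂ :=
        congrFun (congrArg Prod.fst hF2) o₂
      have h5 := htape (o₂ + r.2.2)
      rw [add_sub_cancel_right, if_pos ho₂mem] at h5
      rw [hval, h5]
      show y (castT d N (o₂ + r.2.2)) = y (castT d N w₀)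
      congr 1
      rw [castT_add, ho₂cast, hu₂]
      rw [add_assoc, ← castT_add]
      simp [castT_zero]
    · rw [dif_neg hex]
      -- unfold Z.1
      show (tmap N Fo f (y, q)).1 (castT d N w₀ + castT d N (f₂ (per N Z.1, Z.2)).2.2) = _
      rw [tmap_fst_apply]
      have hcc : castT d N w₀ + castT d N (f₂ (per N Z.1, Z.2)).2.2
          + castT d N (f (per N y, q)).2.2 = castT d N w₀ := by
        rw [hu₂]
        have : (f (per N y, q)).2.2 = r.2.2 := rfl
        rw [this, add_assoc, ← castT_add]
        simp [castT_zero]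
      by_cases hex' : ∃ o ∈ Fo, castT d N o =
          castT d N w₀ + castT d N (f₂ (per N Z.1, Z.2)).2.2 + castT d N (f (per N y, q)).2.2
      · rw [dif_pos hex']
        have hsp' := hex'.choose_spec
        set o' := hex'.choose with ho'def
        obtain ⟨ho'mem, ho'cast⟩ := hsp'
        have hnotin : (o' - r.2.2) ∉ Fo₂ := by
          intro hmem2
          apply hex
          refine ⟨o' - r.2.2, hmem2, ?_⟩
          rw [hu₂]
          have : o' - r.2.2 = o' + -r.2.2 := sub_eq_add_neg _ _
          rw [this, castT_add, ho'cast, hcc]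
        have h5 := htape o'
        rw [if_neg hnotin] at h5
        have hx₁o : x₁ o' = (f (per N y, q)).1 o' := by
          rw [hx₁def]
          show (if o' ∈ Fo then r.1 o' else x o') = _
          rw [if_pos ho'mem]
        rw [← hx₁o, h5]
        show y (castT d N o') = y (castT d N w₀)
        rw [ho'cast, hcc]
      · rw [dif_neg hex']
        exact congrArg y hcc
  -- assemble
  have : tmap N Fo₂ f₂ (tmap N Fo f (y, q)) = ((tmap N Fo₂ f₂ Z).1, (tmap N Fo₂ f₂ Z).2) := rfl
  rw [this, h1st, h2nd]

/-- additivity of the displacement sum -/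
lemma Sdisp_add {e e' : Equiv.Perm (Head d n k)} (he : e ∈ RTMset d n k)
    (he' : e' ∈ RTMset d n k) :
    ∀ᶠ N in atTop, Sdisp N ⇑(e * e') = Sdisp N ⇑e + Sdisp N ⇑e' := by
  classical
  obtain ⟨⟨Fi', Fo', f', hf', hT'⟩, ⟨Fi₂, Fo₂, f₂, hf₂, hS₂⟩⟩ := he'
  obtain ⟨⟨Gi, Go, g, hg, hTg⟩, -⟩ := he
  have hbijL := tmap_leftInv hf' hT' hf₂ hS₂ (fun p => e'.symm_apply_apply p)
  have hbijR := tmap_leftInv hf₂ hS₂ hf' hT' (fun p => e'.apply_symm_apply p)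
  have hev : ∀ᶠ N in atTop, ∀ u ∈ dispSet Fi' f',
      Set.InjOn (castT d N) ↑(Fo' ∪ Gi.image (· + u)) := by
    rw [Filter.eventually_all_finset]; intro u _; exact eventually_injOn _
  filter_upwards [hbijL, hbijR, hev] with N hL hR hN
  have hbij : Function.Bijective (tmap N Fo' f') :=
    ⟨Function.LeftInverse.injective hL, Function.LeftInverse.surjective hR⟩
  have hpt : ∀ z : ((Fin d → ZMod (N+1)) → Fin n) × Fin k,
      ((e * e') (per N z.1, z.2, 0)).2.2 =
        (e' (per N z.1, z.2, 0)).2.2 +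
          ((fun z' => (e (per N z'.1, z'.2, 0)).2.2) (tmap N Fo' f' z)) := by
    rintro ⟨y, q⟩
    set x : (Fin d → ℤ) → Fin n := per N y with hxdef
    set r := f' (x, q) with hrdef
    set x₁ : (Fin d → ℤ) → Fin n := fun w => if w ∈ Fo' then r.1 w else x w with hx₁def
    have hTx : e' (x, q, 0) = (x₁, r.2.1, r.2.2) := by
      have h0 := hT' x q 0
      simpa [shiftC_zero, hx₁def, ← hrdef] using h0
    have hmul : (e * e') (x, q, 0) = e (x₁, r.2.1, r.2.2) := by
      rw [Equiv.Perm.mul_apply, hTx]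
    set Z := tmap N Fo' f' (y, q) with hZdef
    have hperZ : ∀ a ∈ Gi, per N Z.1 a = shiftC (-(r.2.2)) x₁ a := by
      intro a ha
      have hmem : r.2.2 ∈ dispSet Fi' f' := disp_mem hf' x q
      have := per_tmap_agree (N := N) (Fo := Fo') (f := f') y q Gi (hN _ hmem) a ha
      show per N Z.1 a = x₁ (a - -(r.2.2))
      rw [sub_neg_eq_add, hx₁def]
      exact this
    have hgeq : g (per N Z.1, r.2.1) = g (shiftC (-(r.2.2)) x₁, r.2.1) := hg _ _ _ hperZ
    have h1 : ((e * e') (x, q, 0)).2.2 = r.2.2 + (g (shiftC (-(r.2.2)) x₁, r.2.1)).2.2 := by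
      rw [hmul, hTg x₁ r.2.1 r.2.2]
    have h2 : (e (per N Z.1, Z.2, 0)).2.2 = (g (per N Z.1, r.2.1)).2.2 := by
      have h0 := hTg (per N Z.1) Z.2 0
      have hZ2 : Z.2 = r.2.1 := rfl
      rw [hZ2] at h0 ⊢
      simpa [shiftC_zero] using congrArg (fun p => p.2.2) h0
    show ((e * e') (x, q, 0)).2.2 = (e' (x, q, 0)).2.2 + (e (per N Z.1, Z.2, 0)).2.2
    rw [h1, h2, hgeq, hTx]
  calc Sdisp N ⇑(e * e')
      = ∑ z : ((Fin d → ZMod (N+1)) → Fin n) × Fin k,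
          ((e' (per N z.1, z.2, 0)).2.2 +
            ((fun z' => (e (per N z'.1, z'.2, 0)).2.2) (tmap N Fo' f' z))) := by
        rw [Sdisp]; exact Finset.sum_congr rfl (fun z _ => hpt z)
    _ = Sdisp N ⇑e' + Sdisp N ⇑e := by
        rw [Finset.sum_add_distrib, Sdisp, Sdisp]
        congr 1
        exact Function.Bijective.sum_comp hbij (fun z' => (e (per N z'.1, z'.2, 0)).2.2)
    _ = Sdisp N ⇑e + Sdisp N ⇑e' := add_comm _ _

/-- summing a function of finitely many coordinates over all configurations -/
lemma sum_local {ι : Type*} [Fintype ι] [DecidableEq ι] {M : Type*} [AddCommMonoid M]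
    (J : Finset ι) (g : (ι → Fin n) → M)
    (hg : ∀ y y', (∀ j ∈ J, y j = y' j) → g y = g y') :
    ∑ y : ι → Fin n, g y
      = (n ^ (Fintype.card ι - J.card)) •
        ∑ p : (j : J) → Fin n, g (fun i => if h : i ∈ J then p ⟨i, h⟩ else 0) := by
  classical
  have hE := (Equiv.piEquivPiSubtypeProd (· ∈ J) (fun _ : ι => Fin n)).symm.sum_comp
    (fun y : ι → Fin n => g y)
  rw [← hE, Fintype.sum_prod_type]
  have hinner : ∀ p : (j : J) → Fin n, ∀ r : (j : {x : ι // x ∉ J}) → Fin n,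
      g ((Equiv.piEquivPiSubtypeProd (· ∈ J) (fun _ : ι => Fin n)).symm (p, r))
        = g (fun i => if h : i ∈ J then p ⟨i, h⟩ else 0) := by
    intro p r
    apply hg
    intro j hj
    rw [Equiv.piEquivPiSubtypeProd_symm_apply]
    simp [hj]
  calc ∑ p : (j : J) → Fin n, ∑ r : (j : {x : ι // x ∉ J}) → Fin n,
        g ((Equiv.piEquivPiSubtypeProd (· ∈ J) (fun _ : ι => Fin n)).symm (p, r))
      = ∑ p : (j : J) → Fin n, ∑ _r : (j : {x : ι // x ∉ J}) → Fin n,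
          g (fun i => if h : i ∈ J then p ⟨i, h⟩ else 0) := by
        exact Finset.sum_congr rfl fun p _ => Finset.sum_congr rfl fun r _ => hinner p r
    _ = ∑ p : (j : J) → Fin n,
          (Fintype.card ({x : ι // x ∉ J} → Fin n)) •
            g (fun i => if h : i ∈ J then p ⟨i, h⟩ else 0) := by
        apply Finset.sum_congr rfl
        intro p _
        rw [Finset.sum_const, Finset.card_univ]
    _ = (n ^ (Fintype.card ι - J.card)) •
          ∑ p : (j : J) → Fin n, g (fun i => if h : i ∈ J then p ⟨i, h⟩ else 0) := by
        rw [Finset.smul_sum]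
        apply Finset.sum_congr rfl
        intro p _
        congr 1
        rw [Fintype.card_fun, Fintype.card_fin]
        congr 1
        rw [Fintype.card_subtype_compl, Fintype.card_coe]

/-- rational vector of an integer vector -/
def qv (v : Fin d → ℤ) : Fin d → ℚ := fun i => (v i : ℚ)

lemma qv_nsmul (m : ℕ) (v : Fin d → ℤ) : qv (m • v) = (m : ℚ) • qv v := by
  funext i; simp [qv]

/-- Stabilization: eventually `alphaN` equals the finite-window average. -/
lemma alphaN_stab {T : Head d n k → Head d n k}
    {Fi Fo : Finset (Fin d → ℤ)} {f}
    (hf : Loc (d := d) (n := n) (k := k) Fi f) (hT : Rule T Fo f) :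
    ∀ᶠ N in atTop, alphaN N T =
      ((n : ℚ) ^ Fi.card * k)⁻¹ •
        qv (∑ s : (a : Fi) → Fin n, ∑ q : Fin k, (f (pext Fi s, q)).2.2) := by
  classical
  filter_upwards [eventually_injOn Fi] with N hinj
  set J : Finset (Fin d → ZMod (N+1)) := Fi.image (castT d N) with hJ
  have hcardJ : J.card = Fi.card := Finset.card_image_of_injOn hinj
  -- rewrite Sdisp as a double sum of the local rule
  have h1 : Sdisp N T = ∑ y : (Fin d → ZMod (N+1)) → Fin n,
      ∑ q : Fin k, (f (per N y, q)).2.2 := by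
    rw [Sdisp, Fintype.sum_prod_type]
    apply Finset.sum_congr rfl
    intro y _
    apply Finset.sum_congr rfl
    intro q _
    have h0 := hT (per N y) q 0
    simpa [shiftC_zero] using congrArg (fun p => p.2.2) h0
  set g : ((Fin d → ZMod (N+1)) → Fin n) → (Fin d → ℤ) :=
    fun y => ∑ q : Fin k, (f (per N y, q)).2.2 with hgdef
  have hloc : ∀ y y', (∀ j ∈ J, y j = y' j) → g y = g y' := by
    intro y y' hyy
    apply Finset.sum_congr rfl
    intro q _
    have : f (per N y, q) = f (per N y', q) := by
      apply hf
      intro a ha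
      exact hyy (castT d N a) (Finset.mem_image_of_mem _ ha)
    rw [this]
  have h2 := sum_local (n := n) J g hloc
  -- transport the pattern sum from `J` to `Fi`
  have hbijF : Function.Bijective (fun a : {a // a ∈ Fi} =>
      (⟨castT d N a.1, Finset.mem_image_of_mem _ a.2⟩ : {j // j ∈ J})) := by
    constructor
    · rintro ⟨a, ha⟩ ⟨b, hb⟩ hab
      have : castT d N a = castT d N b := congrArg Subtype.val hab
      exact Subtype.ext (hinj (Finset.mem_coe.mpr ha) (Finset.mem_coe.mpr hb) this)
    · rintro ⟨j, hj⟩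
      obtain ⟨a, ha, rfl⟩ := Finset.mem_image.mp hj
      exact ⟨⟨a, ha⟩, rfl⟩
  set eqv : {a // a ∈ Fi} ≃ {j // j ∈ J} := Equiv.ofBijective _ hbijF with heqvdef
  have h3 : ∑ p : (j : J) → Fin n, g (fun i => if h : i ∈ J then p ⟨i, h⟩ else 0)
      = ∑ s : (a : Fi) → Fin n, ∑ q : Fin k, (f (pext Fi s, q)).2.2 := by
    have hEs := (Equiv.piCongrLeft' (fun _ => Fin n) eqv).sum_comp
      (fun p : (j : J) → Fin n => g (fun i => if h : i ∈ J then p ⟨i, h⟩ else 0))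
    rw [← hEs]
    apply Finset.sum_congr rfl
    intro s _
    have hagree : ∀ a ∈ Fi, per N (fun i => if h : i ∈ J then
        (Equiv.piCongrLeft' (fun _ => Fin n) eqv s) ⟨i, h⟩ else 0) a = pext Fi s a := by
      intro a ha
      have hmem : castT d N a ∈ J := Finset.mem_image_of_mem _ ha
      show (if h : castT d N a ∈ J then
          (Equiv.piCongrLeft' (fun _ => Fin n) eqv s) ⟨castT d N a, h⟩ else 0) = pext Fi s a
      rw [dif_pos hmem, pext]
      rw [dif_pos ha]
      show s (eqv.symm ⟨castT d N a, hmem⟩) = s ⟨a, ha⟩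
      congr 1
      apply eqv.injective
      rw [Equiv.apply_symm_apply]
      exact Subtype.ext rfl
    show g _ = _
    rw [hgdef]
    apply Finset.sum_congr rfl
    intro q _
    exact congrArg (fun p => p.2.2) (hf _ _ q hagree)
  -- put things together
  set C := Fintype.card (Fin d → ZMod (N+1)) with hC
  set Sfi := ∑ s : (a : Fi) → Fin n, ∑ q : Fin k, (f (pext Fi s, q)).2.2 with hSfi
  have hle : Fi.card ≤ C := by
    rw [← hcardJ]
    exact le_trans (Finset.card_le_univ J) (le_of_eq (Finset.card_univ))
  have hSd : Sdisp N T = (n ^ (C - Fi.card)) • Sfi := by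
    rw [h1, h2, h3, hcardJ]
  by_cases hk0 : k = 0
  · subst hk0
    have hz : Sfi = 0 := by
      rw [hSfi]
      apply Finset.sum_eq_zero
      intro s _
      exact Finset.sum_of_isEmpty _
    rw [hz]
    funext i
    simp [alphaN, hSd, hz, qv]
  have hnn : (n : ℚ) ≠ 0 := by
    have := NeZero.ne n
    exact_mod_cast this
  have hkk : (k : ℚ) ≠ 0 := by exact_mod_cast hk0
  have hpows : (n : ℚ) ^ (C - Fi.card) * (n : ℚ) ^ Fi.card = (n : ℚ) ^ C := by
    rw [← pow_add]
    congr 1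
    omega
  have key : ((n : ℚ) ^ C * k)⁻¹ * (n : ℚ) ^ (C - Fi.card) = ((n : ℚ) ^ Fi.card * k)⁻¹ := by
    rw [← hpows]
    have h1' : (n:ℚ) ^ (C - Fi.card) ≠ 0 := pow_ne_zero _ hnn
    field_simp
  calc alphaN N T = ((n : ℚ) ^ C * k)⁻¹ • qv (Sdisp N T) := rfl
    _ = ((n : ℚ) ^ C * k)⁻¹ • qv ((n ^ (C - Fi.card)) • Sfi) := by rw [hSd]
    _ = (((n : ℚ) ^ C * k)⁻¹ * (n : ℚ) ^ (C - Fi.card)) • qv Sfi := by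
        rw [qv_nsmul, smul_smul]
        norm_cast
    _ = ((n : ℚ) ^ Fi.card * k)⁻¹ • qv Sfi := by rw [key]

/-- Turing machines are closed under composition. -/
lemma isTM_comp {T S : Head d n k → Head d n k}
    (hT : IsTM d n k T) (hS : IsTM d n k S) : IsTM d n k (fun p => T (S p)) := by
  classical
  obtain ⟨Gi, Go, g, hg, hTg⟩ := hT
  obtain ⟨Fi, Fo, f, hf, hTf⟩ := hS
  set U := dispSet Fi f with hU
  set Fo2 : Finset (Fin d → ℤ) := Fo ∪ U.biUnion (fun u => Go.image (u + ·)) with hFo2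
  set Fi2 : Finset (Fin d → ℤ) := (Fi ∪ U.biUnion (fun u => Gi.image (u + ·))) ∪ Fo2 with hFi2
  refine ⟨Fi2, Fo2, fun xq =>
    ((fun w => if w ∈ Fo2 then
        (if w - (f xq).2.2 ∈ Go then
          (g (shiftC (-((f xq).2.2)) (fun w' => if w' ∈ Fo then (f xq).1 w' else xq.1 w'),
              (f xq).2.1)).1 (w - (f xq).2.2)
         else (fun w' => if w' ∈ Fo then (f xq).1 w' else xq.1 w') w)
      else 0),
     (g (shiftC (-((f xq).2.2)) (fun w' => if w' ∈ Fo then (f xq).1 w' else xq.1 w'),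
         (f xq).2.1)).2.1,
     (f xq).2.2 +
       (g (shiftC (-((f xq).2.2)) (fun w' => if w' ∈ Fo then (f xq).1 w' else xq.1 w'),
           (f xq).2.1)).2.2), ?_, ?_⟩
  · -- locality
    intro x x' q hagr
    have hFisub : ∀ u ∈ Fi, x u = x' u := fun u hu =>
      hagr u (Finset.mem_union_left _ (Finset.mem_union_left _ hu))
    have hr : f (x, q) = f (x', q) := hf x x' q hFisub
    have hUmem : (f (x, q)).2.2 ∈ U := disp_mem hf x q
    have hx₁ : ∀ a ∈ Gi,
        shiftC (-((f (x, q)).2.2)) (fun w' => if w' ∈ Fo then (f (x, q)).1 w' else x w') a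
          = shiftC (-((f (x', q)).2.2)) (fun w' => if w' ∈ Fo then (f (x', q)).1 w' else x' w') a := by
      intro a ha
      rw [← hr]
      show (if a - -(f (x, q)).2.2 ∈ Fo then _ else x (a - -(f (x, q)).2.2)) =
        (if a - -(f (x, q)).2.2 ∈ Fo then _ else x' (a - -(f (x, q)).2.2))
      rw [sub_neg_eq_add]
      by_cases hFo : a + (f (x, q)).2.2 ∈ Fo
      · rw [if_pos hFo, if_pos hFo]
      · rw [if_neg hFo, if_neg hFo]
        apply hagr
        apply Finset.mem_union_left
        apply Finset.mem_union_right
        exact Finset.mem_biUnion.mpr ⟨(f (x, q)).2.2, hUmem,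
          Finset.mem_image.mpr ⟨a, ha, by rw [add_comm]⟩⟩
    rw [← hr] at hx₁
    have hmix : g (shiftC (-((f (x, q)).2.2)) (fun w' => if w' ∈ Fo then (f (x, q)).1 w' else x w'),
          (f (x, q)).2.1)
        = g (shiftC (-((f (x, q)).2.2)) (fun w' => if w' ∈ Fo then (f (x, q)).1 w' else x' w'),
          (f (x, q)).2.1) := hg _ _ _ hx₁
    simp only []
    rw [← hr, ← hmix]
    refine Prod.ext ?_ rfl
    funext w
    dsimp only []
    by_cases hw : w ∈ Fo2
    · rw [if_pos hw, if_pos hw]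
      by_cases hgo : w - (f (x, q)).2.2 ∈ Go
      · rw [if_pos hgo, if_pos hgo]
      · rw [if_neg hgo, if_neg hgo]
        by_cases hfo : w ∈ Fo
        · rw [if_pos hfo, if_pos hfo]
        · rw [if_neg hfo, if_neg hfo]
          apply hagr
          exact Finset.mem_union_right _ hw
    · rw [if_neg hw, if_neg hw]
  · -- the rule
    intro x q v
    set xh := shiftC (-v) x with hxh
    set r := f (xh, q) with hrd
    have hSx : S (x, q, v) =
        ((fun u => if u - v ∈ Fo then r.1 (u - v) else x u), r.2.1, v + r.2.2) := hTf x q v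
    set X₁ : (Fin d → ℤ) → Fin n := fun u => if u - v ∈ Fo then r.1 (u - v) else x u with hX₁
    set x₁ : (Fin d → ℤ) → Fin n := fun w => if w ∈ Fo then r.1 w else xh w with hx₁d
    have claimA : shiftC (-(v + r.2.2)) X₁ = shiftC (-(r.2.2)) x₁ := by
      funext a
      show X₁ (a - -(v + r.2.2)) = x₁ (a - -(r.2.2))
      rw [sub_neg_eq_add, sub_neg_eq_add, hX₁, hx₁d]
      simp only []
      have h1 : a + (v + r.2.2) - v = a + r.2.2 := by abel
      rw [h1]
      by_cases hfo : a + r.2.2 ∈ Fo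
      · rw [if_pos hfo, if_pos hfo]
      · rw [if_neg hfo, if_neg hfo]
        show x (a + (v + r.2.2)) = xh (a + r.2.2)
        rw [hxh]
        show x (a + (v + r.2.2)) = x (a + r.2.2 - -v)
        congr 1
        abel
    have hTx := hTg X₁ r.2.1 (v + r.2.2)
    rw [claimA] at hTx
    set t := g (shiftC (-(r.2.2)) x₁, r.2.1) with htd
    have hUmem : r.2.2 ∈ U := disp_mem hf xh q
    show T (S (x, q, v)) = _
    rw [hSx, hTx]
    refine Prod.ext ?_ (Prod.ext rfl ?_)
    · funext u
      dsimp only []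
      show (if u - (v + r.2.2) ∈ Go then t.1 (u - (v + r.2.2)) else X₁ u)
          = if u - v ∈ Fo2 then
              (if u - v ∈ Fo2 then
                (if u - v - r.2.2 ∈ Go then t.1 (u - v - r.2.2) else x₁ (u - v))
               else 0)
            else x u
      have hsub : u - (v + r.2.2) = u - v - r.2.2 := by abel
      rw [hsub]
      by_cases c1 : u - v - r.2.2 ∈ Go
      · have hFo2mem : u - v ∈ Fo2 := by
          apply Finset.mem_union_right
          exact Finset.mem_biUnion.mpr ⟨r.2.2, hUmem,
            Finset.mem_image.mpr ⟨u - v - r.2.2, c1, by abel⟩⟩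
        rw [if_pos c1, if_pos hFo2mem, if_pos hFo2mem, if_pos c1]
      · rw [if_neg c1]
        by_cases hw : u - v ∈ Fo2
        · rw [if_pos hw, if_pos hw, if_neg c1]
          show X₁ u = x₁ (u - v)
          rw [hX₁, hx₁d]
          dsimp only []
          by_cases hfo : u - v ∈ Fo
          · rw [if_pos hfo, if_pos hfo]
          · rw [if_neg hfo, if_neg hfo]
            show x u = x (u - v - -v)
            congr 1
            abel
        · rw [if_neg hw]
          show X₁ u = x u
          rw [hX₁]
          dsimp only []
          have hnfo : u - v ∉ Fo := fun hc => hw (Finset.mem_union_left _ hc)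
          rw [if_neg hnfo]
    · show (v + r.2.2) + t.2.2 = v + (r.2.2 + t.2.2)
      abel

/-- The identity permutation is a Turing machine. -/
lemma isTM_one : IsTM d n k ⇑(1 : Equiv.Perm (Head d n k)) := by
  classical
  refine ⟨∅, ∅, fun xq => ((fun _ => 0), xq.2, 0), fun x y q _ => rfl, ?_⟩
  intro x q v
  show (x, q, v) = _
  refine Prod.ext ?_ (Prod.ext rfl ?_)
  · funext u
    simp
  · show v = v + 0
    rw [add_zero]

lemma RTMset_one : (1 : Equiv.Perm (Head d n k)) ∈ RTMset d n k := by
  constructor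
  · exact isTM_one
  · have : (1 : Equiv.Perm (Head d n k)).symm = 1 := rfl
    rw [this]; exact isTM_one

lemma RTMset_mul {e e' : Equiv.Perm (Head d n k)} (he : e ∈ RTMset d n k)
    (he' : e' ∈ RTMset d n k) : e * e' ∈ RTMset d n k := by
  constructor
  · have h : ⇑(e * e') = fun p => e (e' p) := rfl
    rw [h]; exact isTM_comp he.1 he'.1
  · have h : ⇑(e * e').symm = fun p => e'.symm (e.symm p) := rfl
    rw [h]; exact isTM_comp he'.2 he.2

lemma RTMset_inv {e : Equiv.Perm (Head d n k)} (he : e ∈ RTMset d n k) :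
    e⁻¹ ∈ RTMset d n k := by
  constructor
  · exact he.2
  · have : (e⁻¹ : Equiv.Perm (Head d n k)).symm = e := rfl
    rw [this]; exact he.1

lemma alphaN_one (N : ℕ) : alphaN N ⇑(1 : Equiv.Perm (Head d n k)) = 0 := by
  have h : Sdisp N ⇑(1 : Equiv.Perm (Head d n k)) = 0 := by
    rw [Sdisp]
    apply Finset.sum_eq_zero
    intro z _
    rfl
  funext i
  have hi : Sdisp N ⇑(1 : Equiv.Perm (Head d n k)) i = 0 := by rw [h]; rfl
  show (((n : ℚ) ^ (Fintype.card (Fin d → ZMod (N+1))) * k)⁻¹)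
      * ((Sdisp N ⇑(1 : Equiv.Perm (Head d n k)) i : ℚ)) = 0
  rw [hi]
  simp

lemma alphaN_mul {e e' : Equiv.Perm (Head d n k)} (he : e ∈ RTMset d n k)
    (he' : e' ∈ RTMset d n k) :
    ∀ᶠ N in atTop, alphaN N ⇑(e * e') = alphaN N ⇑e + alphaN N ⇑e' := by
  filter_upwards [Sdisp_add he he'] with N hN
  funext i
  have hNi : Sdisp N ⇑(e * e') i = Sdisp N ⇑e i + Sdisp N ⇑e' i := by rw [hN]; rfl
  simp only [alphaN, Pi.smul_apply, Pi.add_apply, smul_eq_mul]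
  rw [hNi]
  push_cast
  ring

/-! ### The machine `Tm` with average displacement `(1/n^m) · e₀` -/

/-- the unit vector in direction 0 -/
def eps (d : ℕ) : Fin d → ℤ := fun i => if (i : ℕ) = 0 then 1 else 0

lemma eps_apply (hd : 0 < d) : eps d ⟨0, hd⟩ = 1 := by simp [eps]

lemma smul_eps_inj (hd : 0 < d) {a b : ℤ} (h : a • eps d = b • eps d) : a = b := by
  have := congrFun h ⟨0, hd⟩
  simpa [eps] using this

lemma add_smul_eps_cancel (hd : 0 < d) {v : Fin d → ℤ} {a b : ℤ}
    (h : v + a • eps d = v + b • eps d) : a = b :=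
  smul_eps_inj hd (add_left_cancel h)

lemma smul_eps_shift (v : Fin d → ℤ) (a b : ℤ) :
    (v + a • eps d) + b • eps d = v + (a + b) • eps d := by
  rw [add_assoc, ← add_smul]

lemma sub_eps_eq (v : Fin d → ℤ) : v - eps d = v + (-1 : ℤ) • eps d := by
  rw [neg_smul, one_smul, sub_eq_add_neg]

lemma add_eps_eq (v : Fin d → ℤ) : v + eps d = v + (1 : ℤ) • eps d := by rw [one_smul]

variable [NeZero n]

/-- forward map: if the `m` cells ahead are blank, copy cell `m` back and advance -/
noncomputable def TmF (m : ℕ) : Head d n k → Head d n k := fun p =>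
  if ∀ j : ℕ, j < m → p.1 (p.2.2 + (j : ℤ) • eps d) = 0 then
    ((fun u => if u = p.2.2 then p.1 (p.2.2 + (m : ℤ) • eps d)
               else if u = p.2.2 + (m : ℤ) • eps d then 0 else p.1 u),
     p.2.1, p.2.2 + eps d)
  else p

/-- backward map -/
noncomputable def TmG (m : ℕ) : Head d n k → Head d n k := fun p =>
  if ∀ j : ℕ, j < m → p.1 (p.2.2 + (j : ℤ) • eps d) = 0 then
    ((fun u => if u = p.2.2 - eps d then 0
               else if u = (p.2.2 - eps d) + (m : ℤ) • eps d then p.1 (p.2.2 - eps d) else p.1 u),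
     p.2.1, p.2.2 - eps d)
  else p

lemma TmGF (hd : 0 < d) (hm : 0 < m) : ∀ p : Head d n k, TmG (d:=d) (n:=n) (k:=k) m (TmF m p) = p := by
  classical
  rintro ⟨x, q, v⟩
  by_cases hc : ∀ j : ℕ, j < m → x (v + (j : ℤ) • eps d) = 0
  · rw [TmF, if_pos hc]
    dsimp only []
    set x' : (Fin d → ℤ) → Fin n := fun u => if u = v then x (v + (m : ℤ) • eps d)
        else if u = v + (m : ℤ) • eps d then 0 else x u with hx'
    have hc2 : ∀ j : ℕ, j < m → x' ((v + eps d) + (j : ℤ) • eps d) = 0 := by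
      intro j hj
      rw [add_eps_eq, smul_eps_shift]
      have h1 : v + (1 + (j : ℤ)) • eps d ≠ v := by
        intro h
        have := add_smul_eps_cancel hd (h.trans (by rw [zero_smul, add_zero]))
        omega
      rw [hx']
      dsimp only []
      rw [if_neg h1]
      by_cases hjm : (j : ℤ) + 1 = (m : ℤ)
      · rw [if_pos (by rw [add_comm 1 (j:ℤ), hjm])]
      · have h2 : v + (1 + (j : ℤ)) • eps d ≠ v + (m : ℤ) • eps d := by
          intro h
          have := add_smul_eps_cancel hd h
          omega
        rw [if_neg h2]
        have : (1 + (j : ℤ)) = ((j + 1 : ℕ) : ℤ) := by push_cast; ring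
        rw [this]
        exact hc (j + 1) (by omega)
    rw [TmG, if_pos hc2]
    dsimp only []
    have h0 : (v + eps d) - eps d = v := add_sub_cancel_right v (eps d)
    rw [h0]
    refine Prod.ext ?_ (Prod.ext rfl rfl)
    funext u
    dsimp only []
    by_cases h1 : u = v
    · rw [if_pos h1, h1]
      have h3 := hc 0 hm
      rw [Nat.cast_zero, zero_smul, add_zero] at h3
      exact h3.symm
    · rw [if_neg h1]
      by_cases h2 : u = v + (m : ℤ) • eps d
      · rw [if_pos h2, hx']
        dsimp only []
        rw [if_pos rfl, h2]
      · rw [if_neg h2, hx']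
        dsimp only []
        rw [if_neg h1, if_neg h2]
  · rw [TmF, if_neg hc, TmG, if_neg hc]

lemma TmFG (hd : 0 < d) (hm : 0 < m) : ∀ p : Head d n k, TmF (d:=d) (n:=n) (k:=k) m (TmG m p) = p := by
  classical
  rintro ⟨y, q, w⟩
  by_cases hc : ∀ j : ℕ, j < m → y (w + (j : ℤ) • eps d) = 0
  · rw [TmG, if_pos hc]
    dsimp only []
    set y'' : (Fin d → ℤ) → Fin n := fun u => if u = w - eps d then 0
        else if u = (w - eps d) + (m : ℤ) • eps d then y (w - eps d) else y u with hy''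
    have hc2 : ∀ j : ℕ, j < m → y'' ((w - eps d) + (j : ℤ) • eps d) = 0 := by
      intro j hj
      rw [hy'']
      dsimp only []
      by_cases hj0 : j = 0
      · subst hj0
        rw [if_pos (by rw [Nat.cast_zero, zero_smul, add_zero])]
      · have h1 : (w - eps d) + (j : ℤ) • eps d ≠ w - eps d := by
          intro h
          have : (w - eps d) + (j : ℤ) • eps d = (w - eps d) + (0 : ℤ) • eps d := by
            rw [h, zero_smul, add_zero]
          have := add_smul_eps_cancel hd this
          omega
        have h2 : (w - eps d) + (j : ℤ) • eps d ≠ (w - eps d) + (m : ℤ) • eps d := by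
          intro h
          have := add_smul_eps_cancel hd h
          omega
        rw [if_neg h1, if_neg h2]
        have harg : (w - eps d) + (j : ℤ) • eps d = w + ((j - 1 : ℕ) : ℤ) • eps d := by
          rw [sub_eps_eq, smul_eps_shift]
          congr 1
          congr 1
          have : ((j - 1 : ℕ) : ℤ) = (j : ℤ) - 1 := by
            have : 1 ≤ j := Nat.one_le_iff_ne_zero.mpr hj0
            push_cast [this]
            ring
          rw [this]
          ring
        rw [harg]
        exact hc (j - 1) (by omega)
    rw [TmF, if_pos hc2]
    dsimp only []
    have h0 : (w - eps d) + eps d = w := sub_add_cancel w (eps d)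
    rw [h0]
    refine Prod.ext ?_ (Prod.ext rfl rfl)
    funext u
    dsimp only []
    by_cases h1 : u = w - eps d
    · rw [if_pos h1, hy'']
      dsimp only []
      have hne : (w - eps d) + (m : ℤ) • eps d ≠ w - eps d := by
        intro h
        have : (w - eps d) + (m : ℤ) • eps d = (w - eps d) + (0 : ℤ) • eps d := by
          rw [h, zero_smul, add_zero]
        have := add_smul_eps_cancel hd this
        omega
      rw [if_neg hne, if_pos rfl, h1]
    · rw [if_neg h1]
      by_cases h2 : u = (w - eps d) + (m : ℤ) • eps d
      · rw [if_pos h2, h2]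
        have harg : (w - eps d) + (m : ℤ) • eps d = w + ((m - 1 : ℕ) : ℤ) • eps d := by
          rw [sub_eps_eq, smul_eps_shift]
          congr 1
          congr 1
          have : ((m - 1 : ℕ) : ℤ) = (m : ℤ) - 1 := by
            push_cast [hm]
            ring
          rw [this]
          ring
        rw [harg]
        exact (hc (m - 1) (by omega)).symm
      · rw [if_neg h2, hy'']
        dsimp only []
        rw [if_neg h1, if_neg h2]
  · rw [TmG, if_neg hc, TmF, if_neg hc]

/-- the machine as a permutation -/
noncomputable def Tm (m : ℕ) (hd : 0 < d) (hm : 0 < m) :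
    Equiv.Perm (Head d n k) :=
  { toFun := TmF m
    invFun := TmG m
    left_inv := TmGF hd hm
    right_inv := TmFG hd hm }

/-! ### Witnesses for `Tm` -/

variable (d n k) in
noncomputable def FiTm (m : ℕ) : Finset (Fin d → ℤ) :=
  (Finset.range (m+1)).image (fun j : ℕ => ((j : ℤ) • eps d))

variable (d) in
noncomputable def FoTm (m : ℕ) : Finset (Fin d → ℤ) :=
  {(0 : Fin d → ℤ), (m : ℤ) • eps d}

variable (d n k) in
noncomputable def fTm (m : ℕ) :
    ((Fin d → ℤ) → Fin n) × Fin k → ((Fin d → ℤ) → Fin n) × Fin k × (Fin d → ℤ) := fun xq =>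
  if ∀ j : ℕ, j < m → xq.1 ((j : ℤ) • eps d) = 0 then
    ((fun w => if w = 0 then xq.1 ((m : ℤ) • eps d) else 0), xq.2, eps d)
  else ((fun w => if w ∈ FoTm d m then xq.1 w else 0), xq.2, (0 : Fin d → ℤ))

variable (d) in
noncomputable def FoTm2 (m : ℕ) : Finset (Fin d → ℤ) :=
  {-(eps d), (m : ℤ) • eps d - eps d}

variable (d n k) in
noncomputable def fTm2 (m : ℕ) :
    ((Fin d → ℤ) → Fin n) × Fin k → ((Fin d → ℤ) → Fin n) × Fin k × (Fin d → ℤ) := fun xq =>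
  if ∀ j : ℕ, j < m → xq.1 ((j : ℤ) • eps d) = 0 then
    ((fun w => if w = -(eps d) then 0
        else if w = (m : ℤ) • eps d - eps d then xq.1 (-(eps d)) else 0), xq.2, -(eps d))
  else ((fun w => if w ∈ FoTm2 d m then xq.1 w else 0), xq.2, (0 : Fin d → ℤ))

lemma mem_FiTm {m : ℕ} {a : Fin d → ℤ} :
    a ∈ FiTm d m ↔ ∃ j : ℕ, j ≤ m ∧ a = (j : ℤ) • eps d := by
  simp only [FiTm, Finset.mem_image, Finset.mem_range, Nat.lt_succ_iff]
  constructor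
  · rintro ⟨j, hj, rfl⟩; exact ⟨j, hj, rfl⟩
  · rintro ⟨j, hj, rfl⟩; exact ⟨j, hj, rfl⟩

lemma mem_FiTm_of_le {m j : ℕ} (hj : j ≤ m) : ((j : ℤ) • eps d) ∈ FiTm d m :=
  mem_FiTm.mpr ⟨j, hj, rfl⟩

lemma loc_fTm (hd : 0 < d) (m : ℕ) : Loc (d := d) (n := n) (k := k) (FiTm d m) (fTm d n k m) := by
  classical
  intro x y q hagr
  have hcells : ∀ j : ℕ, j ≤ m → x ((j : ℤ) • eps d) = y ((j : ℤ) • eps d) :=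
    fun j hj => hagr _ (mem_FiTm_of_le hj)
  have hiff : (∀ j : ℕ, j < m → x ((j : ℤ) • eps d) = 0)
      ↔ (∀ j : ℕ, j < m → y ((j : ℤ) • eps d) = 0) := by
    constructor
    · intro h j hj; rw [← hcells j (le_of_lt hj)]; exact h j hj
    · intro h j hj; rw [hcells j (le_of_lt hj)]; exact h j hj
  rw [fTm, fTm]
  by_cases hC : ∀ j : ℕ, j < m → x ((j : ℤ) • eps d) = 0
  · rw [if_pos hC, if_pos (hiff.mp hC)]
    refine Prod.ext ?_ rfl
    funext w
    dsimp only []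
    by_cases hw : w = 0
    · rw [if_pos hw, if_pos hw, hcells m le_rfl]
    · rw [if_neg hw, if_neg hw]
  · rw [if_neg hC, if_neg (fun h => hC (hiff.mpr h))]
    refine Prod.ext ?_ rfl
    funext w
    dsimp only []
    by_cases hw : w ∈ FoTm d m
    · rw [if_pos hw, if_pos hw]
      rcases Finset.mem_insert.mp hw with h0 | hm'
      · subst h0
        have := hcells 0 (Nat.zero_le m)
        rwa [Nat.cast_zero, zero_smul] at this
      · rw [Finset.mem_singleton] at hm'
        subst hm'
        exact hcells m le_rfl
    · rw [if_neg hw, if_neg hw]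

lemma shiftC_pt (x : (Fin d → ℤ) → Fin n) (v a : Fin d → ℤ) :
    shiftC (-v) x a = x (v + a) := by
  show x (a - -v) = x (v + a)
  rw [sub_neg_eq_add, add_comm]

lemma rule_fTm (hd : 0 < d) (hm : 0 < m) :
    Rule (TmF (d := d) (n := n) (k := k) m) (FoTm d m) (fTm d n k m) := by
  classical
  intro x q v
  have hpt : ∀ b : Fin d → ℤ, shiftC (-v) x b = x (v + b) := shiftC_pt x v
  have hiff : (∀ j : ℕ, j < m → x (v + (j : ℤ) • eps d) = 0)
      ↔ (∀ j : ℕ, j < m → shiftC (-v) x ((j : ℤ) • eps d) = 0) := by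
    constructor
    · intro h j hj; rw [hpt]; exact h j hj
    · intro h j hj; rw [← hpt]; exact h j hj
  have hmz : ((m : ℤ) • eps d) ≠ 0 := by
    intro h
    have h' : (m : ℤ) • eps d = (0 : ℤ) • eps d := by rw [h, zero_smul]
    have := smul_eps_inj hd h'
    omega
  rw [TmF]
  by_cases hC : ∀ j : ℕ, j < m → x (v + (j : ℤ) • eps d) = 0
  · rw [if_pos hC]
    have hC' := hiff.mp hC
    have hfeq : fTm d n k m (shiftC (-v) x, q)
        = ((fun w => if w = 0 then shiftC (-v) x ((m : ℤ) • eps d) else 0), q, eps d) := by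
      show (if ∀ j : ℕ, j < m → shiftC (-v) x ((j : ℤ) • eps d) = 0 then
          ((fun w => if w = 0 then shiftC (-v) x ((m : ℤ) • eps d) else 0), q, eps d)
        else ((fun w => if w ∈ FoTm d m then shiftC (-v) x w else 0), q, (0 : Fin d → ℤ))) = _
      rw [if_pos hC']
    refine Prod.ext ?_ (Prod.ext ?_ ?_)
    · funext u
      show (if u = v then x (v + (m : ℤ) • eps d)
          else if u = v + (m : ℤ) • eps d then 0 else x u) =
        if u - v ∈ FoTm d m then (fTm d n k m (shiftC (-v) x, q)).1 (u - v) else x u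
      rw [hfeq]
      dsimp only []
      by_cases h1 : u = v
      · have hin : u - v ∈ FoTm d m := by
          rw [h1, sub_self]; exact Finset.mem_insert_self _ _
        rw [if_pos h1, if_pos hin, if_pos (by rw [h1, sub_self]), hpt]
      · rw [if_neg h1]
        by_cases h2 : u = v + (m : ℤ) • eps d
        · have hin : u - v ∈ FoTm d m := by
            rw [h2, add_sub_cancel_left]
            exact Finset.mem_insert.mpr (Or.inr (Finset.mem_singleton_self _))
          have hnz : u - v ≠ 0 := by
            rw [h2, add_sub_cancel_left]; exact hmz
          rw [if_pos h2, if_pos hin, if_neg hnz]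
        · have hnin : u - v ∉ FoTm d m := by
            intro hin
            rcases Finset.mem_insert.mp hin with h0 | hm'
            · exact h1 (by rw [← sub_eq_zero]; exact h0)
            · rw [Finset.mem_singleton] at hm'
              apply h2
              have h3 := sub_eq_iff_eq_add.mp hm'
              rw [h3, add_comm]
          rw [if_neg h2, if_neg hnin]
    · show q = (fTm d n k m (shiftC (-v) x, q)).2.1
      rw [hfeq]
    · show v + eps d = v + (fTm d n k m (shiftC (-v) x, q)).2.2
      rw [hfeq]
  · rw [if_neg hC]
    have hC' : ¬ ∀ j : ℕ, j < m → shiftC (-v) x ((j : ℤ) • eps d) = 0 := fun h => hC (hiff.mpr h)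
    have hfeq : fTm d n k m (shiftC (-v) x, q)
        = ((fun w => if w ∈ FoTm d m then shiftC (-v) x w else 0), q, (0 : Fin d → ℤ)) := by
      show (if ∀ j : ℕ, j < m → shiftC (-v) x ((j : ℤ) • eps d) = 0 then
          ((fun w => if w = 0 then shiftC (-v) x ((m : ℤ) • eps d) else 0), q, eps d)
        else ((fun w => if w ∈ FoTm d m then shiftC (-v) x w else 0), q, (0 : Fin d → ℤ))) = _
      rw [if_neg hC']
    refine Prod.ext ?_ (Prod.ext ?_ ?_)
    · funext u
      show x u = if u - v ∈ FoTm d m then (fTm d n k m (shiftC (-v) x, q)).1 (u - v) else x u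
      rw [hfeq]
      dsimp only []
      by_cases hin : u - v ∈ FoTm d m
      · rw [if_pos hin, if_pos hin, hpt]
        congr 1
        abel
      · rw [if_neg hin]
    · show q = (fTm d n k m (shiftC (-v) x, q)).2.1
      rw [hfeq]
    · show v = v + (fTm d n k m (shiftC (-v) x, q)).2.2
      rw [hfeq]
      dsimp only []
      rw [add_zero]

lemma loc_fTm2 (hd : 0 < d) (m : ℕ) :
    Loc (d := d) (n := n) (k := k) (FiTm d m ∪ FoTm2 d m) (fTm2 d n k m) := by
  classical
  intro x y q hagr
  have hcells : ∀ j : ℕ, j ≤ m → x ((j : ℤ) • eps d) = y ((j : ℤ) • eps d) :=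
    fun j hj => hagr _ (Finset.mem_union_left _ (mem_FiTm_of_le hj))
  have hneg : x (-(eps d)) = y (-(eps d)) :=
    hagr _ (Finset.mem_union_right _ (Finset.mem_insert_self _ _))
  have hiff : (∀ j : ℕ, j < m → x ((j : ℤ) • eps d) = 0)
      ↔ (∀ j : ℕ, j < m → y ((j : ℤ) • eps d) = 0) := by
    constructor
    · intro h j hj; rw [← hcells j (le_of_lt hj)]; exact h j hj
    · intro h j hj; rw [hcells j (le_of_lt hj)]; exact h j hj
  rw [fTm2, fTm2]
  by_cases hC : ∀ j : ℕ, j < m → x ((j : ℤ) • eps d) = 0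
  · rw [if_pos hC, if_pos (hiff.mp hC)]
    refine Prod.ext ?_ rfl
    funext w
    dsimp only []
    by_cases hw : w = -(eps d)
    · rw [if_pos hw, if_pos hw]
    · rw [if_neg hw, if_neg hw]
      by_cases hw2 : w = (m : ℤ) • eps d - eps d
      · rw [if_pos hw2, if_pos hw2, hneg]
      · rw [if_neg hw2, if_neg hw2]
  · rw [if_neg hC, if_neg (fun h => hC (hiff.mpr h))]
    refine Prod.ext ?_ rfl
    funext w
    dsimp only []
    by_cases hw : w ∈ FoTm2 d m
    · rw [if_pos hw, if_pos hw]
      rcases Finset.mem_insert.mp hw with h0 | hm'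
      · subst h0; exact hneg
      · rw [Finset.mem_singleton] at hm'
        subst hm'
        exact hagr _ (Finset.mem_union_right _
          (Finset.mem_insert.mpr (Or.inr (Finset.mem_singleton_self _))))
    · rw [if_neg hw, if_neg hw]

lemma rule_fTm2 (hd : 0 < d) (hm : 0 < m) :
    Rule (TmG (d := d) (n := n) (k := k) m) (FoTm2 d m) (fTm2 d n k m) := by
  classical
  intro x q w
  have hpt : ∀ b : Fin d → ℤ, shiftC (-w) x b = x (w + b) := shiftC_pt x w
  have hiff : (∀ j : ℕ, j < m → x (w + (j : ℤ) • eps d) = 0)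
      ↔ (∀ j : ℕ, j < m → shiftC (-w) x ((j : ℤ) • eps d) = 0) := by
    constructor
    · intro h j hj; rw [hpt]; exact h j hj
    · intro h j hj; rw [← hpt]; exact h j hj
  have hmz : ((m : ℤ) • eps d) ≠ 0 := by
    intro h
    have h' : (m : ℤ) • eps d = (0 : ℤ) • eps d := by rw [h, zero_smul]
    have := smul_eps_inj hd h'
    omega
  have e3 : (m : ℤ) • eps d - eps d ≠ -(eps d) := by
    intro h
    apply hmz
    have := congrArg (fun t => t + eps d) h
    simpa using this
  rw [TmG]
  by_cases hC : ∀ j : ℕ, j < m → x (w + (j : ℤ) • eps d) = 0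
  · rw [if_pos hC]
    have hC' := hiff.mp hC
    have hfeq : fTm2 d n k m (shiftC (-w) x, q)
        = ((fun p => if p = -(eps d) then 0
            else if p = (m : ℤ) • eps d - eps d then shiftC (-w) x (-(eps d)) else 0),
           q, -(eps d)) := by
      show (if ∀ j : ℕ, j < m → shiftC (-w) x ((j : ℤ) • eps d) = 0 then
          ((fun p => if p = -(eps d) then 0
            else if p = (m : ℤ) • eps d - eps d then shiftC (-w) x (-(eps d)) else 0),
           q, -(eps d))
        else ((fun p => if p ∈ FoTm2 d m then shiftC (-w) x p else 0), q, (0 : Fin d → ℤ))) = _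
      rw [if_pos hC']
    have hxneg : shiftC (-w) x (-(eps d)) = x (w - eps d) := by
      rw [hpt, ← sub_eq_add_neg]
    refine Prod.ext ?_ (Prod.ext ?_ ?_)
    · funext u
      show (if u = w - eps d then 0
          else if u = (w - eps d) + (m : ℤ) • eps d then x (w - eps d) else x u) =
        if u - w ∈ FoTm2 d m then (fTm2 d n k m (shiftC (-w) x, q)).1 (u - w) else x u
      rw [hfeq]
      dsimp only []
      by_cases h1 : u = w - eps d
      · have hin : u - w ∈ FoTm2 d m := by
          rw [h1, show w - eps d - w = -(eps d) from by abel]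
          exact Finset.mem_insert_self _ _
        rw [if_pos h1, if_pos hin,
          if_pos (by rw [h1]; show w - eps d - w = -(eps d); abel)]
      · rw [if_neg h1]
        by_cases h2 : u = (w - eps d) + (m : ℤ) • eps d
        · have hsub : u - w = (m : ℤ) • eps d - eps d := by rw [h2]; abel
          have hin : u - w ∈ FoTm2 d m := by
            rw [hsub]
            exact Finset.mem_insert.mpr (Or.inr (Finset.mem_singleton_self _))
          have hne : u - w ≠ -(eps d) := by rw [hsub]; exact e3
          rw [if_pos h2, if_pos hin, if_neg hne, if_pos hsub, hxneg]
        · have hnin : u - w ∉ FoTm2 d m := by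
            intro hin
            rcases Finset.mem_insert.mp hin with h0 | hm'
            · apply h1
              have h3 := sub_eq_iff_eq_add.mp h0
              rw [h3]; abel
            · rw [Finset.mem_singleton] at hm'
              apply h2
              have h3 := sub_eq_iff_eq_add.mp hm'
              rw [h3]; abel
          rw [if_neg h2, if_neg hnin]
    · show q = (fTm2 d n k m (shiftC (-w) x, q)).2.1
      rw [hfeq]
    · show w - eps d = w + (fTm2 d n k m (shiftC (-w) x, q)).2.2
      rw [hfeq]
      dsimp only []
      rw [← sub_eq_add_neg]
  · rw [if_neg hC]
    have hC' : ¬ ∀ j : ℕ, j < m → shiftC (-w) x ((j : ℤ) • eps d) = 0 := fun h => hC (hiff.mpr h)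
    have hfeq : fTm2 d n k m (shiftC (-w) x, q)
        = ((fun p => if p ∈ FoTm2 d m then shiftC (-w) x p else 0), q, (0 : Fin d → ℤ)) := by
      show (if ∀ j : ℕ, j < m → shiftC (-w) x ((j : ℤ) • eps d) = 0 then
          ((fun p => if p = -(eps d) then 0
            else if p = (m : ℤ) • eps d - eps d then shiftC (-w) x (-(eps d)) else 0),
           q, -(eps d))
        else ((fun p => if p ∈ FoTm2 d m then shiftC (-w) x p else 0), q, (0 : Fin d → ℤ))) = _
      rw [if_neg hC']
    refine Prod.ext ?_ (Prod.ext ?_ ?_)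
    · funext u
      show x u = if u - w ∈ FoTm2 d m then (fTm2 d n k m (shiftC (-w) x, q)).1 (u - w) else x u
      rw [hfeq]
      dsimp only []
      by_cases hin : u - w ∈ FoTm2 d m
      · rw [if_pos hin, if_pos hin, hpt]
        congr 1
        abel
      · rw [if_neg hin]
    · show q = (fTm2 d n k m (shiftC (-w) x, q)).2.1
      rw [hfeq]
    · show w = w + (fTm2 d n k m (shiftC (-w) x, q)).2.2
      rw [hfeq]
      dsimp only []
      rw [add_zero]

lemma Tm_mem_RTMset (hd : 0 < d) (hm : 0 < m) :
    Tm (d := d) (n := n) (k := k) m hd hm ∈ RTMset d n k := by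
  constructor
  · exact ⟨FiTm d m, FoTm d m, fTm d n k m, loc_fTm hd m, rule_fTm hd hm⟩
  · exact ⟨FiTm d m ∪ FoTm2 d m, FoTm2 d m, fTm2 d n k m, loc_fTm2 hd m, rule_fTm2 hd hm⟩

lemma card_FiTm (hd : 0 < d) (m : ℕ) : (FiTm d m).card = m + 1 := by
  rw [FiTm, Finset.card_image_of_injective, Finset.card_range]
  intro a b hab
  have := smul_eps_inj hd hab
  exact_mod_cast this

lemma Sfi_Tm (hd : 0 < d) (hm : 0 < m) :
    (∑ s : (a : FiTm d m) → Fin n, ∑ q : Fin k,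
      (fTm d n k m (pext (FiTm d m) s, q)).2.2) = (k * n) • eps d := by
  classical
  have hmemm : ((m : ℤ) • eps d) ∈ FiTm d m := mem_FiTm_of_le le_rfl
  set C : ((a : FiTm d m) → Fin n) → Prop :=
    fun s => ∀ j : ℕ, j < m → pext (FiTm d m) s ((j : ℤ) • eps d) = 0 with hCdef
  have hdisp : ∀ (s : (a : FiTm d m) → Fin n) (q : Fin k),
      (fTm d n k m (pext (FiTm d m) s, q)).2.2 = if C s then eps d else 0 := by
    intro s q
    by_cases h : C s
    · show (if ∀ j : ℕ, j < m → pext (FiTm d m) s ((j : ℤ) • eps d) = 0 then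
        ((fun w => if w = 0 then pext (FiTm d m) s ((m : ℤ) • eps d) else 0), q, eps d)
        else ((fun w => if w ∈ FoTm d m then pext (FiTm d m) s w else 0), q,
          (0 : Fin d → ℤ))).2.2 = _
      rw [if_pos h, if_pos h]
    · show (if ∀ j : ℕ, j < m → pext (FiTm d m) s ((j : ℤ) • eps d) = 0 then
        ((fun w => if w = 0 then pext (FiTm d m) s ((m : ℤ) • eps d) else 0), q, eps d)
        else ((fun w => if w ∈ FoTm d m then pext (FiTm d m) s w else 0), q,
          (0 : Fin d → ℤ))).2.2 = _
      rw [if_neg h, if_neg h]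
  have hcount : (Finset.univ.filter C).card = n := by
    rw [← Fintype.card_subtype]
    have E : {s : (a : FiTm d m) → Fin n // C s} ≃ Fin n := by
      refine ⟨fun s => s.1 ⟨(m : ℤ) • eps d, hmemm⟩,
        fun c => ⟨fun a => if (a : Fin d → ℤ) = (m : ℤ) • eps d then c else 0, ?_⟩, ?_, ?_⟩
      · intro j hj
        have hjm : ((j : ℤ) • eps d) ∈ FiTm d m := mem_FiTm_of_le (le_of_lt hj)
        simp only [pext]
        rw [dif_pos hjm]
        rw [if_neg]
        intro hjeq
        have := smul_eps_inj hd hjeq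
        omega
      · rintro ⟨s, hs⟩
        apply Subtype.ext
        funext a
        obtain ⟨w, hw⟩ := a
        obtain ⟨j, hjle, rfl⟩ := mem_FiTm.mp hw
        dsimp only []
        by_cases hjm : ((j : ℤ) • eps d) = (m : ℤ) • eps d
        · rw [if_pos hjm]
          exact congrArg s (Subtype.ext hjm.symm)
        · rw [if_neg hjm]
          have hjlt : j < m := by
            rcases Nat.lt_or_ge j m with h | h
            · exact h
            · exfalso; apply hjm; congr 1; omega
          have h2 := hs j hjlt
          simp only [pext] at h2
          rw [dif_pos hw] at h2
          exact h2.symm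
      · intro c
        dsimp only []
        rw [if_pos rfl]
    rw [Fintype.card_congr E, Fintype.card_fin]
  calc ∑ s : (a : FiTm d m) → Fin n, ∑ q : Fin k, (fTm d n k m (pext (FiTm d m) s, q)).2.2
      = ∑ s : (a : FiTm d m) → Fin n, ∑ _q : Fin k, (if C s then eps d else 0) := by
        exact Finset.sum_congr rfl fun s _ => Finset.sum_congr rfl fun q _ => hdisp s q
    _ = ∑ s : (a : FiTm d m) → Fin n, k • (if C s then eps d else 0) := by
        apply Finset.sum_congr rfl
        intro s _
        rw [Finset.sum_const, Finset.card_univ, Fintype.card_fin]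
    _ = k • ∑ s : (a : FiTm d m) → Fin n, (if C s then eps d else 0) := by
        rw [Finset.smul_sum]
    _ = k • ((Finset.univ.filter C).card • eps d) := by
        rw [← Finset.sum_filter, Finset.sum_const]
    _ = (k * n) • eps d := by
        rw [hcount, smul_smul]

/-- eventual value of `alphaN` at `Tm` -/
lemma alphaN_Tm (hd : 0 < d) (hm : 0 < m) :
    ∀ᶠ N in atTop, alphaN N ⇑(Tm (d := d) (n := n) (k := k) m hd hm)
      = ((n : ℚ) ^ (m + 1) * k)⁻¹ • qv ((k * n) • eps d) := by
  have hstab := alphaN_stab (T := ⇑(Tm (d := d) (n := n) (k := k) m hd hm))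
    (loc_fTm hd m) (rule_fTm hd hm)
  filter_upwards [hstab] with N hN
  rw [hN, card_FiTm hd, Sfi_Tm hd hm]

end Core

end RTMNF

open RTMNF Filter in
/-- For `d ≥ 1`, `n ≥ 2`, `k ≥ 1`, the group `RTM(ℤ^d,n,k)` of
reversible moving-head Turing machines is not finitely generated: no finite subset
of `RTM(ℤ^d,n,k)` generates a subgroup containing all of `RTM(ℤ^d,n,k)`. -/
theorem RTM_not_finitelyGenerated
    (d n k : ℕ) (hd : 1 ≤ d) (hn : 2 ≤ n) (hk : 1 ≤ k) :
    ¬ ∃ S : Finset (Equiv.Perm (Head d n k)),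
        (S : Set (Equiv.Perm (Head d n k))) ⊆ RTMset d n k ∧
        ∀ e ∈ RTMset d n k, e ∈ Subgroup.closure (S : Set (Equiv.Perm (Head d n k))) := by
  classical
  haveI : NeZero n := ⟨by omega⟩
  rintro ⟨S, hSsub, hgen⟩
  -- each generator has an eventual average displacement
  have hval : ∀ s : Equiv.Perm (Head d n k), s ∈ S →
      ∃ a : Fin d → ℚ, ∀ᶠ N in atTop, alphaN N ⇑s = a := by
    intro s hs
    obtain ⟨⟨Fi, Fo, f, hf, hT⟩, -⟩ := hSsub hs
    exact ⟨_, alphaN_stab hf hT⟩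
  choose! v hv using hval
  obtain ⟨M, hMpos, hMdvd⟩ : ∃ M : ℕ, 0 < M ∧
      ∀ b ∈ S.image v, ∀ i : Fin d, (b i).den ∣ M := by
    refine ⟨∏ b ∈ S.image v, ∏ i : Fin d, (b i).den, ?_, ?_⟩
    · apply Finset.prod_pos
      intro b _
      apply Finset.prod_pos
      intro i _
      exact (b i).den_pos
    · intro b hb i
      exact dvd_trans (Finset.dvd_prod_of_mem (fun i => (b i).den) (Finset.mem_univ i))
        (Finset.dvd_prod_of_mem _ hb)
  -- denominator-boundedness predicate
  set Dm : (Fin d → ℚ) → Prop := fun a => ∀ i, ∃ z : ℤ, a i = (z : ℚ) / M with hDm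
  have hbase : ∀ s ∈ S, Dm (v s) := by
    intro s hs i
    have hden : ((v s) i).den ∣ M := hMdvd (v s) (Finset.mem_image_of_mem v hs) i
    obtain ⟨c, hc⟩ := hden
    refine ⟨((v s) i).num * c, ?_⟩
    have hc0 : (c : ℚ) ≠ 0 := by
      intro h
      have hcz : c = 0 := by exact_mod_cast h
      rw [hcz, mul_zero] at hc
      rw [hc] at hMpos
      exact lt_irrefl 0 hMpos
    have hden0 : (((v s) i).den : ℚ) ≠ 0 := by
      exact_mod_cast ((v s) i).den_nz
    rw [hc]
    push_cast
    rw [mul_div_mul_right _ _ hc0]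
    exact (Rat.num_div_den _).symm
  -- closure induction
  have key : ∀ e, e ∈ Subgroup.closure (S : Set (Equiv.Perm (Head d n k))) →
      e ∈ RTMset d n k ∧ ∃ a, Dm a ∧ ∀ᶠ N in atTop, alphaN N ⇑e = a := by
    intro e he
    refine Subgroup.closure_induction ?_ ?_ ?_ ?_ he
    · intro s hs
      exact ⟨hSsub hs, v s, hbase s hs, hv s hs⟩
    · refine ⟨RTMset_one, 0, fun i => ⟨0, by simp⟩, Filter.Eventually.of_forall ?_⟩
      intro N
      exact alphaN_one N
    · rintro x y hx hy ⟨hxR, a, haD, haE⟩ ⟨hyR, b, hbD, hbE⟩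
      refine ⟨RTMset_mul hxR hyR, a + b, ?_, ?_⟩
      · intro i
        obtain ⟨za, hza⟩ := haD i
        obtain ⟨zb, hzb⟩ := hbD i
        exact ⟨za + zb, by rw [Pi.add_apply, hza, hzb]; push_cast; rw [← add_div]⟩
      · filter_upwards [alphaN_mul hxR hyR, haE, hbE] with N h1 h2 h3
        rw [h1, h2, h3]
    · rintro x hx ⟨hxR, a, haD, haE⟩
      refine ⟨RTMset_inv hxR, -a, ?_, ?_⟩
      · intro i
        obtain ⟨za, hza⟩ := haD i
        exact ⟨-za, by rw [Pi.neg_apply, hza]; push_cast; rw [neg_div]⟩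
      · have hmul := alphaN_mul (RTMset_inv hxR) hxR
        filter_upwards [hmul, haE] with N h1 h2
        have hxe : x⁻¹ * x = 1 := inv_mul_cancel x
        rw [hxe] at h1
        rw [alphaN_one] at h1
        rw [h2] at h1
        funext i
        have := congrFun h1 i
        simp only [Pi.zero_apply, Pi.add_apply, Pi.neg_apply] at this ⊢
        linarith
  -- apply to the machine Tm with m := M
  have hd' : 0 < d := hd
  have hTmmem := Tm_mem_RTMset (d := d) (n := n) (k := k) (m := M) hd' hMpos
  obtain ⟨-, a, haD, haE⟩ := key _ (hgen _ hTmmem)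
  have hTmE := alphaN_Tm (d := d) (n := n) (k := k) (m := M) hd' hMpos
  obtain ⟨N, h1, h2⟩ := (haE.and hTmE).exists
  have hav : a = ((n : ℚ) ^ (M + 1) * k)⁻¹ • qv ((k * n) • eps d) := by rw [← h1, h2]
  -- extract coordinate 0
  obtain ⟨z, hz⟩ := haD ⟨0, hd'⟩
  have heps : ((k * n) • eps d) ⟨0, hd'⟩ = ((k * n : ℕ) : ℤ) := by
    rw [Pi.smul_apply, eps_apply hd']
    simp
  have hcoord : a ⟨0, hd'⟩ = ((n : ℚ) ^ (M + 1) * k)⁻¹ * (k * n) := by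
    rw [hav, Pi.smul_apply, smul_eq_mul]
    congr 1
    show ((((k * n) • eps d) ⟨0, hd'⟩ : ℤ) : ℚ) = _
    rw [heps]
    push_cast
    ring
  rw [hz] at hcoord
  -- derive z * n^M = M and contradict
  have hn0 : (n : ℚ) ≠ 0 := by
    have h' : n ≠ 0 := by omega
    exact_mod_cast h'
  have hk0 : (k : ℚ) ≠ 0 := by
    have h' : k ≠ 0 := by omega
    exact_mod_cast h'
  have hM0 : (M : ℚ) ≠ 0 := by
    have h' : M ≠ 0 := Nat.pos_iff_ne_zero.mp hMpos
    exact_mod_cast h'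
  have hpM0 : ((n : ℚ)) ^ M ≠ 0 := pow_ne_zero _ hn0
  have hsimp : ((n : ℚ) ^ (M + 1) * k)⁻¹ * ((k : ℚ) * n) = 1 / (n : ℚ) ^ M := by
    rw [pow_succ]
    field_simp
  rw [hsimp, div_eq_div_iff hM0 hpM0] at hcoord
  rw [one_mul] at hcoord
  have hZ : z * (n : ℤ) ^ M = (M : ℤ) := by exact_mod_cast hcoord
  have hnp : (0 : ℤ) < (n : ℤ) ^ M := pow_pos (by omega) M
  have hMz : (0 : ℤ) < (M : ℤ) := by exact_mod_cast hMpos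
  have hz1 : 1 ≤ z := by
    by_contra h
    push_neg at h
    have hz0 : z ≤ 0 := by omega
    have hle : z * (n : ℤ) ^ M ≤ 0 := mul_nonpos_iff.mpr (Or.inr ⟨hz0, le_of_lt hnp⟩)
    rw [hZ] at hle
    omega
  have hge : (n : ℤ) ^ M ≤ z * (n : ℤ) ^ M := le_mul_of_one_le_left (le_of_lt hnp) hz1
  rw [hZ] at hge
  have hpow : (M : ℤ) < (n : ℤ) ^ M := by
    have : M < n ^ M := Nat.lt_pow_self (show 1 < n by omega)
    exact_mod_cast this
  omega
end

section
/- For all d ≥ 1, n ≥ 2 and k ≥ 1, the group RFA(ℤ^d,n,k) of reversible finite-state automata is not finitely generated. -/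
set_option linter.unusedSectionVars false

/-- `RFA(ℤ^d,n,k)`: reversible machines that never change the tape. -/
def RFAset (d n k : ℕ) : Set (Equiv.Perm (Head d n k)) :=
  {e | e ∈ RTMset d n k ∧ ∀ (x : (Fin d → ℤ) → Fin n) (q : Fin k) (v : Fin d → ℤ),
    (e (x, q, v)).1 = x}

namespace NotFG

open Equiv

variable {d n k : ℕ}

/-- all coordinates divisible by `m` -/
def per (m : ℕ) (u : Fin d → ℤ) : Prop := ∀ i, (m : ℤ) ∣ u i

instance (m : ℕ) (u : Fin d → ℤ) : Decidable (per m u) :=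
  inferInstanceAs (Decidable (∀ i, (m:ℤ) ∣ u i))

lemma per_zero (m : ℕ) : per m (0 : Fin d → ℤ) := fun i => ⟨0, by simp⟩

lemma per_add_iff {m : ℕ} {z w : Fin d → ℤ} (hw : per m w) : per m (z + w) ↔ per m z := by
  constructor
  · intro h i
    have := (h i).sub (hw i)
    simpa using this
  · intro h i
    exact (h i).add (hw i)

/-- the `m`-periodic reference tape: `1` on `mℤ^d`, `0` elsewhere -/
def x0 (d n m : ℕ) [NeZero n] : (Fin d → ℤ) → Fin n := fun u => if per m u then 1 else 0

/-- single `1` at the origin -/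
def xdel (d n : ℕ) [NeZero n] : (Fin d → ℤ) → Fin n := fun u => if u = 0 then 1 else 0

/-- all-zero tape -/
def xzero (d n : ℕ) [NeZero n] : (Fin d → ℤ) → Fin n := fun _ => 0

lemma shiftC_apply {A : Type*} (v : Fin d → ℤ) (x : (Fin d → ℤ) → A) (u : Fin d → ℤ) :
    shiftC v x u = x (u - v) := rfl

lemma shiftC_neg_apply {A : Type*} (v : Fin d → ℤ) (x : (Fin d → ℤ) → A) (u : Fin d → ℤ) :
    shiftC (-v) x u = x (u + v) := by simp [shiftC, sub_neg_eq_add]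

/-- translate the head -/
def tr [NeZero n] (w : Fin d → ℤ) (p : Head d n k) : Head d n k := (p.1, p.2.1, p.2.2 + w)

variable [NeZero n]

/-- the subgroup of permutations preserving the fiber over `x0` and commuting with
period-`m` translations there -/
def Hsub (d n k : ℕ) [NeZero n] (m : ℕ) : Subgroup (Perm (Head d n k)) where
  carrier := {e | (∀ q v, (e (x0 d n m, q, v)).1 = x0 d n m)
     ∧ (∀ q v, (e.symm (x0 d n m, q, v)).1 = x0 d n m)
     ∧ (∀ (q : Fin k) (v w : Fin d → ℤ), per m w →
         e (x0 d n m, q, v + w) = tr w (e (x0 d n m, q, v)))}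
  one_mem' := by
    refine ⟨fun q v => rfl, fun q v => rfl, fun q v w _ => rfl⟩
  mul_mem' := by
    rintro a b ⟨ha1, ha2, ha3⟩ ⟨hb1, hb2, hb3⟩
    have hbp : ∀ q v, b (x0 d n m, q, v)
        = (x0 d n m, (b (x0 d n m, q, v)).2.1, (b (x0 d n m, q, v)).2.2) :=
      fun q v => Prod.ext (hb1 q v) rfl
    refine ⟨?_, ?_, ?_⟩
    · intro q v
      rw [Perm.mul_apply, hbp]
      exact ha1 _ _
    · intro q v
      show (b.symm (a.symm _)).1 = _
      have hap : a.symm (x0 d n m, q, v)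
          = (x0 d n m, (a.symm (x0 d n m, q, v)).2.1, (a.symm (x0 d n m, q, v)).2.2) :=
        Prod.ext (ha2 q v) rfl
      rw [hap]
      exact hb2 _ _
    · intro q v w hw
      rw [Perm.mul_apply, Perm.mul_apply, hb3 q v w hw, hbp q v]
      exact ha3 _ _ _ hw
  inv_mem' := by
    rintro a ⟨ha1, ha2, ha3⟩
    have key : ∀ (q : Fin k) (v w : Fin d → ℤ), per m w →
        a.symm (x0 d n m, q, v + w) = tr w (a.symm (x0 d n m, q, v)) := by
      intro q v w hw
      have hp : a.symm (x0 d n m, q, v)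
          = (x0 d n m, (a.symm (x0 d n m, q, v)).2.1, (a.symm (x0 d n m, q, v)).2.2) :=
        Prod.ext (ha2 q v) rfl
      have h2 : a (tr w (a.symm (x0 d n m, q, v))) = (x0 d n m, q, v + w) := by
        rw [hp]
        show a (x0 d n m, _, _ + w) = _
        rw [ha3 _ _ _ hw]
        rw [← hp]
        simp [tr]
      calc a.symm (x0 d n m, q, v + w) = a.symm (a (tr w (a.symm (x0 d n m, q, v)))) := by rw [h2]
        _ = _ := by rw [Equiv.symm_apply_apply]
    exact ⟨ha2, fun q v => ha1 q v, key⟩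

lemma symm_tape {e : Perm (Head d n k)}
    (htape : ∀ x q v, (e (x, q, v)).1 = x) (p : Head d n k) :
    (e.symm p).1 = p.1 := by
  have h := htape (e.symm p).1 (e.symm p).2.1 (e.symm p).2.2
  simpa using h.symm

lemma mem_Hsub_of_RFA {e : Perm (Head d n k)} (he : e ∈ RFAset d n k) (m : ℕ) :
    e ∈ Hsub d n k m := by
  obtain ⟨⟨⟨Fi, Fo, f, hf, heq⟩, _⟩, htape⟩ := he
  refine ⟨fun q v => htape _ _ _, fun q v => symm_tape htape _, ?_⟩
  · intro q v w hw
    have hsh : shiftC (-(v+w)) (x0 d n m) = shiftC (-v) (x0 d n m) := by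
      funext u
      rw [shiftC_neg_apply, shiftC_neg_apply]
      show x0 d n m (u + (v + w)) = x0 d n m (u + v)
      unfold x0
      rw [← add_assoc]
      exact if_congr (per_add_iff hw) rfl rfl
    refine Prod.ext ?_ (Prod.ext ?_ ?_)
    · rw [htape, tr, htape]
    · show _ = (e (x0 d n m, q, v)).2.1
      rw [heq, heq]
      simp only [hsh]
    · show (e (x0 d n m, q, v + w)).2.2 = (e (x0 d n m, q, v)).2.2 + w
      rw [heq, heq]
      simp only [hsh]
      exact add_right_comm v w _
end NotFG

set_option linter.unusedSectionVars false

namespace NotFG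
open Equiv
variable {d n k : ℕ} [NeZero n]

def lft (m : ℕ) (vb : Fin d → ZMod m) : Fin d → ℤ := fun i => ((vb i).val : ℤ)

def pj (m : ℕ) (v : Fin d → ℤ) : Fin d → ZMod m := fun i => ((v i : ℤ) : ZMod m)

lemma pj_lft (m : ℕ) [NeZero m] (vb : Fin d → ZMod m) : pj m (lft m vb) = vb := by
  funext i
  simp [pj, lft, ZMod.natCast_val, ZMod.cast_id]

lemma per_of_pj_eq {m : ℕ} {v v' : Fin d → ℤ} (h : pj m v = pj m v') : per m (v' - v) := by
  intro i
  have := congrFun h i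
  simpa using (ZMod.intCast_eq_intCast_iff_dvd_sub (v i) (v' i) m).mp this

lemma pj_add (m : ℕ) (v w : Fin d → ℤ) : pj m (v + w) = pj m v + pj m w := by
  funext i; simp [pj]

lemma pj_eq_zero_of_per {m : ℕ} {w : Fin d → ℤ} (h : per m w) : pj m w = 0 := by
  funext i
  simpa [pj] using (ZMod.intCast_zmod_eq_zero_iff_dvd (w i) m).mpr (h i)

lemma Hsub_apply_of_pj_eq {m : ℕ} {e : Perm (Head d n k)} (he : e ∈ Hsub d n k m)
    (q : Fin k) (v v' : Fin d → ℤ) (h : pj m v = pj m v') :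
    e (x0 d n m, q, v') = (x0 d n m, (e (x0 d n m, q, v)).2.1,
      (e (x0 d n m, q, v)).2.2 + (v' - v)) := by
  have h3 := he.2.2 q v (v' - v) (per_of_pj_eq h)
  rw [add_sub_cancel] at h3
  rw [h3]
  exact Prod.ext (he.1 q v) rfl

def psiFun (m : ℕ) (e : Perm (Head d n k)) :
    (Fin k × (Fin d → ZMod m)) → (Fin k × (Fin d → ZMod m)) :=
  fun p => ((e (x0 d n m, p.1, lft m p.2)).2.1, pj m (e (x0 d n m, p.1, lft m p.2)).2.2)

lemma psiFun_comp {m : ℕ} [NeZero m] {a : Perm (Head d n k)} (ha : a ∈ Hsub d n k m)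
    {b : Perm (Head d n k)} (p : Fin k × (Fin d → ZMod m))
    (hb1 : ∀ q v, (b (x0 d n m, q, v)).1 = x0 d n m) :
    psiFun m a (psiFun m b p) = psiFun m (a * b) p := by
  obtain ⟨q, vb⟩ := p
  have hbp : b (x0 d n m, q, lft m vb) = (x0 d n m, (b (x0 d n m, q, lft m vb)).2.1,
      (b (x0 d n m, q, lft m vb)).2.2) := Prod.ext (hb1 _ _) rfl
  set B2 := (b (x0 d n m, q, lft m vb)).2.1
  set B3 := (b (x0 d n m, q, lft m vb)).2.2
  have hkey := Hsub_apply_of_pj_eq ha B2 B3 (lft m (pj m B3)) (pj_lft m (pj m B3)).symm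
  show ((a (x0 d n m, B2, lft m (pj m B3))).2.1,
      pj m (a (x0 d n m, B2, lft m (pj m B3))).2.2) = _
  rw [hkey]
  have hC : a (x0 d n m, B2, B3) = (a * b) (x0 d n m, q, lft m vb) := by
    rw [Perm.mul_apply, hbp]
  refine Prod.ext ?_ ?_
  · show (a (x0 d n m, B2, B3)).2.1 = _
    rw [hC]; rfl
  · show pj m ((a (x0 d n m, B2, B3)).2.2 + (lft m (pj m B3) - B3)) = _
    rw [pj_add, pj_eq_zero_of_per (per_of_pj_eq (pj_lft m (pj m B3)).symm), add_zero, hC]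
    rfl

lemma psiFun_inv {m : ℕ} [NeZero m] {e : Perm (Head d n k)} (he : e ∈ Hsub d n k m)
    (p : Fin k × (Fin d → ZMod m)) : psiFun m e⁻¹ (psiFun m e p) = p := by
  have hinv : e⁻¹ ∈ Hsub d n k m := (Hsub d n k m).inv_mem he
  have h := psiFun_comp hinv (b := e) p he.1
  rw [h, inv_mul_cancel]
  obtain ⟨q, vb⟩ := p
  show ((q : Fin k), pj m (lft m vb)) = (q, vb)
  rw [pj_lft]

/-- the finite quotient permutation -/
def psi (d n k m : ℕ) [NeZero n] [NeZero m] :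
    Hsub d n k m →* Perm (Fin k × (Fin d → ZMod m)) where
  toFun e := ⟨psiFun m e.1, psiFun m (e.1)⁻¹,
    fun p => psiFun_inv e.2 p,
    fun p => by
      have := psiFun_inv ((Hsub d n k m).inv_mem e.2) p
      simpa using this⟩
  map_one' := by
    refine Equiv.ext fun p => ?_
    obtain ⟨q, vb⟩ := p
    show ((q : Fin k), pj m (lft m vb)) = (q, vb)
    rw [pj_lft]
  map_mul' a b := by
    refine Equiv.ext fun p => ?_
    exact (psiFun_comp a.2 p b.2.1).symm

end NotFG
namespace NotFG
open Equiv
variable {d n k : ℕ} [NeZero n]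

/-- restriction of a tape-preserving permutation to the fiber over a fixed tape -/
def fiberPerm (x : (Fin d → ℤ) → Fin n) (e : Perm (Head d n k))
    (h1 : ∀ q v, (e (x, q, v)).1 = x) (h2 : ∀ q v, (e.symm (x, q, v)).1 = x) :
    Perm (Fin k × (Fin d → ℤ)) where
  toFun p := ((e (x, p.1, p.2)).2.1, (e (x, p.1, p.2)).2.2)
  invFun p := ((e.symm (x, p.1, p.2)).2.1, (e.symm (x, p.1, p.2)).2.2)
  left_inv p := by
    have hE : e (x, p.1, p.2) = (x, (e (x, p.1, p.2)).2.1, (e (x, p.1, p.2)).2.2) :=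
      Prod.ext (h1 _ _) rfl
    show ((e.symm (x, _, _)).2.1, (e.symm (x, _, _)).2.2) = p
    rw [← hE, Equiv.symm_apply_apply]
  right_inv p := by
    have hE : e.symm (x, p.1, p.2) = (x, (e.symm (x, p.1, p.2)).2.1, (e.symm (x, p.1, p.2)).2.2) :=
      Prod.ext (h2 _ _) rfl
    show ((e (x, _, _)).2.1, (e (x, _, _)).2.2) = p
    rw [← hE, Equiv.apply_symm_apply]

lemma fiberPerm_apply (x : (Fin d → ℤ) → Fin n) (e : Perm (Head d n k)) (h1 h2) (p) :
    fiberPerm x e h1 h2 p = ((e (x, p.1, p.2)).2.1, (e (x, p.1, p.2)).2.2) := rfl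

lemma units_pow_odd_eq_one {u : ℤˣ} {m : ℕ} (hm : Odd m) (h : u ^ m = 1) : u = 1 := by
  rcases Int.units_eq_one_or u with h1 | h1
  · exact h1
  · exfalso
    rw [h1, Odd.neg_one_pow hm] at h
    exact (by decide : ¬ ((-1 : ℤˣ) = 1)) h

lemma units_pow_odd {u : ℤˣ} {m : ℕ} (hm : Odd m) : u ^ m = u := by
  rcases Int.units_eq_one_or u with h1 | h1 <;> rw [h1] <;> simp [Odd.neg_one_pow hm]

lemma sign_eq_one_of_odd_pow {X : Type*} [Fintype X] [DecidableEq X] {g : Perm X} {m : ℕ}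
    (hm : Odd m) (h : g ^ m = 1) : Perm.sign g = 1 :=
  units_pow_odd_eq_one hm (by rw [← map_pow, h, map_one])

lemma addRight_pow {G : Type*} [AddGroup G] (c : G) (j : ℕ) (x : G) :
    ((Equiv.addRight c) ^ j) x = x + j • c := by
  induction j generalizing x with
  | zero => simp
  | succ i ih =>
    rw [pow_succ, Perm.mul_apply]
    show ((Equiv.addRight c) ^ i) (x + c) = _
    rw [ih, succ_nsmul', add_assoc]

lemma sign_addRight_odd {m : ℕ} [NeZero m] (hm : Odd m) (c : Fin d → ZMod m) :
    Perm.sign (Equiv.addRight c) = 1 := by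
  refine sign_eq_one_of_odd_pow hm ?_
  refine Equiv.ext fun x => ?_
  rw [addRight_pow]
  show x + m • c = x
  have : m • c = 0 := by
    funext i
    show m • (c i) = 0
    rw [nsmul_eq_mul, ZMod.natCast_self, zero_mul]
  rw [this, add_zero]

section Box

variable (L : ℕ)

def dec (a : Fin (2 * L + 1)) : ℤ := (a : ℤ) - L

def enc (z : ℤ) : Fin (2 * L + 1) := ⟨(z + L).toNat % (2 * L + 1), Nat.mod_lt _ (by omega)⟩

lemma enc_dec (a : Fin (2 * L + 1)) : enc L (dec L a) = a := by
  have ha := a.isLt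
  apply Fin.ext
  show ((a : ℤ) - L + L).toNat % (2 * L + 1) = a.val
  rw [sub_add_cancel]
  have h2 : ((a : ℤ)).toNat = a.val := by simp
  rw [h2]
  exact Nat.mod_eq_of_lt ha

lemma dec_enc {z : ℤ} (h : z.natAbs ≤ L) : dec L (enc L z) = z := by
  have h1 : (0:ℤ) ≤ z + L := by omega
  have h2 : (z + L).toNat < 2 * L + 1 := by omega
  show (((z + L).toNat % (2 * L + 1) : ℕ) : ℤ) - L = z
  rw [Nat.mod_eq_of_lt h2]
  omega

lemma dec_bound (a : Fin (2 * L + 1)) : (dec L a).natAbs ≤ L := by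
  have := a.isLt
  unfold dec
  omega

def jmap (p : Fin k × (Fin d → Fin (2 * L + 1))) : Fin k × (Fin d → ℤ) :=
  (p.1, fun i => dec L (p.2 i))

/-- transport a finitely supported permutation of `Fin k × ℤ^d` to the finite box -/
def boxPerm (t : Perm (Fin k × (Fin d → ℤ)))
    (hs : ∀ p, t p ≠ p → ∀ i, (p.2 i).natAbs ≤ L) :
    Perm (Fin k × (Fin d → Fin (2 * L + 1))) where
  toFun p := ((t (jmap L p)).1, fun i => enc L ((t (jmap L p)).2 i))
  invFun p := ((t.symm (jmap L p)).1, fun i => enc L ((t.symm (jmap L p)).2 i))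
  left_inv p := by
    have hb : ∀ i, ((t (jmap L p)).2 i).natAbs ≤ L := by
      by_cases hmove : t (jmap L p) = jmap L p
      · rw [hmove]; exact fun i => dec_bound L _
      · have : t (t (jmap L p)) ≠ t (jmap L p) := fun hc => hmove (t.injective hc)
        exact hs _ this
    have hj : jmap L ((t (jmap L p)).1, fun i => enc L ((t (jmap L p)).2 i)) = t (jmap L p) := by
      refine Prod.ext rfl ?_
      funext i
      exact dec_enc L (hb i)
    show ((t.symm (jmap L _)).1, fun i => enc L ((t.symm (jmap L _)).2 i)) = p
    rw [hj, Equiv.symm_apply_apply]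
    refine Prod.ext rfl ?_
    funext i
    exact enc_dec L _
  right_inv p := by
    have hb : ∀ i, ((t.symm (jmap L p)).2 i).natAbs ≤ L := by
      by_cases hmove : t.symm (jmap L p) = jmap L p
      · rw [hmove]; exact fun i => dec_bound L _
      · have : t (t.symm (jmap L p)) ≠ t.symm (jmap L p) := by
          rw [Equiv.apply_symm_apply]
          exact fun hc => hmove hc.symm
        exact hs _ this
    have hj : jmap L ((t.symm (jmap L p)).1, fun i => enc L ((t.symm (jmap L p)).2 i))
        = t.symm (jmap L p) := by
      refine Prod.ext rfl ?_
      funext i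
      exact dec_enc L (hb i)
    show ((t (jmap L _)).1, fun i => enc L ((t (jmap L _)).2 i)) = p
    rw [hj, Equiv.apply_symm_apply]
    refine Prod.ext rfl ?_
    funext i
    exact enc_dec L _

lemma jmap_boxPerm (t : Perm (Fin k × (Fin d → ℤ))) (hs) (p) :
    jmap L (boxPerm L t hs p) = t (jmap L p) := by
  have hb : ∀ i, ((t (jmap L p)).2 i).natAbs ≤ L := by
    by_cases hmove : t (jmap L p) = jmap L p
    · rw [hmove]; exact fun i => dec_bound L _
    · have : t (t (jmap L p)) ≠ t (jmap L p) := fun hc => hmove (t.injective hc)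
      exact hs _ this
  refine Prod.ext rfl ?_
  funext i
  exact dec_enc L (hb i)

def iotaE (m : ℕ) [NeZero m] (hm : 2 * L < m) :
    (Fin k × (Fin d → Fin (2 * L + 1))) ↪ (Fin k × (Fin d → ZMod m)) where
  toFun p := (p.1, fun i => ((dec L (p.2 i) : ℤ) : ZMod m))
  inj' := by
    rintro ⟨q, w⟩ ⟨q', w'⟩ h
    rw [Prod.mk.injEq] at h
    obtain ⟨h1, h2⟩ := h
    refine Prod.ext h1 ?_
    funext i
    have hc := congrFun h2 i
    have hd := (ZMod.intCast_eq_intCast_iff_dvd_sub _ _ m).mp hc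
    have hb1 := dec_bound L (w i)
    have hb2 := dec_bound L (w' i)
    have : dec L (w' i) - dec L (w i) = 0 := by
      have habs : (dec L (w' i) - dec L (w i)).natAbs < m := by omega
      have hdvd : m ∣ (dec L (w' i) - dec L (w i)).natAbs := by
        rw [← Int.natAbs_natCast m]
        exact Int.natAbs_dvd_natAbs.mpr hd
      have := Nat.eq_zero_of_dvd_of_lt hdvd habs
      omega
    have : dec L (w' i) = dec L (w i) := by omega
    have hdecinj : w' i = w i := by
      apply Fin.ext
      unfold dec at this
      omega
    show w i = w' i
    exact hdecinj.symm

lemma iotaE_apply (m : ℕ) [NeZero m] (hm : 2 * L < m)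
    (p : Fin k × (Fin d → Fin (2 * L + 1))) :
    iotaE L m hm p = (p.1, pj m (jmap L p).2) := rfl

end Box
end NotFG
namespace NotFG
open Equiv
variable {d n k : ℕ} [NeZero n]

section Machine

variable (e : Perm (Head d n k))
  (f : ((Fin d → ℤ) → Fin n) × Fin k → ((Fin d → ℤ) → Fin n) × Fin k × (Fin d → ℤ))

def a0 : Fin k → Fin k := fun q => (f (xzero d n, q)).2.1

def d0 : Fin k → Fin d → ℤ := fun q => (f (xzero d n, q)).2.2

noncomputable def alpha0 (hinj : Function.Injective (a0 (d:=d) f)) : Perm (Fin k) :=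
  Equiv.ofBijective _ (Finite.injective_iff_bijective.mp hinj)

lemma alpha0_apply (hinj) (q : Fin k) : alpha0 f hinj q = a0 f q := rfl

noncomputable def rhoZ (hinj : Function.Injective (a0 (d:=d) f)) : Perm (Fin k × (Fin d → ℤ)) :=
  (prodCongrLeft fun _ => alpha0 f hinj) * (prodCongrRight fun q => Equiv.addRight (d0 f q))

lemma rhoZ_apply (hinj) (p : Fin k × (Fin d → ℤ)) :
    rhoZ f hinj p = (a0 f p.1, p.2 + d0 f p.1) := by
  obtain ⟨q, v⟩ := p
  show (prodCongrLeft fun _ => alpha0 f hinj) ((prodCongrRight fun q => Equiv.addRight (d0 f q)) (q, v)) = _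
  rw [prodCongrRight_apply, prodCongrLeft_apply]
  rfl

def GhP (htape : ∀ x q v, (e (x,q,v)).1 = x) : Perm (Fin k × (Fin d → ℤ)) :=
  fiberPerm (xdel d n) e (fun q v => htape _ _ _) (fun q v => symm_tape htape _)

lemma GhP_apply (htape) (p : Fin k × (Fin d → ℤ)) :
    GhP e htape p = ((e (xdel d n, p.1, p.2)).2.1, (e (xdel d n, p.1, p.2)).2.2) := rfl

noncomputable def tauP (htape : ∀ x q v, (e (x,q,v)).1 = x) (hinj : Function.Injective (a0 (d:=d) f)) :
    Perm (Fin k × (Fin d → ℤ)) :=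
  GhP e htape * (rhoZ f hinj)⁻¹

lemma tauP_rhoZ (htape) (hinj) (z : Fin k × (Fin d → ℤ)) :
    tauP e f htape hinj (rhoZ f hinj z) = GhP e htape z := by
  show (GhP e htape * (rhoZ f hinj)⁻¹) _ = _
  rw [Perm.mul_apply]; exact congrArg _ ((rhoZ f hinj).symm_apply_apply z)

end Machine

theorem sign_eventually_const {e : Perm (Head d n k)} (he : e ∈ RFAset d n k) :
    ∃ (M0 : ℕ) (ε : ℤˣ), ∀ (m : ℕ) [NeZero m], Odd m → M0 ≤ m →
      ∀ (hmem : e ∈ Hsub d n k m), Perm.sign (psi d n k m ⟨e, hmem⟩) = ε := by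
  classical
  obtain ⟨⟨⟨Fi, Fo, f, hf, heq⟩, -⟩, htape⟩ := he
  -- master evaluation formula
  have master : ∀ x q v, e (x, q, v)
      = (x, (f (shiftC (-v) x, q)).2.1, v + (f (shiftC (-v) x, q)).2.2) :=
    fun x q v => Prod.ext (htape _ _ _) (Prod.ext (by rw [heq]) (by rw [heq]))
  -- injectivity of the zero-tape state map
  have hz : ∀ (q : Fin k) (v : Fin d → ℤ),
      e (xzero d n, q, v) = (xzero d n, a0 f q, v + d0 f q) := fun q v => master _ q v
  have hinj : Function.Injective (a0 (d:=d) f) := by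
    intro q q' hqq
    have h1 := hz q 0
    have h2 := hz q' (d0 f q - d0 f q')
    rw [hqq] at h1
    have h3 : e (xzero d n, q, 0) = e (xzero d n, q', d0 f q - d0 f q') := by
      rw [h1, h2, zero_add, sub_add_cancel]
    have h4 := e.injective h3
    exact (congrArg (fun p => p.2.1) h4)
  -- bounds
  obtain ⟨R, hFiBd⟩ : ∃ R : ℕ, ∀ u ∈ Fi, ∀ i, (u i).natAbs ≤ R := by
    refine ⟨Fi.sup fun u => Finset.univ.sup fun i => (u i).natAbs, ?_⟩
    intro u hu i
    exact le_trans (Finset.le_sup (f := fun i => (u i).natAbs) (Finset.mem_univ i))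
      (Finset.le_sup (f := fun u => Finset.univ.sup fun i => (u i).natAbs) hu)
  obtain ⟨R', hd0Bd⟩ : ∃ R' : ℕ, ∀ (q : Fin k) (i : Fin d), (d0 f q i).natAbs ≤ R' := by
    refine ⟨Finset.univ.sup fun q => Finset.univ.sup fun i => (d0 f q i).natAbs, ?_⟩
    intro q i
    exact le_trans (Finset.le_sup (f := fun i => (d0 f q i).natAbs) (Finset.mem_univ i))
      (Finset.le_sup (f := fun q => Finset.univ.sup fun i => (d0 f q i).natAbs) (Finset.mem_univ q))
  obtain ⟨L, hL⟩ : ∃ L : ℕ, L = R + R' := ⟨R + R', rfl⟩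
  -- far from the origin, the delta-tape fiber map agrees with rhoZ
  have hfarlemma : ∀ (q : Fin k) (v : Fin d → ℤ), -v ∉ Fi →
      GhP e htape (q, v) = rhoZ f hinj (q, v) := by
    intro q v hv
    have hw : f (shiftC (-v) (xdel d n), q) = f (xzero d n, q) := by
      apply hf
      intro u hu
      rw [shiftC_neg_apply]
      show xdel d n (u + v) = 0
      unfold xdel
      rw [if_neg]
      intro hc
      exact hv (by rwa [eq_neg_of_add_eq_zero_left hc] at hu)
    rw [GhP_apply, master, rhoZ_apply, hw]
    rfl
  -- support bound for the local correction
  have hsupp : ∀ p, tauP e f htape hinj p ≠ p → ∀ i, (p.2 i).natAbs ≤ L := by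
    intro p hp i
    have hpp : rhoZ f hinj ((rhoZ f hinj)⁻¹ p) = p := (rhoZ f hinj).apply_symm_apply p
    set p' := (rhoZ f hinj)⁻¹ p with hp'
    have hmv : -p'.2 ∈ Fi := by
      by_contra hno
      apply hp
      show (GhP e htape * (rhoZ f hinj)⁻¹) p = p
      rw [Perm.mul_apply, ← hp']
      have : GhP e htape p' = rhoZ f hinj p' := by
        have := hfarlemma p'.1 p'.2 hno
        simpa using this
      rw [this, hp', hpp]
    have hb1 : (p'.2 i).natAbs ≤ R := by
      have := hFiBd _ hmv i
      simpa using this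
    have hco : p.2 i = p'.2 i + d0 f p'.1 i := by
      have h5 : p.2 = p'.2 + d0 f p'.1 := by
        conv_lhs => rw [← hpp]
        rw [rhoZ_apply]
      rw [h5]
      rfl
    rw [hco]
    calc (p'.2 i + d0 f p'.1 i).natAbs ≤ (p'.2 i).natAbs + (d0 f p'.1 i).natAbs :=
          Int.natAbs_add_le _ _
      _ ≤ R + R' := Nat.add_le_add hb1 (hd0Bd _ _)
      _ = L := hL.symm
  -- the finite local correction permutation (independent of m)
  refine ⟨2*R + 4*R' + 8,
    Perm.sign (boxPerm L (tauP e f htape hinj) hsupp) * Perm.sign (alpha0 f hinj), ?_⟩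
  intro m hmNZ hodd hge hmem
  have hiota : 2 * L < m := by omega
  have hval_lt : ∀ a : ZMod m, a.val < m := fun a => ZMod.val_lt a
  -- the m-level rho
  set rhoM : Perm (Fin k × (Fin d → ZMod m)) :=
    (prodCongrLeft fun _ => alpha0 f hinj) *
      (prodCongrRight fun q => Equiv.addRight (pj m (d0 f q))) with hrhoMdef
  have rhoM_apply : ∀ p : Fin k × (Fin d → ZMod m),
      rhoM p = (a0 f p.1, p.2 + pj m (d0 f p.1)) := by
    rintro ⟨q, vb⟩
    show (prodCongrLeft fun _ => alpha0 f hinj)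
        ((prodCongrRight fun q => Equiv.addRight (pj m (d0 f q))) (q, vb)) = _
    rw [prodCongrRight_apply, prodCongrLeft_apply]
    rfl
  -- main identity
  have key : (psi d n k m ⟨e, hmem⟩ : Perm (Fin k × (Fin d → ZMod m)))
      = Perm.viaFintypeEmbedding (boxPerm L (tauP e f htape hinj) hsupp) (iotaE L m hiota)
        * rhoM := by
    refine Equiv.ext fun p => ?_
    obtain ⟨q, vb⟩ := p
    -- centered lift
    set cl : Fin d → ℤ := fun i => if 2 * (vb i).val < m then ((vb i).val : ℤ)
      else ((vb i).val : ℤ) - m with hcl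
    have hclpj : pj m cl = vb := by
      funext i
      by_cases hc : 2 * (vb i).val < m
      · show ((cl i : ℤ) : ZMod m) = vb i
        rw [hcl]
        simp only [if_pos hc, Int.cast_natCast]
        exact ZMod.natCast_rightInverse (vb i)
      · show ((cl i : ℤ) : ZMod m) = vb i
        rw [hcl]
        simp only [if_neg hc]
        push_cast
        rw [ZMod.natCast_self, sub_zero]
        exact ZMod.natCast_rightInverse (vb i)
    have hclbd : ∀ i, 2 * (cl i).natAbs ≤ m := by
      intro i
      have := hval_lt (vb i)
      by_cases hc : 2 * (vb i).val < m
      · simp only [hcl, if_pos hc]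
        omega
      · simp only [hcl, if_neg hc]
        omega
    -- LHS
    have hlhs0 : (psi d n k m ⟨e, hmem⟩) (q, vb)
        = ((e (x0 d n m, q, lft m vb)).2.1, pj m (e (x0 d n m, q, lft m vb)).2.2) := rfl
    have hstep1 := Hsub_apply_of_pj_eq hmem q cl (lft m vb) (by rw [hclpj, pj_lft])
    have hper : pj m (lft m vb - cl) = 0 :=
      pj_eq_zero_of_per (per_of_pj_eq (by rw [hclpj, pj_lft]))
    have hlhs : (psi d n k m ⟨e, hmem⟩) (q, vb)
        = ((e (x0 d n m, q, cl)).2.1, pj m (e (x0 d n m, q, cl)).2.2) := by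
      rw [hlhs0, hstep1]
      refine Prod.ext rfl ?_
      show pj m ((e (x0 d n m, q, cl)).2.2 + (lft m vb - cl)) = _
      rw [pj_add, hper, add_zero]
    -- window agreement between x0 and xdel at cl
    have hwin : f (shiftC (-cl) (x0 d n m), q) = f (shiftC (-cl) (xdel d n), q) := by
      apply hf
      intro u hu
      rw [shiftC_neg_apply, shiftC_neg_apply]
      show x0 d n m (u + cl) = xdel d n (u + cl)
      unfold x0 xdel
      refine if_congr ?_ rfl rfl
      constructor
      · intro hperuc
        funext i
        have hdvd := hperuc i
        have hbu := hFiBd u hu i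
        have hbc := hclbd i
        have habs : ((u + cl) i).natAbs < m := by
          have := Int.natAbs_add_le (u i) (cl i)
          show ((u i) + (cl i)).natAbs < m
          omega
        have hdvd2 : m ∣ ((u + cl) i).natAbs := by
          rw [← Int.natAbs_natCast m]
          exact Int.natAbs_dvd_natAbs.mpr hdvd
        have := Nat.eq_zero_of_dvd_of_lt hdvd2 habs
        show (u + cl) i = 0
        omega
      · intro hzero
        rw [hzero]
        exact per_zero m
    have hGh : ((e (x0 d n m, q, cl)).2.1, pj m (e (x0 d n m, q, cl)).2.2)
        = ((GhP e htape (q, cl)).1, pj m ((GhP e htape (q, cl)).2)) := by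
      rw [GhP_apply, master (x0 d n m) q cl, master (xdel d n) q cl, hwin]
    rw [hlhs, hGh]
    -- RHS
    rw [Perm.mul_apply, rhoM_apply]
    have hrw : (vb + pj m (d0 f q)) = pj m (cl + d0 f q) := by
      rw [pj_add, hclpj]
    by_cases hA : ∀ i, (cl i).natAbs ≤ R
    · -- near the origin
      have hwbd : ∀ i, ((cl + d0 f q) i).natAbs ≤ L := by
        intro i
        show ((cl i) + (d0 f q i)).natAbs ≤ L
        calc ((cl i) + (d0 f q i)).natAbs ≤ (cl i).natAbs + (d0 f q i).natAbs :=
              Int.natAbs_add_le _ _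
          _ ≤ R + R' := Nat.add_le_add (hA i) (hd0Bd _ _)
          _ = L := hL.symm
      set p0 : Fin k × (Fin d → Fin (2*L+1)) :=
        (alpha0 f hinj q, fun i => enc L ((cl + d0 f q) i)) with hp0
      have hjp0 : jmap L p0 = (alpha0 f hinj q, cl + d0 f q) := by
        refine Prod.ext rfl ?_
        funext i
        exact dec_enc L (hwbd i)
      have hip0 : iotaE L m hiota p0 = ((a0 f q : Fin k), vb + pj m (d0 f q)) := by
        rw [iotaE_apply, hjp0, hrw]
        rfl
      rw [show ((a0 f q : Fin k), vb + pj m (d0 f q)) = iotaE L m hiota p0 from hip0.symm]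
      rw [Perm.viaFintypeEmbedding_apply_image]
      have hjs : jmap L (boxPerm L (tauP e f htape hinj) hsupp p0)
          = GhP e htape (q, cl) := by
        rw [jmap_boxPerm, hjp0]
        have : ((alpha0 f hinj q : Fin k), cl + d0 f q) = rhoZ f hinj (q, cl) := by
          rw [rhoZ_apply]
          rfl
        rw [this, tauP_rhoZ]
      rw [iotaE_apply, hjs]
      exact Prod.ext (congrArg Prod.fst hjs).symm rfl
    · -- far from the origin: everything is fixed
      push_neg at hA
      obtain ⟨i0, hi0⟩ := hA
      have hfar : -cl ∉ Fi := by
        intro hc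
        have := hFiBd _ hc i0
        simp only [Pi.neg_apply, Int.natAbs_neg] at this
        omega
      have hGB : GhP e htape (q, cl) = rhoZ f hinj (q, cl) := hfarlemma q cl hfar
      rw [hGB, rhoZ_apply]
      show ((a0 f q : Fin k), pj m (cl + d0 f q))
          = Perm.viaFintypeEmbedding _ (iotaE L m hiota) ((a0 f q : Fin k), vb + pj m (d0 f q))
      rw [hrw]
      set y : Fin k × (Fin d → ZMod m) := ((a0 f q : Fin k), pj m (cl + d0 f q)) with hy
      by_cases hrange : y ∈ Set.range (iotaE L m hiota)
      · obtain ⟨p1, hp1⟩ := hrange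
        have hjp1 : jmap L p1 = ((a0 f q : Fin k), cl + d0 f q) := by
          have h1 : p1.1 = (a0 f q : Fin k) := congrArg Prod.fst hp1
          have h2 : pj m (jmap L p1).2 = pj m (cl + d0 f q) := by
            have := congrArg Prod.snd hp1
            rw [iotaE_apply] at this
            exact this
          refine Prod.ext (by simpa [jmap] using h1) ?_
          have hperd := per_of_pj_eq h2
          funext i
          have hdvd := hperd i
          have hb1 : ((jmap L p1).2 i).natAbs ≤ L := dec_bound L _
          have hb2 : ((cl + d0 f q) i).natAbs ≤ (cl i).natAbs + (d0 f q i).natAbs := by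
            show ((cl i) + (d0 f q i)).natAbs ≤ _
            exact Int.natAbs_add_le _ _
          have hbc := hclbd i
          have hbd := hd0Bd q i
          have habs : (((cl + d0 f q) - (jmap L p1).2) i).natAbs < m := by
            show (((cl + d0 f q) i) - ((jmap L p1).2 i)).natAbs < m
            have h6 : ((cl i) + (d0 f q i)).natAbs ≤ (cl i).natAbs + (d0 f q i).natAbs :=
              Int.natAbs_add_le _ _
            show (((cl i) + (d0 f q i)) - ((jmap L p1).2 i)).natAbs < m
            omega
          have hdvd2 : m ∣ (((cl + d0 f q) - (jmap L p1).2) i).natAbs := by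
            rw [← Int.natAbs_natCast m]
            exact Int.natAbs_dvd_natAbs.mpr (hdvd)
          have h7 := Nat.eq_zero_of_dvd_of_lt hdvd2 habs
          have h8 : (((cl + d0 f q) - (jmap L p1).2) i) = ((cl + d0 f q) i) - ((jmap L p1).2 i) := rfl
          show (jmap L p1).2 i = (cl + d0 f q) i
          omega
        rw [← hp1, Perm.viaFintypeEmbedding_apply_image]
        have hfix : boxPerm L (tauP e f htape hinj) hsupp p1 = p1 := by
          have hjfix : jmap L (boxPerm L (tauP e f htape hinj) hsupp p1) = jmap L p1 := by
            rw [jmap_boxPerm, hjp1]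
            have hrr : ((a0 f q : Fin k), cl + d0 f q) = rhoZ f hinj (q, cl) := by
              rw [rhoZ_apply]
            rw [hrr, tauP_rhoZ, hGB, ← hrr]
          -- jmap is injective
          have hinj2 : Function.Injective (jmap (d:=d) (k:=k) L) := by
            rintro ⟨qa, wa⟩ ⟨qb, wb⟩ hab
            have h1 : qa = qb := congrArg Prod.fst hab
            have h2 := congrArg Prod.snd hab
            refine Prod.ext h1 ?_
            funext i
            have h3 := congrFun h2 i
            show wa i = wb i
            apply Fin.ext
            unfold jmap dec at h3
            simp only at h3
            omega
          exact hinj2 hjfix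
        rw [hfix, hp1]
      · rw [Perm.viaFintypeEmbedding_apply_notMem_range _ _ hrange]
  -- conclude: compute signs
  rw [key, map_mul, Perm.viaFintypeEmbedding_sign]
  congr 1
  rw [hrhoMdef, map_mul, Perm.sign_prodCongrLeft, Perm.sign_prodCongrRight]
  have hcard : Fintype.card (Fin d → ZMod m) = m ^ d := by
    rw [Fintype.card_fun, ZMod.card, Fintype.card_fin]
  have h1 : (∏ _x : (Fin d → ZMod m), Perm.sign (alpha0 f hinj)) = Perm.sign (alpha0 f hinj) := by
    rw [Finset.prod_const, Finset.card_univ, hcard]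
    exact units_pow_odd (hodd.pow)
  have h2 : (∏ q : Fin k, Perm.sign (Equiv.addRight (pj m (d0 f q)))) = 1 := by
    refine Finset.prod_eq_one fun q _ => ?_
    exact sign_addRight_odd hodd _
  rw [h1, h2, mul_one]

end NotFG
namespace NotFG
open Equiv
variable {d n k : ℕ} [NeZero n] [NeZero k]

section Witness

variable (M : ℕ) (hd : 0 < d)

def e1v (d : ℕ) (hd : 0 < d) : Fin d → ℤ := fun i => if i = ⟨0, hd⟩ then 1 else 0

def Cond (M : ℕ) (hd : 0 < d) (x : (Fin d → ℤ) → Fin n) (v : Fin d → ℤ) : Prop :=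
  x v = 1 ∧ x (v + e1v d hd) = 0 ∧ x (v + M • e1v d hd) = 1

instance (M : ℕ) (hd : 0 < d) (x : (Fin d → ℤ) → Fin n) (v : Fin d → ℤ) :
    Decidable (Cond M hd x v) := inferInstanceAs (Decidable (_ ∧ _ ∧ _))

def Jfun (M : ℕ) (hd : 0 < d) : Head d n k → Head d n k := fun p =>
  if p.2.1 = 0 ∧ Cond M hd p.1 p.2.2 then (p.1, p.2.1, p.2.2 + e1v d hd)
  else if p.2.1 = 0 ∧ Cond M hd p.1 (p.2.2 - e1v d hd) then (p.1, p.2.1, p.2.2 - e1v d hd)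
  else p

lemma Jfun_invol (h10 : (1 : Fin n) ≠ 0) (p : Head d n k) :
    Jfun M hd (Jfun M hd (p : Head d n k)) = p := by
  obtain ⟨x, q, v⟩ := p
  by_cases h1 : q = 0 ∧ Cond M hd x v
  · have hstep : Jfun M hd (x, q, v) = (x, q, v + e1v d hd) := by
      unfold Jfun
      rw [if_pos h1]
    rw [hstep]
    have hc1 : ¬ (q = 0 ∧ Cond M hd x (v + e1v d hd)) := by
      rintro ⟨-, hcc, -, -⟩
      exact h10 (hcc.symm.trans h1.2.2.1)
    have hveq : v + e1v d hd - e1v d hd = v := add_sub_cancel_right v _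
    have hc2 : q = 0 ∧ Cond M hd x (v + e1v d hd - e1v d hd) := by
      rw [hveq]; exact h1
    unfold Jfun
    rw [if_neg hc1, if_pos hc2, hveq]
  · by_cases h2 : q = 0 ∧ Cond M hd x (v - e1v d hd)
    · have hstep : Jfun M hd (x, q, v) = (x, q, v - e1v d hd) := by
        unfold Jfun
        rw [if_neg h1, if_pos h2]
      rw [hstep]
      have hc1 : q = 0 ∧ Cond M hd x (v - e1v d hd) := h2
      unfold Jfun
      rw [if_pos hc1, sub_add_cancel]
    · have hstep : Jfun M hd (x, q, v) = (x, q, v) := by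
        unfold Jfun
        rw [if_neg h1, if_neg h2]
      rw [hstep]
      unfold Jfun
      rw [if_neg h1, if_neg h2]

def JP (M : ℕ) (hd : 0 < d) (h10 : (1 : Fin n) ≠ 0) : Perm (Head d n k) where
  toFun := Jfun M hd
  invFun := Jfun M hd
  left_inv := Jfun_invol M hd h10
  right_inv := Jfun_invol M hd h10

def Jmv (M : ℕ) (hd : 0 < d) (w : (Fin d → ℤ) → Fin n) (q : Fin k) : Fin d → ℤ :=
  if q = 0 ∧ w 0 = 1 ∧ w (e1v d hd) = 0 ∧ w (M • e1v d hd) = 1 then e1v d hd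
  else if q = 0 ∧ w (-(e1v d hd)) = 1 ∧ w 0 = 0 ∧ w (M • e1v d hd - e1v d hd) = 1
    then -(e1v d hd) else 0

lemma isTM_J : IsTM d n k (Jfun (n:=n) (k:=k) M hd) := by
  classical
  refine ⟨{0, e1v d hd, M • e1v d hd, -(e1v d hd), M • e1v d hd - e1v d hd}, ∅,
    fun p => ((fun _ => 0), p.2, Jmv M hd p.1 p.2), ?_, ?_⟩
  · intro x y q h
    have h0 := h 0 (by simp)
    have h1 := h (e1v d hd) (by simp)
    have h2 := h (M • e1v d hd) (by simp)
    have h3 := h (-(e1v d hd)) (by simp)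
    have h4 := h (M • e1v d hd - e1v d hd) (by simp)
    refine Prod.ext rfl (Prod.ext rfl ?_)
    show Jmv M hd x q = Jmv M hd y q
    unfold Jmv
    rw [h0, h1, h2, h3, h4]
  · intro x q v
    have hxo : (fun u => if u - v ∈ (∅ : Finset (Fin d → ℤ))
        then (0 : Fin n) else x u) = x := by
      funext u
      rw [if_neg (Finset.notMem_empty _)]
    have hA1 : (0 : Fin d → ℤ) + v = v := zero_add v
    have hA2 : e1v d hd + v = v + e1v d hd := add_comm _ _
    have hA3 : M • e1v d hd + v = v + M • e1v d hd := add_comm _ _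
    have hA4 : -(e1v d hd) + v = v - e1v d hd := neg_add_eq_sub _ _
    have hA5 : M • e1v d hd - e1v d hd + v = v - e1v d hd + M • e1v d hd := by ring
    have hmv : Jmv M hd (shiftC (-v) x) q
        = (if q = 0 ∧ Cond M hd x v then e1v d hd
           else if q = 0 ∧ Cond M hd x (v - e1v d hd) then -(e1v d hd) else 0) := by
      have hB1 : v - e1v d hd + e1v d hd = v := sub_add_cancel v _
      unfold Jmv Cond
      simp only [shiftC_neg_apply, hA1, hA2, hA3, hA4, hA5, hB1]
    have hxs : (Jfun M hd (x, q, v)).1 = x := by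
      unfold Jfun
      split_ifs <;> rfl
    show Jfun M hd (x, q, v) = (fun u => if u - v ∈ (∅ : Finset (Fin d → ℤ))
        then (0 : Fin n) else x u, q, v + Jmv M hd (shiftC (-v) x) q)
    refine Prod.ext (by rw [hxs, hxo]) (Prod.ext ?_ ?_)
    · show (Jfun M hd (x, q, v)).2.1 = q
      unfold Jfun
      split_ifs <;> rfl
    show (Jfun M hd (x, q, v)).2.2 = v + Jmv M hd (shiftC (-v) x) q
    rw [hmv]
    unfold Jfun
    split_ifs with hc1 hc2
    · rfl
    · show v - e1v d hd = v + -(e1v d hd)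
      rw [sub_eq_add_neg]
    · show v = v + 0
      rw [add_zero]

lemma JP_mem_RFA (h10 : (1 : Fin n) ≠ 0) : JP (k:=k) M hd h10 ∈ RFAset d n k := by
  have htm : IsTM d n k ⇑(JP (k:=k) M hd h10) := isTM_J M hd
  have htm2 : IsTM d n k ⇑(JP (k:=k) M hd h10).symm := isTM_J M hd
  refine ⟨⟨htm, htm2⟩, ?_⟩
  intro x q v
  show (Jfun M hd (x, q, v)).1 = x
  unfold Jfun
  split_ifs <;> rfl

end Witness
end NotFG
namespace NotFG
open Equiv
variable {d n k : ℕ} [NeZero n] [NeZero k]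

section Eval

variable {m : ℕ} [NeZero m] (hd : 0 < d)

lemma lft_zero : lft m (0 : Fin d → ZMod m) = 0 := by
  funext i
  show ((0 : ZMod m).val : ℤ) = 0
  rw [ZMod.val_zero]
  rfl

lemma pj_zero : pj m (0 : Fin d → ℤ) = 0 := by
  funext i
  show (((0:ℤ) : ZMod m)) = 0
  rw [Int.cast_zero]

lemma e1v_i0 : e1v d hd ⟨0, hd⟩ = 1 := if_pos rfl

lemma per_small_zero {w : Fin d → ℤ} (hp : per m w) (hb : ∀ i, (w i).natAbs < m) : w = 0 := by
  funext i
  have hdvd : (m : ℕ) ∣ (w i).natAbs := by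
    rw [← Int.natAbs_natCast m]
    exact Int.natAbs_dvd_natAbs.mpr (hp i)
  have := Nat.eq_zero_of_dvd_of_lt hdvd (hb i)
  show w i = 0
  omega

lemma lft_bound (vb : Fin d → ZMod m) (i : Fin d) : (lft m vb i).natAbs < m := by
  have := ZMod.val_lt (vb i)
  show ((((vb i).val : ℕ) : ℤ)).natAbs < m
  omega

lemma per_lft_zero {vb : Fin d → ZMod m} (hp : per m (lft m vb)) : lft m vb = 0 :=
  per_small_zero hp (lft_bound vb)

lemma not_per_e1 (hm : 2 ≤ m) : ¬ per m (e1v d hd) := by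
  intro hp
  have := hp ⟨0, hd⟩
  rw [e1v_i0] at this
  have := Int.le_of_dvd one_pos this
  omega

lemma smul_e1v_apply (M : ℕ) (i : Fin d) : (M • e1v d hd) i = (M : ℤ) * e1v d hd i := by
  show M • (e1v d hd i) = _
  rw [nsmul_eq_mul]

lemma per_smul_e1_iff (M : ℕ) : per m (M • e1v d hd) ↔ m ∣ M := by
  constructor
  · intro hp
    have := hp ⟨0, hd⟩
    rw [smul_e1v_apply, e1v_i0, mul_one] at this
    exact_mod_cast this
  · intro hdv i
    rw [smul_e1v_apply]
    exact Dvd.dvd.mul_right (by exact_mod_cast hdv) _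

lemma per_lft_sub_e1 (hm : 2 ≤ m) {vb : Fin d → ZMod m}
    (hp : per m (lft m vb - e1v d hd)) : lft m vb = e1v d hd := by
  have h0 : lft m vb - e1v d hd = 0 := by
    refine per_small_zero hp ?_
    intro i
    have h1 := lft_bound vb i
    have h2 : (0:ℤ) ≤ lft m vb i := by
      show (0:ℤ) ≤ (((vb i).val : ℕ) : ℤ)
      positivity
    show ((lft m vb i) - e1v d hd i).natAbs < m
    unfold e1v
    split_ifs
    · omega
    · omega
  have := sub_eq_zero.mp h0
  exact this

lemma lft_pj_e1 (hm : 2 ≤ m) : lft m (pj m (e1v d hd)) = e1v d hd := by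
  funext i
  show (((((e1v d hd i : ℤ)) : ZMod m)).val : ℤ) = e1v d hd i
  unfold e1v
  split_ifs
  · show ((((1:ℤ) : ZMod m)).val : ℤ) = 1
    have : ((1:ℤ) : ZMod m) = ((1:ℕ) : ZMod m) := by push_cast; rfl
    rw [this, ZMod.val_cast_of_lt (by omega)]
    rfl
  · show ((((0:ℤ) : ZMod m)).val : ℤ) = 0
    rw [Int.cast_zero, ZMod.val_zero]
    rfl

lemma pj_e1_ne_zero (hm : 2 ≤ m) : pj m (e1v d hd) ≠ 0 := by
  haveI : Fact (1 < m) := ⟨hm⟩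
  intro hc
  have := congrFun hc ⟨0, hd⟩
  rw [show pj m (e1v d hd) ⟨0, hd⟩ = ((e1v d hd ⟨0, hd⟩ : ℤ) : ZMod m) from rfl, e1v_i0] at this
  simp only [Int.cast_one] at this
  exact one_ne_zero this

lemma x0_eq_one_iff (h10 : (1 : Fin n) ≠ 0) (u : Fin d → ℤ) : x0 d n m u = 1 ↔ per m u := by
  unfold x0
  split_ifs with hc
  · simp [hc]
  · simp only [hc, iff_false]
    intro h0
    exact h10 h0.symm

variable (h10 : (1 : Fin n) ≠ 0)

lemma psi_J_far {M : ℕ} (hm : 2 ≤ m) (hnd : ¬ m ∣ M)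
    (hmem : JP (d:=d) (n:=n) (k:=k) M hd h10 ∈ Hsub d n k m) :
    psi d n k m ⟨JP M hd h10, hmem⟩ = 1 := by
  refine Equiv.ext fun p => ?_
  obtain ⟨q, vb⟩ := p
  have hc1 : ¬ (q = 0 ∧ Cond M hd (x0 d n m) (lft m vb)) := by
    rintro ⟨-, hx1, -, hx3⟩
    have hp1 := (x0_eq_one_iff h10 _).mp hx1
    have hl0 := per_lft_zero hp1
    rw [hl0, zero_add] at hx3
    exact hnd ((per_smul_e1_iff hd M).mp ((x0_eq_one_iff h10 _).mp hx3))
  have hc2 : ¬ (q = 0 ∧ Cond M hd (x0 d n m) (lft m vb - e1v d hd)) := by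
    rintro ⟨-, hx1, -, hx3⟩
    have hp1 := (x0_eq_one_iff h10 _).mp hx1
    have hl1 := per_lft_sub_e1 hd hm hp1
    rw [hl1, sub_self, zero_add] at hx3
    exact hnd ((per_smul_e1_iff hd M).mp ((x0_eq_one_iff h10 _).mp hx3))
  have hfix : Jfun M hd (x0 d n m, q, lft m vb) = (x0 d n m, q, lft m vb) := by
    unfold Jfun
    rw [if_neg (by exact fun h => hc1 h), if_neg (by exact fun h => hc2 h)]
  show ((JP (d:=d) (n:=n) (k:=k) M hd h10 (x0 d n m, q, lft m vb)).2.1,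
    pj m (JP (d:=d) (n:=n) (k:=k) M hd h10 (x0 d n m, q, lft m vb)).2.2) = (q, vb)
  show ((Jfun M hd (x0 d n m, q, lft m vb)).2.1,
    pj m (Jfun M hd (x0 d n m, q, lft m vb)).2.2) = (q, vb)
  rw [hfix]
  show (q, pj m (lft m vb)) = (q, vb)
  rw [pj_lft]

lemma psi_J_swap (hm : 2 ≤ m)
    (hmem : JP (d:=d) (n:=n) (k:=k) m hd h10 ∈ Hsub d n k m) :
    psi d n k m ⟨JP m hd h10, hmem⟩
      = Equiv.swap ((0 : Fin k), (0 : Fin d → ZMod m)) (0, pj m (e1v d hd)) := by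
  have hCond0 : Cond m hd (x0 d n m) 0 := by
    refine ⟨(x0_eq_one_iff h10 _).mpr (per_zero m), ?_, ?_⟩
    · rw [zero_add]
      unfold x0
      rw [if_neg (not_per_e1 hd hm)]
    · rw [zero_add]
      exact (x0_eq_one_iff h10 _).mpr ((per_smul_e1_iff hd m).mpr dvd_rfl)
  have hnCond_e1 : ¬ Cond m hd (x0 d n m) (e1v d hd) := by
    rintro ⟨hx1, -, -⟩
    exact not_per_e1 hd hm ((x0_eq_one_iff h10 _).mp hx1)
  refine Equiv.ext fun p => ?_
  obtain ⟨q, vb⟩ := p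
  have hlhs : (psi d n k m ⟨JP (d:=d) (n:=n) (k:=k) m hd h10, hmem⟩) (q, vb)
      = ((Jfun m hd (x0 d n m, q, lft m vb)).2.1,
         pj m (Jfun m hd (x0 d n m, q, lft m vb)).2.2) := rfl
  by_cases hq : q = 0
  · subst hq
    by_cases hv0 : vb = 0
    · subst hv0
      have hstep : Jfun m hd (x0 d n m, (0:Fin k), lft m (0 : Fin d → ZMod m))
          = (x0 d n m, 0, 0 + e1v d hd) := by
        unfold Jfun
        rw [if_pos ⟨rfl, by rw [lft_zero]; exact hCond0⟩]
        rw [lft_zero]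
      rw [hlhs, hstep]
      show ((0:Fin k), pj m (0 + e1v d hd)) = _
      rw [zero_add, Equiv.swap_apply_left]
    · by_cases hv1 : vb = pj m (e1v d hd)
      · subst hv1
        have hl := lft_pj_e1 hd hm
        have hstep : Jfun m hd (x0 d n m, (0:Fin k), lft m (pj m (e1v d hd)))
            = (x0 d n m, 0, e1v d hd - e1v d hd) := by
          unfold Jfun
          rw [hl]
          rw [if_neg (fun h => hnCond_e1 h.2), if_pos ⟨rfl, by rw [sub_self]; exact hCond0⟩]
        rw [hlhs, hstep]
        show ((0:Fin k), pj m (e1v d hd - e1v d hd)) = _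
        rw [sub_self, pj_zero, Equiv.swap_apply_right]
      · have hc1 : ¬ ((0:Fin k) = 0 ∧ Cond m hd (x0 d n m) (lft m vb)) := by
          rintro ⟨-, hx1, -, -⟩
          apply hv0
          have hl0 := per_lft_zero ((x0_eq_one_iff h10 _).mp hx1)
          have : vb = pj m (lft m vb) := (pj_lft m vb).symm
          rw [this, hl0, pj_zero]
        have hc2 : ¬ ((0:Fin k) = 0 ∧ Cond m hd (x0 d n m) (lft m vb - e1v d hd)) := by
          rintro ⟨-, hx1, -, -⟩
          apply hv1
          have hl1 := per_lft_sub_e1 hd hm ((x0_eq_one_iff h10 _).mp hx1)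
          have : vb = pj m (lft m vb) := (pj_lft m vb).symm
          rw [this, hl1]
        have hfix : Jfun m hd (x0 d n m, (0:Fin k), lft m vb)
            = (x0 d n m, 0, lft m vb) := by
          unfold Jfun
          rw [if_neg (fun h => hc1 h), if_neg (fun h => hc2 h)]
        rw [hlhs, hfix]
        show ((0:Fin k), pj m (lft m vb)) = _
        rw [pj_lft, Equiv.swap_apply_of_ne_of_ne]
        · exact fun hc => hv0 (congrArg Prod.snd hc)
        · exact fun hc => hv1 (congrArg Prod.snd hc)
  · have hfix : Jfun m hd (x0 d n m, q, lft m vb) = (x0 d n m, q, lft m vb) := by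
      unfold Jfun
      rw [if_neg (fun h => hq h.1), if_neg (fun h => hq h.1)]
    rw [hlhs, hfix]
    show (q, pj m (lft m vb)) = _
    rw [pj_lft, Equiv.swap_apply_of_ne_of_ne]
    · exact fun hc => hq (congrArg Prod.fst hc)
    · exact fun hc => hq (congrArg Prod.fst hc)

end Eval
end NotFG

open NotFG Equiv

/-- For `d ≥ 1`, `n ≥ 2`, `k ≥ 1`, the group `RFA(ℤ^d,n,k)` of
reversible finite-state automata is not finitely generated: no finite subset of
`RFA(ℤ^d,n,k)` generates a subgroup containing all of `RFA(ℤ^d,n,k)`. -/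
theorem RFA_not_finitelyGenerated
    (d n k : ℕ) (hd : 1 ≤ d) (hn : 2 ≤ n) (hk : 1 ≤ k) :
    ¬ ∃ S : Finset (Equiv.Perm (Head d n k)),
        (S : Set (Equiv.Perm (Head d n k))) ⊆ RFAset d n k ∧
        ∀ e ∈ RFAset d n k, e ∈ Subgroup.closure (S : Set (Equiv.Perm (Head d n k))) := by
  rintro ⟨S, hSsub, hgen⟩
  haveI : NeZero n := ⟨by omega⟩
  haveI : NeZero k := ⟨by omega⟩
  have hd0 : 0 < d := hd
  have h10 : (1 : Fin n) ≠ 0 := by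
    intro h
    have hv := congrArg Fin.val h
    rw [Fin.val_one'] at hv
    rw [Nat.mod_eq_of_lt (by omega)] at hv
    simp at hv
  -- eventual-constancy thresholds for each generator
  have hth : ∀ g : Perm (Head d n k), g ∈ S → ∃ (M0 : ℕ) (ε : ℤˣ),
      ∀ (m : ℕ) [NeZero m], Odd m → M0 ≤ m →
        ∀ (hmem : g ∈ Hsub d n k m), Perm.sign (psi d n k m ⟨g, hmem⟩) = ε :=
    fun g hg => sign_eventually_const (hSsub hg)
  choose M0 ε hM using hth
  set B := S.attach.sup (fun g => M0 g.1 g.2) with hB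
  have hBg : ∀ (g) (hg : g ∈ S), M0 g hg ≤ B :=
    fun g hg => Finset.le_sup (f := fun g => M0 g.1 g.2) (Finset.mem_attach S ⟨g, hg⟩)
  set m1 := 2 * B + 3 with hm1
  set m2 := 2 * B + 5 with hm2
  haveI hNZ1 : NeZero m1 := ⟨by omega⟩
  haveI hNZ2 : NeZero m2 := ⟨by omega⟩
  have hodd1 : Odd m1 := by rw [Nat.odd_iff]; omega
  have hodd2 : Odd m2 := by rw [Nat.odd_iff]; omega
  -- the witness machine
  set J : Perm (Head d n k) := JP m1 hd0 h10 with hJ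
  have hJRFA : J ∈ RFAset d n k := JP_mem_RFA m1 hd0 h10
  have hJcl : J ∈ Subgroup.closure (S : Set (Perm (Head d n k))) := hgen J hJRFA
  -- the detecting subgroup
  let K : Subgroup (Perm (Head d n k)) :=
  { carrier := {e | ∃ (h1 : e ∈ Hsub d n k m1) (h2 : e ∈ Hsub d n k m2),
      Perm.sign (psi d n k m1 ⟨e, h1⟩) = Perm.sign (psi d n k m2 ⟨e, h2⟩)}
    one_mem' := by
      refine ⟨one_mem _, one_mem _, ?_⟩
      rw [show (⟨1, one_mem _⟩ : Hsub d n k m1) = 1 from rfl,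
        show (⟨1, one_mem _⟩ : Hsub d n k m2) = 1 from rfl, map_one, map_one, map_one, map_one]
    mul_mem' := by
      rintro a b ⟨ha1, ha2, hae⟩ ⟨hb1, hb2, hbe⟩
      refine ⟨mul_mem ha1 hb1, mul_mem ha2 hb2, ?_⟩
      rw [show (⟨a * b, mul_mem ha1 hb1⟩ : Hsub d n k m1)
            = (⟨a, ha1⟩ : Hsub d n k m1) * ⟨b, hb1⟩ from rfl,
          show (⟨a * b, mul_mem ha2 hb2⟩ : Hsub d n k m2)
            = (⟨a, ha2⟩ : Hsub d n k m2) * ⟨b, hb2⟩ from rfl,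
          map_mul, map_mul, map_mul, map_mul, hae, hbe]
    inv_mem' := by
      rintro a ⟨ha1, ha2, hae⟩
      refine ⟨inv_mem ha1, inv_mem ha2, ?_⟩
      rw [show (⟨a⁻¹, inv_mem ha1⟩ : Hsub d n k m1) = (⟨a, ha1⟩ : Hsub d n k m1)⁻¹ from rfl,
          show (⟨a⁻¹, inv_mem ha2⟩ : Hsub d n k m2) = (⟨a, ha2⟩ : Hsub d n k m2)⁻¹ from rfl,
          map_inv, map_inv, map_inv, map_inv, hae] }
  have hSK : (S : Set (Perm (Head d n k))) ⊆ ↑K := by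
    intro g hg
    have hg1 : g ∈ Hsub d n k m1 := mem_Hsub_of_RFA (hSsub hg) m1
    have hg2 : g ∈ Hsub d n k m2 := mem_Hsub_of_RFA (hSsub hg) m2
    refine ⟨hg1, hg2, ?_⟩
    rw [hM g hg m1 hodd1 (by have := hBg g hg; omega) hg1,
      hM g hg m2 hodd2 (by have := hBg g hg; omega) hg2]
  have hJK : J ∈ K := (Subgroup.closure_le K).mpr hSK hJcl
  obtain ⟨hJ1, hJ2, hsigeq⟩ := hJK
  have hs1 : Perm.sign (psi d n k m1 ⟨J, hJ1⟩) = -1 := by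
    rw [show (⟨J, hJ1⟩ : Hsub d n k m1) = ⟨JP m1 hd0 h10, hJ1⟩ from rfl]
    rw [psi_J_swap hd0 h10 (by omega) hJ1]
    refine Perm.sign_swap ?_
    intro hc
    exact pj_e1_ne_zero hd0 (m := m1) (by omega) (congrArg Prod.snd hc).symm
  have hs2 : Perm.sign (psi d n k m2 ⟨J, hJ2⟩) = 1 := by
    have hnd : ¬ m2 ∣ m1 := by
      intro hdvd
      have := Nat.le_of_dvd (by omega) hdvd
      omega
    rw [show (⟨J, hJ2⟩ : Hsub d n k m2) = ⟨JP m1 hd0 h10, hJ2⟩ from rfl]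
    rw [psi_J_far hd0 h10 (m := m2) (by omega) hnd hJ2, map_one]
  rw [hs1, hs2] at hsigeq
  exact absurd hsigeq (by decide)
end

section
/- Let d, n, k ≥ 1 and let A = Σ × (ℤ/2ℤ)^Q, a finite alphabet of cardinality n·2^k. Then there is an injective group homomorphism from RFA_fix(ℤ^d,n,k) into Aut(A^{ℤ^d}), the group of self-homeomorphisms of the full shift A^{ℤ^d} commuting with all shift maps. -/
/-- The moving-tape space `Σ^{ℤ^d} × Q`. -/
abbrev Tape (d n k : ℕ) : Type := ((Fin d → ℤ) → Fin n) × Fin k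

/-- `T` is a moving-tape `(ℤ^d,n,k)`-Turing machine. -/
def IsTapeTM (d n k : ℕ) (T : Tape d n k → Tape d n k) : Prop :=
  ∃ (Fi Fo : Finset (Fin d → ℤ))
    (f : Tape d n k → ((Fin d → ℤ) → Fin n) × Fin k × (Fin d → ℤ)),
    (∀ (x y : (Fin d → ℤ) → Fin n) (q : Fin k),
        (∀ u ∈ Fi, x u = y u) → f (x, q) = f (y, q)) ∧
    ∀ (x : (Fin d → ℤ) → Fin n) (q : Fin k),
      T (x, q) =
        (shiftC (-(f (x, q)).2.2) (fun u => if u ∈ Fo then (f (x, q)).1 u else x u),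
         (f (x, q)).2.1)

/-- `RFA_fix(ℤ^d,n,k)`: permutations of the moving-tape space such that the
permutation and its inverse are moving-tape Turing machines and which never change
the tape (the new tape is always a shift of the old one). -/
def RFAfixSet (d n k : ℕ) : Set (Equiv.Perm (Tape d n k)) :=
  {e | IsTapeTM d n k ⇑e ∧ IsTapeTM d n k ⇑e.symm ∧
    ∀ (x : (Fin d → ℤ) → Fin n) (q : Fin k),
      ∃ w : Fin d → ℤ, (e (x, q)).1 = shiftC w x}

/-- The alphabet `A = Σ × (ℤ/2ℤ)^Q`, of cardinality `n · 2^k`. -/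
abbrev PermAlphabet (n k : ℕ) : Type := Fin n × (Fin k → ZMod 2)

theorem shiftC_shiftC {d : ℕ} {A : Type*} (v w : Fin d → ℤ) (x : (Fin d → ℤ) → A) :
    shiftC v (shiftC w x) = shiftC (v + w) x := by
  funext u; simp [shiftC, sub_sub]

theorem shiftC_zero {d : ℕ} {A : Type*} (x : (Fin d → ℤ) → A) : shiftC 0 x = x := by
  funext u; simp [shiftC]

def Rigid {d n : ℕ} (y : (Fin d → ℤ) → Fin n) : Prop :=
  ∀ t : Fin d → ℤ, t ≠ 0 → ∀ F : Finset (Fin d → ℤ), ∃ u ∉ F, y u ≠ y (u - t)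

theorem Rigid.shift_eq {d n : ℕ} {y : (Fin d → ℤ) → Fin n} (hy : Rigid y)
    {t : Fin d → ℤ} {F : Finset (Fin d → ℤ)}
    (h : ∀ u, u ∉ F → y u = shiftC t y u) : t = 0 := by
  by_contra ht
  obtain ⟨u, hu, hne⟩ := hy t ht F
  exact hne (h u hu)

theorem Rigid.shiftC_inj {d n : ℕ} {y : (Fin d → ℤ) → Fin n} (hy : Rigid y)
    {t₁ t₂ : Fin d → ℤ} (h : shiftC t₁ y = shiftC t₂ y) : t₁ = t₂ := by
  have h2 : ∀ u, u ∉ (∅ : Finset (Fin d → ℤ)) → y u = shiftC (t₂ - t₁) y u := by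
    intro u _
    have := congrFun h (u + t₁)
    simpa [shiftC, sub_sub_eq_add_sub, add_sub_cancel_right] using this
  have h0 := hy.shift_eq h2
  have := sub_eq_zero.mp h0
  exact this.symm

theorem exists_rigid_ext {d n : ℕ} (hd : 1 ≤ d) (hn2 : 2 ≤ n)
    (E : Finset (Fin d → ℤ)) (y : (Fin d → ℤ) → Fin n) :
    ∃ y' : (Fin d → ℤ) → Fin n, Rigid y' ∧ ∀ u ∈ E, y' u = y u := by
  classical
  set z : Fin d := ⟨0, hd⟩ with hz
  set m : ℕ → (Fin d → ℤ) := fun j i => if i = z then 2 ^ j else 0 with hm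
  have hmz : ∀ j, m j z = 2 ^ j := fun j => by simp [hm]
  have hminj : Function.Injective m := by
    intro a b hab
    have := congrFun hab z
    simp only [hmz] at this
    exact Nat.pow_right_injective (le_refl 2) (by exact_mod_cast this)
  set one : Fin n := ⟨1, by omega⟩
  set zer : Fin n := ⟨0, by omega⟩
  refine ⟨fun u => if u ∈ E then y u else if ∃ j, u = m j then one else zer, ?_, ?_⟩
  · intro t ht F
    -- finite bad sets
    have h1 : ({j : ℕ | m j ∈ F ∪ E}).Finite := by
      have : {j : ℕ | m j ∈ F ∪ E} ⊆ m ⁻¹' (↑(F ∪ E) : Set (Fin d → ℤ)) := by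
        intro j hj; simpa using hj
      exact ((F ∪ E).finite_toSet.preimage (hminj.injOn)).subset this
    have h2 : ({j : ℕ | m j - t ∈ E}).Finite := by
      have hinj2 : Function.Injective (fun j => m j - t) := by
        intro a b hab
        have : m a = m b := by
          have := hab
          simpa [sub_eq_iff_eq_add] using hab
        exact hminj this
      have : {j : ℕ | m j - t ∈ E} ⊆ (fun j => m j - t) ⁻¹' (↑E : Set (Fin d → ℤ)) := by
        intro j hj; simpa using hj
      exact (E.finite_toSet.preimage (hinj2.injOn)).subset this
    obtain ⟨b, hb⟩ := (h1.union h2).bddAbove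
    set c : ℕ := (t z).natAbs
    set j : ℕ := max (b + 1) (c + 1) with hjdef
    have hjb : b < j := lt_of_lt_of_le (Nat.lt_succ_self b) (le_max_left _ _)
    have hjc : c + 1 ≤ j := le_max_right _ _
    have hj1 : j ∉ {j : ℕ | m j ∈ F ∪ E} := fun h => absurd (hb (Set.mem_union_left _ h)) (by omega)
    have hj2 : j ∉ {j : ℕ | m j - t ∈ E} := fun h => absurd (hb (Set.mem_union_right _ h)) (by omega)
    have hmjE : m j ∉ E := fun h => hj1 (by simp [h])
    have hmjF : m j ∉ F := fun h => hj1 (by simp [h])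
    refine ⟨m j, hmjF, ?_⟩
    have hval1 : (if m j ∈ E then y (m j) else if ∃ i, m j = m i then one else zer) = one := by
      rw [if_neg hmjE, if_pos ⟨j, rfl⟩]
    have hnotmark : ¬ ∃ i, m j - t = m i := by
      rintro ⟨i, hi⟩
      have htw : ∀ w, w ≠ z → t w = 0 := by
        intro w hw
        have := congrFun hi w
        simp [hm, hw, sub_eq_iff_eq_add] at this
        omega
      have htz : (2 : ℤ) ^ j - t z = 2 ^ i := by
        have := congrFun hi z
        simpa [hmz, sub_eq_iff_eq_add, hm] using this
      have htzne : t z ≠ 0 := by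
        intro h0
        apply ht; funext w
        by_cases hw : w = z
        · rw [hw]; exact h0
        · exact htw w hw
      have hij : i ≠ j := by
        intro h; rw [h] at htz; omega
      have habs : ((c:ℤ)) = |t z| := by rw [hz] at *; exact (Int.abs_eq_natAbs _).symm
      have hcle : (t z : ℤ) ≤ c ∧ (-(c:ℤ)) ≤ t z := by
        rw [habs]; exact ⟨le_abs_self _, neg_abs_le _⟩
      have hjpow : (j : ℤ) ≤ 2 ^ (j - 1) := by
        have := Nat.lt_two_pow_self (n := j - 1)
        have : j - 1 < 2 ^ (j-1) := this
        have hj1' : 1 ≤ j := by omega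
        exact_mod_cast by omega
      rcases lt_or_gt_of_ne hij with hlt | hgt
      · -- i < j : t z = 2^j - 2^i ≥ 2^(j-1)
        have hi' : (2:ℤ) ^ i ≤ 2 ^ (j-1) := by
          apply pow_le_pow_right₀ (by norm_num)
          omega
        have h2j : (2:ℤ) ^ j = 2 ^ (j-1) * 2 := by
          rw [← pow_succ]
          congr 1
          omega
        have : (2:ℤ) ^ (j-1) ≤ t z := by omega
        have : (c : ℤ) + 1 ≤ t z := by
          calc (c:ℤ) + 1 ≤ j := by exact_mod_cast hjc
          _ ≤ 2 ^ (j-1) := hjpow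
          _ ≤ t z := this
        omega
      · -- i > j : t z = 2^j - 2^i ≤ -2^j
        have hi' : (2:ℤ) ^ j * 2 ≤ 2 ^ i := by
          rw [← pow_succ]
          apply pow_le_pow_right₀ (by norm_num)
          omega
        have hjp : (j:ℤ) ≤ 2 ^ j := by
          have := Nat.lt_two_pow_self (n := j)
          exact_mod_cast by omega
        have : t z ≤ -((2:ℤ) ^ j) := by omega
        have : t z ≤ -((c:ℤ) + 1) := by
          have : (c:ℤ) + 1 ≤ 2 ^ j := by
            calc (c:ℤ) + 1 ≤ j := by exact_mod_cast hjc
            _ ≤ 2 ^ j := hjp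
          omega
        omega
    have hval2 : (if m j - t ∈ E then y (m j - t) else if ∃ i, m j - t = m i then one else zer) = zer := by
      rw [if_neg (by simpa using hj2), if_neg hnotmark]
    simp only [hval1, hval2]
    simp [one, zer, Fin.ext_iff]
  · intro u hu; simp [hu]

section Mach
variable {d n k : ℕ}

/-- The state function of a machine. -/
def Sfun (T : Tape d n k → Tape d n k) (y : (Fin d → ℤ) → Fin n) (q : Fin k) : Fin k :=
  (T (y, q)).2

open Classical in
/-- The displacement function of a machine, extracted from a chosen local rule. -/
noncomputable def Dfun (T : Tape d n k → Tape d n k) (y : (Fin d → ℤ) → Fin n) (q : Fin k) :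
    Fin d → ℤ :=
  if h : IsTapeTM d n k T then -((h.choose_spec.choose_spec.choose (y, q)).2.2) else 0

theorem Dfun_spec {T : Tape d n k → Tape d n k} (h : IsTapeTM d n k T) :
    ∃ (Fi Fo : Finset (Fin d → ℤ)) (g : Tape d n k → ((Fin d → ℤ) → Fin n)),
      (∀ (x y : (Fin d → ℤ) → Fin n) (q : Fin k), (∀ u ∈ Fi, x u = y u) →
          Dfun T x q = Dfun T y q ∧ g (x, q) = g (y, q) ∧ Sfun T x q = Sfun T y q) ∧
      (∀ (x : (Fin d → ℤ) → Fin n) (q : Fin k),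
        T (x, q) = (shiftC (Dfun T x q) (fun u => if u ∈ Fo then g (x, q) u else x u),
          Sfun T x q)) := by
  classical
  obtain ⟨hloc, hrule⟩ := h.choose_spec.choose_spec.choose_spec
  set Fi := h.choose
  set Fo := h.choose_spec.choose
  set f := h.choose_spec.choose_spec.choose
  have hD : ∀ y q, Dfun T y q = -((f (y, q)).2.2) := by
    intro y q
    unfold Dfun
    rw [dif_pos h]
  refine ⟨Fi, Fo, fun p => (f p).1, ?_, ?_⟩
  · intro x y q hxy
    have := hloc x y q hxy
    refine ⟨by rw [hD, hD, this], by simp only [this], ?_⟩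
    unfold Sfun
    rw [hrule, hrule, this]
  · intro x q
    have h2 : Sfun T x q = (f (x, q)).2.1 := by unfold Sfun; rw [hrule]
    rw [hD, h2, hrule x q]
end Mach

section Mach2
variable {d n k : ℕ}

def FixT (T : Tape d n k → Tape d n k) : Prop :=
  ∀ x q, ∃ w : Fin d → ℤ, (T (x, q)).1 = shiftC w x

theorem tape_eq (hd : 1 ≤ d) (hn2 : 2 ≤ n) {T : Tape d n k → Tape d n k}
    (hT : IsTapeTM d n k T) (hfix : FixT T) (y : (Fin d → ℤ) → Fin n) (q : Fin k) :
    T (y, q) = (shiftC (Dfun T y q) y, Sfun T y q) := by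
  obtain ⟨Fi, Fo, g, hloc, hrule⟩ := Dfun_spec hT
  obtain ⟨y', hy', hagree⟩ := exists_rigid_ext hd hn2 (Fi ∪ Fo) y
  have hagFi : ∀ u ∈ Fi, y' u = y u := fun u hu => hagree u (Finset.mem_union_left _ hu)
  obtain ⟨hDeq, hgeq, hSeq⟩ := hloc y' y q hagFi
  obtain ⟨w, hw⟩ := hfix y' q
  have hr := hrule y' q
  have h1 : shiftC (Dfun T y' q) (fun u => if u ∈ Fo then g (y', q) u else y' u)
      = shiftC w y' := by
    rw [← hw]
    rw [hr]
  have h2 : (fun u => if u ∈ Fo then g (y', q) u else y' u)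
      = shiftC (w - Dfun T y' q) y' := by
    have h2' := congrArg (shiftC (-(Dfun T y' q))) h1
    rw [shiftC_shiftC, shiftC_shiftC, neg_add_cancel, shiftC_zero] at h2'
    rw [h2']
    congr 1
    abel_nf
  have h3 : w - Dfun T y' q = 0 := by
    refine hy'.shift_eq (F := Fo) (fun u hu => ?_)
    have := congrFun h2 u
    rw [if_neg hu] at this
    exact this
  have hpatch' : (fun u => if u ∈ Fo then g (y', q) u else y' u) = y' := by
    rw [h2, h3, shiftC_zero]
  have hgFo : ∀ u ∈ Fo, g (y, q) u = y u := by
    intro u hu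
    have h4 := congrFun hpatch' u
    rw [if_pos hu] at h4
    calc g (y, q) u = g (y', q) u := by rw [hgeq]
      _ = y' u := h4
      _ = y u := hagree u (Finset.mem_union_right _ hu)
  have hpy : (fun u => if u ∈ Fo then g (y, q) u else y u) = y := by
    funext u
    by_cases hu : u ∈ Fo
    · rw [if_pos hu]; exact hgFo u hu
    · rw [if_neg hu]
  rw [hrule y q, hpy]

theorem Dfun_unique (hd : 1 ≤ d) (hn2 : 2 ≤ n) {T : Tape d n k → Tape d n k}
    (hT : IsTapeTM d n k T) (hfix : FixT T) {y : (Fin d → ℤ) → Fin n}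
    (hy : Rigid y) {q : Fin k} {t : Fin d → ℤ}
    (h : (T (y, q)).1 = shiftC t y) : t = Dfun T y q := by
  have h1 := congrArg Prod.fst (tape_eq hd hn2 hT hfix y q)
  simp only at h1
  exact hy.shiftC_inj (h ▸ h1)

end Mach2
section Mach3
variable {d n k : ℕ}

theorem FixT_comp (hd : 1 ≤ d) (hn2 : 2 ≤ n) {a b : Tape d n k → Tape d n k}
    (ha : IsTapeTM d n k a) (hfa : FixT a) (hb : IsTapeTM d n k b) (hfb : FixT b) :
    FixT (b ∘ a) := by
  intro x q
  rw [Function.comp_apply, tape_eq hd hn2 ha hfa x q,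
    tape_eq hd hn2 hb hfb (shiftC (Dfun a x q) x) (Sfun a x q)]
  exact ⟨_, by rw [shiftC_shiftC]⟩

theorem Dfun_comp (hd : 1 ≤ d) (hn2 : 2 ≤ n) {a b : Tape d n k → Tape d n k}
    (ha : IsTapeTM d n k a) (hfa : FixT a) (hb : IsTapeTM d n k b) (hfb : FixT b)
    (hba : IsTapeTM d n k (b ∘ a)) (y : (Fin d → ℤ) → Fin n) (q : Fin k) :
    Dfun (b ∘ a) y q
      = Dfun b (shiftC (Dfun a y q) y) (Sfun a y q) + Dfun a y q := by
  classical
  have hfba : FixT (b ∘ a) := FixT_comp hd hn2 ha hfa hb hfb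
  obtain ⟨Fia, _, _, hloca, _⟩ := Dfun_spec ha
  obtain ⟨Fib, _, _, hlocb, _⟩ := Dfun_spec hb
  obtain ⟨Fiba, _, _, hlocba, _⟩ := Dfun_spec hba
  set Da := Dfun a y q with hDa
  obtain ⟨y', hy', hagree⟩ := exists_rigid_ext hd hn2
    (Fia ∪ Fiba ∪ Fib.image (fun u => u - Da)) y
  have hagA : ∀ u ∈ Fia, y' u = y u := fun u hu => hagree u (by simp [hu])
  have hagBA : ∀ u ∈ Fiba, y' u = y u := fun u hu => hagree u (by simp [hu])
  have hagB : ∀ u ∈ Fib, shiftC Da y' u = shiftC Da y u := by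
    intro u hu
    show y' (u - Da) = y (u - Da)
    exact hagree (u - Da)
      (Finset.mem_union_right _ (Finset.mem_image.mpr ⟨u, hu, rfl⟩))
  obtain ⟨hDa', _, hSa'⟩ := hloca y' y q hagA
  obtain ⟨hDba', _, _⟩ := hlocba y' y q hagBA
  have hb1 : (b ∘ a) (y', q) = b (shiftC Da y', Sfun a y q) := by
    rw [Function.comp_apply, tape_eq hd hn2 ha hfa y' q, hDa', hSa']
  have hb2 : ((b ∘ a) (y', q)).1 = shiftC (Dfun b (shiftC Da y') (Sfun a y q) + Da) y' := by
    rw [hb1, tape_eq hd hn2 hb hfb]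
    simp only
    rw [shiftC_shiftC]
  have hkey : Dfun b (shiftC Da y') (Sfun a y q) + Da = Dfun (b ∘ a) y' q :=
    Dfun_unique hd hn2 hba hfba hy' hb2
  obtain ⟨hDb', _, _⟩ := hlocb (shiftC Da y') (shiftC Da y) (Sfun a y q) hagB
  rw [← hDba', ← hkey, hDb']

theorem Dfun_inv (hd : 1 ≤ d) (hn2 : 2 ≤ n) {T U : Tape d n k → Tape d n k}
    (hT : IsTapeTM d n k T) (hfT : FixT T) (hU : IsTapeTM d n k U) (hfU : FixT U)
    (hUT : ∀ p, U (T p) = p) (y : (Fin d → ℤ) → Fin n) (q : Fin k) :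
    Dfun U (shiftC (Dfun T y q) y) (Sfun T y q) = -(Dfun T y q) := by
  classical
  obtain ⟨FiT, _, _, hlocT, _⟩ := Dfun_spec hT
  obtain ⟨FiU, _, _, hlocU, _⟩ := Dfun_spec hU
  set Da := Dfun T y q with hDa
  obtain ⟨y', hy', hagree⟩ := exists_rigid_ext hd hn2
    (FiT ∪ FiU.image (fun u => u - Da)) y
  have hagT : ∀ u ∈ FiT, y' u = y u := fun u hu => hagree u (by simp [hu])
  have hagU : ∀ u ∈ FiU, shiftC Da y' u = shiftC Da y u := by
    intro u hu
    show y' (u - Da) = y (u - Da)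
    exact hagree (u - Da)
      (Finset.mem_union_right _ (Finset.mem_image.mpr ⟨u, hu, rfl⟩))
  obtain ⟨hDT', _, hST'⟩ := hlocT y' y q hagT
  have h1 : U (T (y', q)) = (y', q) := hUT _
  have h2 : U (T (y', q)) = U (shiftC Da y', Sfun T y q) := by
    rw [tape_eq hd hn2 hT hfT y' q, hDT', hST']
  have h3 : (y' : (Fin d → ℤ) → Fin n)
      = shiftC (Dfun U (shiftC Da y') (Sfun T y q) + Da) y' := by
    have := congrArg Prod.fst (h2.symm.trans h1)
    rw [tape_eq hd hn2 hU hfU] at this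
    simp only at this
    rw [shiftC_shiftC] at this
    exact this.symm
  have h4 : Dfun U (shiftC Da y') (Sfun T y q) + Da = 0 := by
    have h5 : shiftC (Dfun U (shiftC Da y') (Sfun T y q) + Da) y' = shiftC 0 y' := by
      rw [shiftC_zero]; exact h3.symm
    exact hy'.shiftC_inj h5
  obtain ⟨hDU', _, _⟩ := hlocU (shiftC Da y') (shiftC Da y) (Sfun T y q) hagU
  rw [← hDU']
  linear_combination (norm := module) h4

end Mach3
section Mach4
variable {d n k : ℕ}

theorem IsTapeTM_comp (hd : 1 ≤ d) (hn2 : 2 ≤ n) {a b : Tape d n k → Tape d n k}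
    (ha : IsTapeTM d n k a) (hfa : FixT a) (hb : IsTapeTM d n k b) (hfb : FixT b) :
    IsTapeTM d n k (b ∘ a) := by
  classical
  obtain ⟨Fia, _, _, hloca, _⟩ := Dfun_spec ha
  obtain ⟨Fib, _, _, hlocb, _⟩ := Dfun_spec hb
  have hn0 : 0 < n := by omega
  set ext : ((u : {x // x ∈ Fia}) → Fin n) → ((Fin d → ℤ) → Fin n) :=
    fun P u => if h : u ∈ Fia then P ⟨u, h⟩ else ⟨0, hn0⟩ with hext
  set V : Finset (Fin d → ℤ) :=
    Finset.image (fun Pq : ((u : {x // x ∈ Fia}) → Fin n) × Fin k =>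
      Dfun a (ext Pq.1) Pq.2) Finset.univ with hVdef
  have hV : ∀ (x : (Fin d → ℤ) → Fin n) (q : Fin k), Dfun a x q ∈ V := by
    intro x q
    have hag : ∀ u ∈ Fia, ext (fun u => x u.1) u = x u := by
      intro u hu; simp [hext, hu]
    obtain ⟨hD, _, _⟩ := hloca (ext (fun u => x u.1)) x q hag
    exact Finset.mem_image.mpr ⟨(fun u => x u.1, q), Finset.mem_univ _, hD⟩
  refine ⟨Fia ∪ V.biUnion (fun v => Fib.image (fun u => u - v)), ∅,
    fun p => (fun _ => ⟨0, hn0⟩, (b (a p)).2,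
      -(Dfun b (shiftC (Dfun a p.1 p.2) p.1) (Sfun a p.1 p.2) + Dfun a p.1 p.2)),
    ?_, ?_⟩
  · intro x y q hxy
    have hxyA : ∀ u ∈ Fia, x u = y u := fun u hu => hxy u (Finset.mem_union_left _ hu)
    obtain ⟨hDa, _, hSa⟩ := hloca x y q hxyA
    have hxyB : ∀ u ∈ Fib, shiftC (Dfun a x q) x u = shiftC (Dfun a y q) y u := by
      intro u hu
      rw [← hDa]
      show x (u - Dfun a x q) = y (u - Dfun a x q)
      refine hxy _ (Finset.mem_union_right _ (Finset.mem_biUnion.mpr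
        ⟨Dfun a x q, hV x q, Finset.mem_image.mpr ⟨u, hu, rfl⟩⟩))
    obtain ⟨hDb, _, hSb⟩ := hlocb (shiftC (Dfun a x q) x) (shiftC (Dfun a y q) y)
      (Sfun a x q) hxyB
    have hax : a (x, q) = (shiftC (Dfun a x q) x, Sfun a x q) := tape_eq hd hn2 ha hfa x q
    have hay : a (y, q) = (shiftC (Dfun a y q) y, Sfun a y q) := tape_eq hd hn2 ha hfa y q
    have hstate : (b (a (x, q))).2 = (b (a (y, q))).2 := by
      rw [hax, hay, ← hSa]
      show Sfun b (shiftC (Dfun a x q) x) (Sfun a x q)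
        = Sfun b (shiftC (Dfun a y q) y) (Sfun a x q)
      exact hSb
    refine Prod.ext rfl (Prod.ext ?_ ?_)
    · exact hstate
    · simp only
      rw [hDb, hSa, hDa]
  · intro x q
    refine Prod.ext ?_ rfl
    show ((b ∘ a) (x, q)).1 = _
    rw [Function.comp_apply, tape_eq hd hn2 ha hfa x q,
      tape_eq hd hn2 hb hfb (shiftC (Dfun a x q) x) (Sfun a x q)]
    simp only [neg_neg, Finset.notMem_empty, if_false]
    rw [shiftC_shiftC]

end Mach4
section PhiSec
variable {d n k : ℕ}

/-- The induced map on configurations of the full shift over `PermAlphabet`. -/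
noncomputable def Phi (T : Tape d n k → Tape d n k)
    (z : (Fin d → ℤ) → PermAlphabet n k) : (Fin d → ℤ) → PermAlphabet n k :=
  fun u => ((z u).1,
    fun q => (z (u - Dfun T (shiftC (-u) (fun v => (z v).1)) q)).2
      (Sfun T (shiftC (-u) (fun v => (z v).1)) q))

theorem Phi_shift (T : Tape d n k → Tape d n k) (v : Fin d → ℤ)
    (z : (Fin d → ℤ) → PermAlphabet n k) :
    Phi T (shiftC v z) = shiftC v (Phi T z) := by
  funext u
  set x : (Fin d → ℤ) → Fin n := fun w => (z w).1 with hxdef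
  have harg : shiftC (-u) (fun w => ((shiftC v z) w).1) = shiftC (-(u - v)) x := by
    show shiftC (-u) (shiftC v x) = shiftC (-(u - v)) x
    rw [shiftC_shiftC]
    congr 1
    ring
  refine Prod.ext rfl ?_
  funext q
  show ((shiftC v z) (u - Dfun T (shiftC (-u) (fun w => ((shiftC v z) w).1)) q)).2
      (Sfun T (shiftC (-u) (fun w => ((shiftC v z) w).1)) q)
    = (z ((u - v) - Dfun T (shiftC (-(u - v)) x) q)).2 (Sfun T (shiftC (-(u - v)) x) q)
  rw [harg]
  show (z (u - Dfun T (shiftC (-(u - v)) x) q - v)).2 (Sfun T (shiftC (-(u - v)) x) q)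
    = (z ((u - v) - Dfun T (shiftC (-(u - v)) x) q)).2 (Sfun T (shiftC (-(u - v)) x) q)
  rw [sub_right_comm]

theorem Phi_inv (hd : 1 ≤ d) (hn2 : 2 ≤ n) {T U : Tape d n k → Tape d n k}
    (hT : IsTapeTM d n k T) (hfT : FixT T) (hU : IsTapeTM d n k U) (hfU : FixT U)
    (hUT : ∀ p, U (T p) = p) (hTU : ∀ p, T (U p) = p)
    (z : (Fin d → ℤ) → PermAlphabet n k) :
    Phi U (Phi T z) = z := by
  funext u
  set x : (Fin d → ℤ) → Fin n := fun w => (z w).1 with hxdef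
  refine Prod.ext rfl ?_
  funext q
  set cq := shiftC (-u) x with hcq
  set DU := Dfun U cq q with hDU
  set p := Sfun U cq q with hp
  show ((Phi T z) (u - DU)).2 p = (z u).2 q
  show (z ((u - DU) - Dfun T (shiftC (-(u - DU)) x) p)).2 (Sfun T (shiftC (-(u - DU)) x) p)
    = (z u).2 q
  have harg : shiftC (-(u - DU)) x = shiftC DU cq := by
    rw [hcq, shiftC_shiftC]
    congr 1
    ring
  have hU1 : U (cq, q) = (shiftC DU cq, p) := tape_eq hd hn2 hU hfU cq q
  have hDinv : Dfun T (shiftC DU cq) p = -DU :=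
    Dfun_inv hd hn2 hU hfU hT hfT hTU cq q
  have hSinv : Sfun T (shiftC DU cq) p = q := by
    show (T (shiftC DU cq, p)).2 = q
    rw [← hU1, hTU]
  rw [harg, hDinv, hSinv]
  have : u - DU - -DU = u := by ring
  rw [this]

theorem Phi_comp (hd : 1 ≤ d) (hn2 : 2 ≤ n) {a b : Tape d n k → Tape d n k}
    (ha : IsTapeTM d n k a) (hfa : FixT a) (hb : IsTapeTM d n k b) (hfb : FixT b)
    (hba : IsTapeTM d n k (b ∘ a)) (z : (Fin d → ℤ) → PermAlphabet n k) :
    Phi (b ∘ a) z = Phi a (Phi b z) := by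
  funext u
  set x : (Fin d → ℤ) → Fin n := fun w => (z w).1 with hxdef
  refine Prod.ext rfl ?_
  funext q
  set cq := shiftC (-u) x with hcq
  set Da := Dfun a cq q with hDa
  set Sa := Sfun a cq q with hSa
  show (z (u - Dfun (b ∘ a) cq q)).2 (Sfun (b ∘ a) cq q)
    = ((Phi b z) (u - Da)).2 Sa
  show (z (u - Dfun (b ∘ a) cq q)).2 (Sfun (b ∘ a) cq q)
    = (z ((u - Da) - Dfun b (shiftC (-(u - Da)) x) Sa)).2 (Sfun b (shiftC (-(u - Da)) x) Sa)
  have harg : shiftC (-(u - Da)) x = shiftC Da cq := by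
    rw [hcq, shiftC_shiftC]
    congr 1
    ring
  rw [harg]
  have hDc : Dfun (b ∘ a) cq q = Dfun b (shiftC Da cq) Sa + Da :=
    Dfun_comp hd hn2 ha hfa hb hfb hba cq q
  have hSc : Sfun (b ∘ a) cq q = Sfun b (shiftC Da cq) Sa := by
    show ((b ∘ a) (cq, q)).2 = (b (shiftC Da cq, Sa)).2
    rw [Function.comp_apply, tape_eq hd hn2 ha hfa cq q]
  rw [hDc, hSc]
  have : u - (Dfun b (shiftC Da cq) Sa + Da) = u - Da - Dfun b (shiftC Da cq) Sa := by ring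
  rw [this]

end PhiSec
section ContSec
variable {d n k : ℕ}

theorem cylinder_open {A : Type*} [TopologicalSpace A] [DiscreteTopology A]
    (E : Finset (Fin d → ℤ)) (z₀ : (Fin d → ℤ) → A) :
    IsOpen {z : (Fin d → ℤ) → A | ∀ v ∈ E, z v = z₀ v} := by
  classical
  have h1 : {z : (Fin d → ℤ) → A | ∀ v ∈ E, z v = z₀ v}
      = ⋂ v ∈ E, {z : (Fin d → ℤ) → A | z v = z₀ v} := by
    ext z; simp
  rw [h1]
  refine isOpen_biInter_finset (fun v _ => ?_)
  have h2 : {z : (Fin d → ℤ) → A | z v = z₀ v}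
      = (fun z : (Fin d → ℤ) → A => z v) ⁻¹' {z₀ v} := rfl
  rw [h2]
  exact (isOpen_discrete {z₀ v}).preimage (continuous_apply v)

theorem Phi_continuous {T : Tape d n k → Tape d n k} (hT : IsTapeTM d n k T) :
    Continuous (Phi T) := by
  classical
  obtain ⟨Fi, _, _, hloc, _⟩ := Dfun_spec hT
  apply continuous_pi
  intro u
  apply IsLocallyConstant.continuous
  rw [IsLocallyConstant.iff_exists_open]
  intro z₀
  set x₀ : (Fin d → ℤ) → Fin n := fun v => (z₀ v).1 with hx₀
  set E : Finset (Fin d → ℤ) :=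
    (Fi.image (fun w => w + u) ∪ {u}) ∪
      Finset.image (fun q => u - Dfun T (shiftC (-u) x₀) q) Finset.univ with hE
  refine ⟨{z : (Fin d → ℤ) → PermAlphabet n k | ∀ v ∈ E, z v = z₀ v},
    cylinder_open E z₀, fun v _ => rfl, ?_⟩
  intro z hz
  have hmem1 : ∀ w ∈ Fi, w + u ∈ E := by
    intro w hw
    rw [hE]
    exact Finset.mem_union_left _ (Finset.mem_union_left _
      (Finset.mem_image.mpr ⟨w, hw, rfl⟩))
  have hmemu : u ∈ E := by
    rw [hE]
    exact Finset.mem_union_left _ (Finset.mem_union_right _ (Finset.mem_singleton_self u))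
  have hmem2 : ∀ q : Fin k, u - Dfun T (shiftC (-u) x₀) q ∈ E := by
    intro q
    rw [hE]
    exact Finset.mem_union_right _ (Finset.mem_image.mpr ⟨q, Finset.mem_univ q, rfl⟩)
  have hxE : ∀ w ∈ Fi, shiftC (-u) (fun v => (z v).1) w = shiftC (-u) x₀ w := by
    intro w hw
    show (z (w - -u)).1 = (z₀ (w - -u)).1
    have hwu : w - -u ∈ E := by
      rw [sub_neg_eq_add]
      exact hmem1 w hw
    rw [hz _ hwu]
  refine Prod.ext ?_ ?_
  · show (z u).1 = (z₀ u).1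
    rw [hz u hmemu]
  · funext q
    obtain ⟨hD, -, hS⟩ := hloc _ _ q hxE
    show (z (u - Dfun T (shiftC (-u) (fun v => (z v).1)) q)).2
        (Sfun T (shiftC (-u) (fun v => (z v).1)) q)
      = (z₀ (u - Dfun T (shiftC (-u) x₀) q)).2 (Sfun T (shiftC (-u) x₀) q)
    rw [hD, hS, hz _ (hmem2 q)]

end ContSec

section RFASec
variable {d n k : ℕ}

theorem RFA_fixT {e : Equiv.Perm (Tape d n k)} (he : e ∈ RFAfixSet d n k) :
    FixT (⇑e) := fun x q => he.2.2 x q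

theorem RFA_fixT_symm {e : Equiv.Perm (Tape d n k)} (he : e ∈ RFAfixSet d n k) :
    FixT (⇑e.symm) := by
  intro x q
  obtain ⟨w, hw⟩ := he.2.2 (e.symm (x, q)).1 (e.symm (x, q)).2
  set y := (e.symm (x, q)).1 with hy
  have h1 : e (y, (e.symm (x, q)).2) = (x, q) := by
    rw [hy, Prod.mk.eta]
    exact e.apply_symm_apply _
  have h2 : x = shiftC w y := by
    rw [← hw, h1]
  refine ⟨-w, ?_⟩
  show y = shiftC (-w) x
  rw [h2, shiftC_shiftC, neg_add_cancel, shiftC_zero]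

theorem RFA_mul (hd : 1 ≤ d) (hn2 : 2 ≤ n) {e₁ e₂ : Equiv.Perm (Tape d n k)}
    (he₁ : e₁ ∈ RFAfixSet d n k) (he₂ : e₂ ∈ RFAfixSet d n k) :
    e₁ * e₂ ∈ RFAfixSet d n k := by
  have hco : ⇑(e₁ * e₂) = ⇑e₁ ∘ ⇑e₂ := rfl
  have hcos : ⇑(e₁ * e₂).symm = ⇑e₂.symm ∘ ⇑e₁.symm := rfl
  refine ⟨?_, ?_, ?_⟩
  · rw [hco]
    exact IsTapeTM_comp hd hn2 he₂.1 (RFA_fixT he₂) he₁.1 (RFA_fixT he₁)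
  · rw [hcos]
    exact IsTapeTM_comp hd hn2 he₁.2.1 (RFA_fixT_symm he₁) he₂.2.1 (RFA_fixT_symm he₂)
  · intro x q
    exact FixT_comp hd hn2 he₂.1 (RFA_fixT he₂) he₁.1 (RFA_fixT he₁) x q

end RFASec
/-- There is an injective group homomorphism from
`RFA_fix(ℤ^d,n,k)` into `Aut(A^{ℤ^d})`, the group of self-homeomorphisms of the
full shift `A^{ℤ^d}` commuting with all shift maps, where `A = Σ × (ℤ/2ℤ)^Q`. -/
theorem RFAfix_embeds_in_Aut
    (d n k : ℕ) (hd : 1 ≤ d) (hn : 1 ≤ n) (hk : 1 ≤ k) :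
    ∃ Φ : Equiv.Perm (Tape d n k) →
        (((Fin d → ℤ) → PermAlphabet n k) ≃ₜ ((Fin d → ℤ) → PermAlphabet n k)),
      (∀ e ∈ RFAfixSet d n k, ∀ (v : Fin d → ℤ) (x : (Fin d → ℤ) → PermAlphabet n k),
          Φ e (shiftC v x) = shiftC v (Φ e x)) ∧
      (∀ e₁ ∈ RFAfixSet d n k, ∀ e₂ ∈ RFAfixSet d n k,
          ∀ x : (Fin d → ℤ) → PermAlphabet n k, Φ (e₁ * e₂) x = Φ e₁ (Φ e₂ x)) ∧
      (∀ e₁ ∈ RFAfixSet d n k, ∀ e₂ ∈ RFAfixSet d n k, Φ e₁ = Φ e₂ → e₁ = e₂) := by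
  classical
  by_cases hn2 : 2 ≤ n
  · -- main case `n ≥ 2`
    refine ⟨fun e => if h : e ∈ RFAfixSet d n k then
        ⟨⟨Phi ⇑e.symm, Phi ⇑e,
          fun z => Phi_inv hd hn2 h.2.1 (RFA_fixT_symm h) h.1 (RFA_fixT h)
            (fun p => e.apply_symm_apply p) (fun p => e.symm_apply_apply p) z,
          fun z => Phi_inv hd hn2 h.1 (RFA_fixT h) h.2.1 (RFA_fixT_symm h)
            (fun p => e.symm_apply_apply p) (fun p => e.apply_symm_apply p) z⟩,
          Phi_continuous h.2.1, Phi_continuous h.1⟩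
      else Homeomorph.refl _, ?_, ?_, ?_⟩
    · intro e he v x
      simp only [dif_pos he]
      exact Phi_shift _ v x
    · intro e₁ he₁ e₂ he₂ x
      have h12 := RFA_mul hd hn2 he₁ he₂
      simp only [dif_pos he₁, dif_pos he₂, dif_pos h12]
      show Phi ⇑(e₁ * e₂).symm x = Phi ⇑e₁.symm (Phi ⇑e₂.symm x)
      have hco : ⇑(e₁ * e₂).symm = ⇑e₂.symm ∘ ⇑e₁.symm := rfl
      have hba : IsTapeTM d n k (⇑e₂.symm ∘ ⇑e₁.symm) := by
        rw [← hco]; exact h12.2.1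
      rw [hco]
      exact Phi_comp hd hn2 he₁.2.1 (RFA_fixT_symm he₁) he₂.2.1 (RFA_fixT_symm he₂) hba x
    · intro e₁ he₁ e₂ he₂ hΦ
      simp only [dif_pos he₁, dif_pos he₂] at hΦ
      have hfun : Phi ⇑e₁.symm = Phi ⇑e₂.symm :=
        congrArg (fun (h : ((Fin d → ℤ) → PermAlphabet n k) ≃ₜ _) => h.toEquiv.toFun) hΦ
      have hsymm : e₁.symm = e₂.symm := by
        apply Equiv.ext
        rintro ⟨y, q⟩
        set D₁ := Dfun (⇑e₁.symm) y q with hD₁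
        set S₁ := Sfun (⇑e₁.symm) y q with hS₁
        set z : (Fin d → ℤ) → PermAlphabet n k :=
          fun v => (y v, fun s => if v = 0 - D₁ ∧ s = S₁ then 1 else 0) with hz
        have hxz : (fun v => (z v).1) = y := rfl
        have h0 : shiftC (-(0 : Fin d → ℤ)) y = y := by rw [neg_zero, shiftC_zero]
        have hev := congrFun (congrArg Prod.snd (congrFun (congrFun hfun z) 0)) q
        have hev1 : (Phi (⇑e₁.symm) z 0).2 q = 1 := by
          show (z ((0 : Fin d → ℤ) - Dfun (⇑e₁.symm) (shiftC (-0) (fun v => (z v).1)) q)).2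
              (Sfun (⇑e₁.symm) (shiftC (-0) (fun v => (z v).1)) q) = 1
          rw [hxz, h0]
          show (if (0 : Fin d → ℤ) - D₁ = 0 - D₁ ∧ S₁ = S₁ then (1 : ZMod 2) else 0) = 1
          rw [if_pos ⟨rfl, rfl⟩]
        have hev2 : (Phi (⇑e₂.symm) z 0).2 q
            = if (0 : Fin d → ℤ) - Dfun (⇑e₂.symm) y q = 0 - D₁ ∧ Sfun (⇑e₂.symm) y q = S₁
              then 1 else 0 := by
          show (z ((0 : Fin d → ℤ) - Dfun (⇑e₂.symm) (shiftC (-0) (fun v => (z v).1)) q)).2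
              (Sfun (⇑e₂.symm) (shiftC (-0) (fun v => (z v).1)) q) = _
          rw [hxz, h0]
        rw [hev1, hev2] at hev
        have hcond : (0 : Fin d → ℤ) - Dfun (⇑e₂.symm) y q = 0 - D₁
            ∧ Sfun (⇑e₂.symm) y q = S₁ := by
          by_contra hc
          rw [if_neg hc] at hev
          exact one_ne_zero hev
        have hDeq : Dfun (⇑e₂.symm) y q = D₁ := by
          have h := hcond.1
          have h' : -(Dfun (⇑e₂.symm) y q) = -D₁ := by
            rw [← zero_sub, ← zero_sub]
            exact h
          exact neg_injective h'
        have h1 := tape_eq hd hn2 he₁.2.1 (RFA_fixT_symm he₁) y q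
        have h2 := tape_eq hd hn2 he₂.2.1 (RFA_fixT_symm he₂) y q
        rw [h1, h2, hDeq, hcond.2]
      have := congrArg Equiv.symm hsymm
      simpa using this
  · -- degenerate case `n = 1`
    have hn1 : n = 1 := by omega
    subst hn1
    haveI : Subsingleton ((Fin d → ℤ) → Fin 1) :=
      ⟨fun a b => funext fun u => Subsingleton.elim _ _⟩
    set x₀ : (Fin d → ℤ) → Fin 1 := fun _ => 0 with hx₀
    set ρ : Equiv.Perm (Tape d 1 k) → Fin k → Fin k := fun e q => (e (x₀, q)).2 with hρ
    have hρx : ∀ (f : Equiv.Perm (Tape d 1 k)) (x : (Fin d → ℤ) → Fin 1) (q : Fin k),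
        (f (x, q)).2 = ρ f q := by
      intro f x q
      rw [Subsingleton.elim x x₀]
    have hρinv : ∀ (e : Equiv.Perm (Tape d 1 k)) (q : Fin k), ρ e.symm (ρ e q) = q := by
      intro e q
      show (e.symm (x₀, (e (x₀, q)).2)).2 = q
      have hpair : ((x₀, (e (x₀, q)).2) : Tape d 1 k) = e (x₀, q) :=
        Prod.ext (Subsingleton.elim _ _) rfl
      rw [hpair, e.symm_apply_apply]
    set F : Equiv.Perm (Tape d 1 k) → ((Fin d → ℤ) → PermAlphabet 1 k) →
        ((Fin d → ℤ) → PermAlphabet 1 k) :=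
      fun e z u => ((z u).1, fun q => (z u).2 (ρ e.symm q)) with hF
    have hcont : ∀ e, Continuous (F e) := by
      intro e
      apply continuous_pi
      intro u
      show Continuous fun z : (Fin d → ℤ) → PermAlphabet 1 k =>
        (fun a : PermAlphabet 1 k => ((a.1, fun q => a.2 (ρ e.symm q)) : PermAlphabet 1 k)) (z u)
      have h1 : Continuous fun z : (Fin d → ℤ) → PermAlphabet 1 k => z u := continuous_apply u
      have h2 : Continuous
          (fun a : PermAlphabet 1 k => ((a.1, fun q => a.2 (ρ e.symm q)) : PermAlphabet 1 k)) :=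
        continuous_of_discreteTopology
      exact h2.comp h1
    refine ⟨fun e =>
        ⟨⟨F e, F e.symm,
          fun z => by
            funext u
            refine Prod.ext rfl ?_
            funext q
            show (z u).2 (ρ e.symm (ρ e.symm.symm q)) = (z u).2 q
            rw [Equiv.symm_symm] at *
            rw [hρinv]  -- pattern ρ e.symm (ρ e q)?
            ,
          fun z => by
            funext u
            refine Prod.ext rfl ?_
            funext q
            show (z u).2 (ρ e.symm.symm (ρ e.symm q)) = (z u).2 q
            rw [hρinv]⟩,
          hcont e, hcont e.symm⟩, ?_, ?_, ?_⟩
    · intro e he v x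
      rfl
    · intro e₁ he₁ e₂ he₂ x
      show F (e₁ * e₂) x = F e₁ (F e₂ x)
      funext u
      refine Prod.ext rfl ?_
      funext q
      show (x u).2 (ρ (e₁ * e₂).symm q) = (x u).2 (ρ e₂.symm (ρ e₁.symm q))
      have hq : ρ (e₁ * e₂).symm q = ρ e₂.symm (ρ e₁.symm q) := by
        show ((e₁ * e₂).symm (x₀, q)).2 = ρ e₂.symm (ρ e₁.symm q)
        have hco : (e₁ * e₂).symm (x₀, q) = e₂.symm (e₁.symm (x₀, q)) := rfl
        rw [hco]
        have h1 : e₁.symm (x₀, q) = ((e₁.symm (x₀, q)).1, (e₁.symm (x₀, q)).2) := rfl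
        rw [h1, hρx e₂.symm]
      rw [hq]
    · intro e₁ he₁ e₂ he₂ hΦ
      have hfun : F e₁ = F e₂ :=
        congrArg (fun (h : ((Fin d → ℤ) → PermAlphabet 1 k) ≃ₜ _) => h.toEquiv.toFun) hΦ
      have hρeq : ∀ q, ρ e₂.symm q = ρ e₁.symm q := by
        intro q
        set z : (Fin d → ℤ) → PermAlphabet 1 k :=
          fun _ => (0, fun s => if s = ρ e₁.symm q then 1 else 0) with hzdef
        have hev := congrFun (congrArg Prod.snd (congrFun (congrFun hfun z) 0)) q
        have hev1 : (F e₁ z 0).2 q = 1 := by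
          show (if ρ e₁.symm q = ρ e₁.symm q then (1 : ZMod 2) else 0) = 1
          rw [if_pos rfl]
        have hev2 : (F e₂ z 0).2 q
            = if ρ e₂.symm q = ρ e₁.symm q then (1 : ZMod 2) else 0 := rfl
        rw [hev1, hev2] at hev
        by_contra hc
        rw [if_neg hc] at hev
        exact one_ne_zero hev
      have hsymm : e₁.symm = e₂.symm := by
        apply Equiv.ext
        rintro ⟨y, q⟩
        refine Prod.ext (Subsingleton.elim _ _) ?_
        rw [hρx e₁.symm, hρx e₂.symm, hρeq]
      have := congrArg Equiv.symm hsymm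
      simpa using this
end

section
/- Let n, k ≥ 1. A classical (ℤ,n,k)-Turing machine T is reversible (i.e. has a moving-head Turing machine inverse) if and only if T = T_1 ∘ T_0 for some state-symbol permutation T_0 and some state-dependent shift T_1. In particular, every reversible classical Turing machine lies in EL(ℤ,n,k), the subgroup of RTM(ℤ,n,k) generated by the machines that never change the tape together with the machines that never move the head. -/
/-- The shift action on one-dimensional configurations: `(shiftZ m x) i = x (i - m)`. -/
def shiftZ {A : Type*} (m : ℤ) (x : ℤ → A) : ℤ → A := fun i => x (i - m)

/-- The moving-head space `Σ^ℤ × Q × ℤ`. -/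
abbrev HeadZ (n k : ℕ) : Type := (ℤ → Fin n) × Fin k × ℤ

/-- `T` is a moving-head `(ℤ,n,k)`-Turing machine. -/
def IsTMZ (n k : ℕ) (T : HeadZ n k → HeadZ n k) : Prop :=
  ∃ (Fi Fo : Finset ℤ) (f : (ℤ → Fin n) × Fin k → (ℤ → Fin n) × Fin k × ℤ),
    (∀ (x y : ℤ → Fin n) (q : Fin k), (∀ u ∈ Fi, x u = y u) → f (x, q) = f (y, q)) ∧
    ∀ (x : ℤ → Fin n) (q : Fin k) (v : ℤ),
      T (x, q, v) =
        ((fun u => if u - v ∈ Fo then (f (shiftZ (-v) x, q)).1 (u - v) else x u),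
         (f (shiftZ (-v) x, q)).2.1,
         v + (f (shiftZ (-v) x, q)).2.2)

/-- The group `RTM(ℤ,n,k)` realized as the set of permutations of the moving-head
space such that both the permutation and its inverse are Turing machines. -/
def RTMsetZ (n k : ℕ) : Set (Equiv.Perm (HeadZ n k)) :=
  {e | IsTMZ n k ⇑e ∧ IsTMZ n k ⇑e.symm}

/-- `RFA(ℤ,n,k)`: reversible machines that never change the tape. -/
def RFAsetZ (n k : ℕ) : Set (Equiv.Perm (HeadZ n k)) :=
  {e | e ∈ RTMsetZ n k ∧ ∀ (x : ℤ → Fin n) (q : Fin k) (v : ℤ), (e (x, q, v)).1 = x}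

/-- `LP(ℤ,n,k)`: reversible machines that never move the head. -/
def LPsetZ (n k : ℕ) : Set (Equiv.Perm (HeadZ n k)) :=
  {e | e ∈ RTMsetZ n k ∧ ∀ (x : ℤ → Fin n) (q : Fin k) (v : ℤ), (e (x, q, v)).2.2 = v}

/-- `T` is a classical `(ℤ,n,k)`-Turing machine: it is given by a rule
`f : Σ × Q → Σ × Q × {-1,0,1}` acting only on the currently scanned cell. -/
def IsClassical (n k : ℕ) (T : HeadZ n k → HeadZ n k) : Prop :=
  ∃ f : Fin n × Fin k → Fin n × Fin k × ℤ,
    (∀ a q, (f (a, q)).2.2 ∈ ({-1, 0, 1} : Set ℤ)) ∧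
    ∀ (x : ℤ → Fin n) (q : Fin k) (v : ℤ),
      T (x, q, v) =
        (Function.update x v (f (x v, q)).1, (f (x v, q)).2.1, v + (f (x v, q)).2.2)

/-- A state-symbol permutation: a classical machine performing a permutation of
`Σ × Q` at the position of the head, with no movement. -/
def IsStateSymbolPerm (n k : ℕ) (T : HeadZ n k → HeadZ n k) : Prop :=
  ∃ π : Equiv.Perm (Fin n × Fin k),
    ∀ (x : ℤ → Fin n) (q : Fin k) (v : ℤ),
      T (x, q, v) = (Function.update x v (π (x v, q)).1, (π (x v, q)).2, v)

/-- A state-dependent shift: a classical machine that changes neither tape nor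
state and moves by `δ q ∈ {-1,0,1}` depending only on the current state. -/
def IsStateDependentShift (n k : ℕ) (T : HeadZ n k → HeadZ n k) : Prop :=
  ∃ δ : Fin k → ℤ, (∀ q, δ q ∈ ({-1, 0, 1} : Set ℤ)) ∧
    ∀ (x : ℤ → Fin n) (q : Fin k) (v : ℤ), T (x, q, v) = (x, q, v + δ q)

section Aux
variable {n k : ℕ}

lemma isTMZ_of_classical {T : HeadZ n k → HeadZ n k} (h : IsClassical n k T) :
    IsTMZ n k T := by
  obtain ⟨f, hf, hT⟩ := h
  refine ⟨{0}, {0}, fun p => ((fun _ => (f (p.1 0, p.2)).1),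
      (f (p.1 0, p.2)).2.1, (f (p.1 0, p.2)).2.2), ?_, ?_⟩
  · intro x y q hxy
    simp only [hxy 0 (by simp)]
  · intro x q v
    have hx : shiftZ (-v) x 0 = x v := by simp [shiftZ]
    rw [hT]
    refine Prod.ext ?_ (Prod.ext (by simp [hx]) (by simp [hx]))
    funext u
    dsimp only
    rw [Function.update_apply, hx]
    by_cases huv : u = v
    · simp [huv]
    · have : ¬(u - v ∈ ({0} : Finset ℤ)) := by simp; omega
      simp [huv, this]

-- membership conversions
lemma neg_mem_set {d : ℤ} (h : d ∈ ({-1,0,1} : Set ℤ)) : -d ∈ ({-1,0,1} : Set ℤ) := by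
  simp only [Set.mem_insert_iff, Set.mem_singleton_iff] at h ⊢; omega

lemma neg_mem_finset {d : ℤ} (h : d ∈ ({-1,0,1} : Set ℤ)) : -d ∈ ({-1,0,1} : Finset ℤ) := by
  simp only [Set.mem_insert_iff, Set.mem_singleton_iff] at h
  simp only [Finset.mem_insert, Finset.mem_singleton]; omega

/-- The explicit inverse machine: read at `v - δ q`, apply `π.symm`, move to `v - δ q`. -/
def invT (n k : ℕ) (π : Equiv.Perm (Fin n × Fin k)) (δ : Fin k → ℤ) :
    HeadZ n k → HeadZ n k :=
  fun p => (Function.update p.1 (p.2.2 - δ p.2.1) (π.symm (p.1 (p.2.2 - δ p.2.1), p.2.1)).1,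
    (π.symm (p.1 (p.2.2 - δ p.2.1), p.2.1)).2, p.2.2 - δ p.2.1)

lemma isTMZ_invT (π : Equiv.Perm (Fin n × Fin k)) (δ : Fin k → ℤ)
    (hδ : ∀ q, δ q ∈ ({-1,0,1} : Set ℤ)) : IsTMZ n k (invT n k π δ) := by
  refine ⟨{-1,0,1}, {-1,0,1},
    fun p => ((fun u => if u = -δ p.2 then (π.symm (p.1 (-δ p.2), p.2)).1
        else if u ∈ ({-1,0,1} : Finset ℤ) then p.1 u else (π.symm (p.1 (-δ p.2), p.2)).1),
      (π.symm (p.1 (-δ p.2), p.2)).2, -δ p.2), ?_, ?_⟩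
  · intro x y q hxy
    have h1 : x (-δ q) = y (-δ q) := hxy _ (neg_mem_finset (hδ q))
    refine Prod.ext ?_ (by simp [h1])
    funext u
    by_cases h2 : u = -δ q
    · simp [h2, h1]
    · by_cases h3 : u ∈ ({-1,0,1} : Finset ℤ)
      · simp [h2, h3, hxy u h3]
      · simp [h2, h3, h1]
  · intro x q v
    have hs : ∀ j : ℤ, shiftZ (-v) x j = x (j + v) := by
      intro j; simp [shiftZ, sub_neg_eq_add]
    have hw : shiftZ (-v) x (-δ q) = x (v - δ q) := by
      rw [hs]; ring_nf
    refine Prod.ext ?_ (Prod.ext (by simp [hw, invT]) ?_)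
    · show Function.update x (v - δ q) _ = _
      funext u
      dsimp only
      rw [Function.update_apply, hw]
      by_cases h2 : u = v - δ q
      · rw [if_pos h2, if_pos (show u - v ∈ ({-1,0,1} : Finset ℤ) from by
          rw [h2]; simpa using neg_mem_finset (hδ q)), if_pos (show u - v = -δ q from by omega)]
      · rw [if_neg h2]
        by_cases h3 : u - v ∈ ({-1,0,1} : Finset ℤ)
        · rw [if_pos h3, if_neg (show ¬(u - v = -δ q) from by omega), if_pos h3,
            hs (u - v), show u - v + v = u from by ring]
        · rw [if_neg h3]
    · show v - δ q = v + -δ q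
      ring

/-- Factorization of an injective classical machine. -/
lemma factor_of_injective (hn : 1 ≤ n) {T : HeadZ n k → HeadZ n k}
    (hc : IsClassical n k T) (hinj : Function.Injective T) :
    ∃ (π : Equiv.Perm (Fin n × Fin k)) (δ : Fin k → ℤ),
      (∀ q, δ q ∈ ({-1,0,1} : Set ℤ)) ∧
      ∀ (x : ℤ → Fin n) (q : Fin k) (v : ℤ), T (x, q, v) =
        (Function.update x v (π (x v, q)).1, (π (x v, q)).2, v + δ (π (x v, q)).2) := by
  obtain ⟨f, hf, hT⟩ := hc
  set g : Fin n × Fin k → Fin n × Fin k := fun aq => ((f aq).1, (f aq).2.1) with hg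
  -- Claim A: movement depends only on the new state
  have claimA : ∀ a q a' q', (f (a, q)).2.1 = (f (a', q')).2.1 →
      (f (a, q)).2.2 = (f (a', q')).2.2 := by
    intro a q a' q' hp
    by_contra hne
    set d := (f (a, q)).2.2 with hd
    set d' := (f (a', q')).2.2 with hd'
    set b := (f (a, q)).1 with hb
    set b' := (f (a', q')).1 with hb'
    set v' : ℤ := d - d' with hv'
    have hv'0 : v' ≠ 0 := by simp [hv', sub_eq_zero]; exact hne
    set y : ℤ → Fin n :=
      Function.update (Function.update (fun _ => b) v' b') 0 b with hy
    have hy0 : y 0 = b := Function.update_self _ _ _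
    have hyv' : y v' = b' := by
      rw [hy, Function.update_of_ne hv'0, Function.update_self]
    set x : ℤ → Fin n := Function.update y 0 a with hx
    set x' : ℤ → Fin n := Function.update y v' a' with hx'
    have hTx : T (x, q, 0) = (y, (f (a, q)).2.1, d) := by
      rw [hT]
      have hx0 : x 0 = a := Function.update_self _ _ _
      rw [hx0]
      refine Prod.ext ?_ (by simp [hd])
      show Function.update x 0 b = y
      rw [hx, Function.update_idem, ← hy0, Function.update_eq_self]
    have hTx' : T (x', q', v') = (y, (f (a', q')).2.1, d) := by
      rw [hT]
      have hx0 : x' v' = a' := Function.update_self _ _ _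
      rw [hx0]
      refine Prod.ext ?_ (Prod.ext rfl ?_)
      · show Function.update x' v' b' = y
        rw [hx', Function.update_idem, ← hyv', Function.update_eq_self]
      · show v' + d' = d
        rw [hv']; ring
    have : (x, q, (0:ℤ)) = (x', q', v') := hinj (by rw [hTx, hTx', hp])
    exact hv'0 (congrArg (fun z => z.2.2) this).symm
  have claimB : Function.Injective g := by
    rintro ⟨a, q⟩ ⟨a', q'⟩ hgeq
    have hb : (f (a, q)).1 = (f (a', q')).1 := congrArg (fun z : Fin n × Fin k => z.1) hgeq
    have hp : (f (a, q)).2.1 = (f (a', q')).2.1 := congrArg (fun z : Fin n × Fin k => z.2) hgeq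
    have hd : (f (a, q)).2.2 = (f (a', q')).2.2 := claimA a q a' q' hp
    set b := (f (a, q)).1 with hbb
    set y : ℤ → Fin n := fun _ => b with hy
    have key : T (Function.update y 0 a, q, 0) = T (Function.update y 0 a', q', 0) := by
      rw [hT, hT, Function.update_self, Function.update_self, Function.update_idem,
        Function.update_idem, ← hb, hp, hd]
    have := hinj key
    have h1 : Function.update y 0 a = Function.update y 0 a' := congrArg Prod.fst this
    have ha : a = a' := by
      have := congrFun h1 0
      simpa using this
    have hq : q = q' := congrArg (fun z => z.2.1) this
    simp [ha, hq]
  have hbij : Function.Bijective g := Finite.injective_iff_bijective.mp claimB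
  set π : Equiv.Perm (Fin n × Fin k) := Equiv.ofBijective g hbij with hπ
  have hπap : ∀ aq, π aq = g aq := fun _ => rfl
  set b₀ : Fin n := ⟨0, hn⟩ with hb₀
  refine ⟨π, fun p => (f (π.symm (b₀, p))).2.2, ?_, ?_⟩
  · intro p
    have := hf (π.symm (b₀, p)).1 (π.symm (b₀, p)).2
    simpa using this
  · intro x q v
    have hkey : (f (x v, q)).2.2 = (f (π.symm (b₀, (f (x v, q)).2.1))).2.2 := by
      have hgp : g (π.symm (b₀, (f (x v, q)).2.1)) = (b₀, (f (x v, q)).2.1) := by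
        rw [← hπap]; exact π.apply_symm_apply _
      have hp2 : (f ((π.symm (b₀, (f (x v, q)).2.1)).1,
          (π.symm (b₀, (f (x v, q)).2.1)).2)).2.1 = (f (x v, q)).2.1 := by
        have := congrArg Prod.snd hgp
        simpa [hg] using this
      exact claimA (x v) q _ _ hp2.symm
    rw [hT]
    refine Prod.ext rfl (Prod.ext rfl ?_)
    show v + (f (x v, q)).2.2 = v + (f (π.symm (b₀, (π (x v, q)).2))).2.2
    have h2 : (π (x v, q)).2 = (f (x v, q)).2.1 := rfl
    rw [h2, ← hkey]

end Aux

section Aux2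
variable {n k : ℕ}

lemma T_invT_id (π : Equiv.Perm (Fin n × Fin k)) (δ : Fin k → ℤ)
    {T : HeadZ n k → HeadZ n k}
    (hT : ∀ (x : ℤ → Fin n) (q : Fin k) (v : ℤ), T (x, q, v) =
      (Function.update x v (π (x v, q)).1, (π (x v, q)).2, v + δ (π (x v, q)).2)) :
    T ∘ invT n k π δ = id ∧ invT n k π δ ∘ T = id := by
  constructor
  · funext z
    obtain ⟨x, q, v⟩ := z
    show T (invT n k π δ (x, q, v)) = (x, q, v)
    set w := v - δ q with hw
    set c := (π.symm (x w, q)).1 with hc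
    set q' := (π.symm (x w, q)).2 with hq'
    have h0 : invT n k π δ (x, q, v) = (Function.update x w c, q', w) := rfl
    rw [h0, hT]
    have h1 : Function.update x w c w = c := Function.update_self _ _ _
    rw [h1]
    have h2 : π (c, q') = (x w, q) := by
      have h3 : (c, q') = π.symm (x w, q) := rfl
      rw [h3, π.apply_symm_apply]
    rw [h2]
    refine Prod.ext ?_ (Prod.ext rfl ?_)
    · show Function.update (Function.update x w c) w (x w) = x
      rw [Function.update_idem, Function.update_eq_self]
    · show w + δ q = v
      rw [hw]; ring
  · funext z
    obtain ⟨x, q, v⟩ := z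
    show invT n k π δ (T (x, q, v)) = (x, q, v)
    rw [hT]
    set b := (π (x v, q)).1 with hb
    set p := (π (x v, q)).2 with hp
    have h2 : π.symm (b, p) = (x v, q) := by
      have h3 : (b, p) = π (x v, q) := rfl
      rw [h3, π.symm_apply_apply]
    show (Function.update (Function.update x v b) (v + δ p - δ p)
        (π.symm ((Function.update x v b) (v + δ p - δ p), p)).1,
      (π.symm ((Function.update x v b) (v + δ p - δ p), p)).2, v + δ p - δ p) = (x, q, v)
    rw [show v + δ p - δ p = v from by ring, Function.update_self, h2]
    refine Prod.ext ?_ (Prod.ext rfl rfl)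
    show Function.update (Function.update x v b) v (x v) = x
    rw [Function.update_idem, Function.update_eq_self]

/-- The state-symbol permutation as a permutation of the moving-head space. -/
def sspPerm (n k : ℕ) (π : Equiv.Perm (Fin n × Fin k)) : Equiv.Perm (HeadZ n k) where
  toFun p := (Function.update p.1 p.2.2 (π (p.1 p.2.2, p.2.1)).1,
    (π (p.1 p.2.2, p.2.1)).2, p.2.2)
  invFun p := (Function.update p.1 p.2.2 (π.symm (p.1 p.2.2, p.2.1)).1,
    (π.symm (p.1 p.2.2, p.2.1)).2, p.2.2)
  left_inv := by
    rintro ⟨x, q, v⟩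
    dsimp only
    rw [Function.update_self]
    have h2 : π.symm ((π (x v, q)).1, (π (x v, q)).2) = (x v, q) := by
      rw [show ((π (x v, q)).1, (π (x v, q)).2) = π (x v, q) from rfl, π.symm_apply_apply]
    rw [h2]
    refine Prod.ext ?_ (Prod.ext rfl rfl)
    show Function.update (Function.update x v _) v (x v) = x
    rw [Function.update_idem, Function.update_eq_self]
  right_inv := by
    rintro ⟨x, q, v⟩
    dsimp only
    rw [Function.update_self]
    have h2 : π ((π.symm (x v, q)).1, (π.symm (x v, q)).2) = (x v, q) := by
      rw [show ((π.symm (x v, q)).1, (π.symm (x v, q)).2) = π.symm (x v, q) from rfl,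
        π.apply_symm_apply]
    rw [h2]
    refine Prod.ext ?_ (Prod.ext rfl rfl)
    show Function.update (Function.update x v _) v (x v) = x
    rw [Function.update_idem, Function.update_eq_self]

/-- The state-dependent shift as a permutation of the moving-head space. -/
def sdsPerm (n k : ℕ) (δ : Fin k → ℤ) : Equiv.Perm (HeadZ n k) where
  toFun p := (p.1, p.2.1, p.2.2 + δ p.2.1)
  invFun p := (p.1, p.2.1, p.2.2 - δ p.2.1)
  left_inv := by rintro ⟨x, q, v⟩; simp
  right_inv := by rintro ⟨x, q, v⟩; simp

lemma sspPerm_mem_LP (π : Equiv.Perm (Fin n × Fin k)) : sspPerm n k π ∈ LPsetZ n k := by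
  refine ⟨⟨?_, ?_⟩, fun x q v => rfl⟩
  · refine isTMZ_of_classical ⟨fun aq => ((π aq).1, (π aq).2, 0), by simp, ?_⟩
    intro x q v
    refine Prod.ext rfl (Prod.ext rfl ?_)
    show v = v + 0
    ring
  · refine isTMZ_of_classical ⟨fun aq => ((π.symm aq).1, (π.symm aq).2, 0), by simp, ?_⟩
    intro x q v
    refine Prod.ext rfl (Prod.ext rfl ?_)
    show v = v + 0
    ring

lemma sdsPerm_mem_RFA (δ : Fin k → ℤ) (hδ : ∀ q, δ q ∈ ({-1,0,1} : Set ℤ)) :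
    sdsPerm n k δ ∈ RFAsetZ n k := by
  refine ⟨⟨?_, ?_⟩, fun x q v => rfl⟩
  · refine isTMZ_of_classical ⟨fun aq => (aq.1, aq.2, δ aq.2), fun a q => hδ q, ?_⟩
    intro x q v
    refine Prod.ext ?_ (Prod.ext rfl rfl)
    show x = Function.update x v (x v)
    rw [Function.update_eq_self]
  · refine isTMZ_of_classical ⟨fun aq => (aq.1, aq.2, -δ aq.2), fun a q => neg_mem_set (hδ q), ?_⟩
    intro x q v
    refine Prod.ext ?_ (Prod.ext rfl ?_)
    · show x = Function.update x v (x v)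
      rw [Function.update_eq_self]
    · show v - δ q = v + -δ q
      ring

end Aux2

/-- A classical `(ℤ,n,k)`-Turing machine is reversible if and only
if it factors as `T = T₁ ∘ T₀` with `T₀` a state-symbol permutation and `T₁` a
state-dependent shift.  In particular every reversible classical Turing machine,
viewed as a permutation of the moving-head space, lies in `EL(ℤ,n,k)`, the subgroup
generated by the tape-preserving machines together with the head-fixing machines. -/
theorem classical_reversible_iff_and_mem_EL (n k : ℕ) (hn : 1 ≤ n) (hk : 1 ≤ k) :
    (∀ T : HeadZ n k → HeadZ n k, IsClassical n k T →
      ((IsTMZ n k T ∧ ∃ T' : HeadZ n k → HeadZ n k,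
          IsTMZ n k T' ∧ T ∘ T' = id ∧ T' ∘ T = id) ↔
        ∃ T₀ T₁ : HeadZ n k → HeadZ n k,
          IsStateSymbolPerm n k T₀ ∧ IsStateDependentShift n k T₁ ∧ T = T₁ ∘ T₀))
    ∧
    (∀ e : Equiv.Perm (HeadZ n k), IsClassical n k ⇑e →
      e ∈ Subgroup.closure (RFAsetZ n k ∪ LPsetZ n k)) := by
  constructor
  · intro T hT
    constructor
    · rintro ⟨hTM, T', hTM', hTT', hT'T⟩
      have hinj : Function.Injective T :=
        Function.LeftInverse.injective (g := T') fun z => congrFun hT'T z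
      obtain ⟨π, δ, hδ, hTeq⟩ := factor_of_injective hn hT hinj
      refine ⟨fun p => (Function.update p.1 p.2.2 (π (p.1 p.2.2, p.2.1)).1,
          (π (p.1 p.2.2, p.2.1)).2, p.2.2),
        fun p => (p.1, p.2.1, p.2.2 + δ p.2.1),
        ⟨π, fun x q v => rfl⟩, ⟨δ, hδ, fun x q v => rfl⟩, ?_⟩
      funext z
      obtain ⟨x, q, v⟩ := z
      exact hTeq x q v
    · rintro ⟨T₀, T₁, ⟨π, h₀⟩, ⟨δ, hδ, h₁⟩, hfac⟩
      have hTeq : ∀ (x : ℤ → Fin n) (q : Fin k) (v : ℤ), T (x, q, v) =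
          (Function.update x v (π (x v, q)).1, (π (x v, q)).2, v + δ (π (x v, q)).2) := by
        intro x q v
        rw [hfac]
        show T₁ (T₀ (x, q, v)) = _
        rw [h₀, h₁]
      obtain ⟨h1, h2⟩ := T_invT_id π δ hTeq
      exact ⟨isTMZ_of_classical hT, invT n k π δ, isTMZ_invT π δ hδ, h1, h2⟩
  · intro e he
    obtain ⟨π, δ, hδ, hTeq⟩ := factor_of_injective hn he e.injective
    have hfac : e = sdsPerm n k δ * sspPerm n k π := by
      apply Equiv.ext
      intro z
      obtain ⟨x, q, v⟩ := z
      rw [Equiv.Perm.mul_apply]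
      exact hTeq x q v
    rw [hfac]
    exact Subgroup.mul_mem _
      (Subgroup.subset_closure (Set.mem_union_left _ (sdsPerm_mem_RFA δ hδ)))
      (Subgroup.subset_closure (Set.mem_union_right _ (sspPerm_mem_LP π)))
end
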